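/- arXiv:0709.4537 — 10 statements merged into one kernel-verified Lean document; each statement's English description precedes it below -/
import Mathlib

section
/- For every n ∈ ℕ, the primitive Legendre polynomial Π_{ζ,n+1}(z) = (z-ζ)·P_n(z) is orthogonal to all polynomials of degree at most n with respect to the Sobolev-type inner product ⟨p,q⟩ = p(ζ)·q(ζ) + ∫_{-1}^{1} p′(x)·q′(x) dx; that is, for every polynomial q of degree ≤ n, Π_{ζ,n+1}(ζ)·q(ζ) + ∫_{-1}^{1} Π_{ζ,n+1}′(x)·q′(x) dx = 0. -/
open Polynomial

/-- `L` is the sequence of monic Legendre polynomials: `L n` is monic of degree `n` and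
orthogonal on `[-1,1]` to `x^k` for all `k < n`. -/
def IsMonicLegendre (L : ℕ → Polynomial ℝ) : Prop :=
  ∀ n : ℕ, (L n).Monic ∧ (L n).natDegree = n ∧
    ∀ k : ℕ, k < n → (∫ x in (-1:ℝ)..1, (L n).eval x * x ^ k) = 0

/-- `P` is the sequence of polar Legendre polynomials with pole `ζ` associated to `L`:
`P n` is monic of degree `n` and `(n+1)·L_n(z) = P_n(z) + (z-ζ)·P_n′(z)` for all `z ∈ ℂ`. -/
def IsPolarLegendre (L : ℕ → Polynomial ℝ) (ζ : ℂ) (P : ℕ → Polynomial ℂ) : Prop :=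
  ∀ n : ℕ, (P n).Monic ∧ (P n).natDegree = n ∧
    ∀ z : ℂ, ((n : ℂ) + 1) * ((L n).map (algebraMap ℝ ℂ)).eval z =
      (P n).eval z + (z - ζ) * ((P n).derivative.eval z)

/-- The primitive Legendre polynomial `Π_{ζ,n+1}(z) = (z-ζ)·P_n(z)` is orthogonal to every
polynomial of degree at most `n` with respect to the Sobolev-type inner product
`⟨p,q⟩ = p(ζ)·q(ζ) + ∫_{-1}^{1} p′(x)·q′(x) dx`. -/
theorem primitive_legendre_sobolev_orthogonality
    (L : ℕ → Polynomial ℝ) (ζ : ℂ) (P : ℕ → Polynomial ℂ)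
    (hL : IsMonicLegendre L) (hP : IsPolarLegendre L ζ P)
    (n : ℕ) (q : Polynomial ℂ) (hq : q.natDegree ≤ n) :
    ((X - C ζ) * P n).eval ζ * q.eval ζ +
      (∫ x in (-1:ℝ)..1,
        (Polynomial.derivative ((X - C ζ) * P n)).eval (x : ℂ) *
          (Polynomial.derivative q).eval (x : ℂ)) = 0 := by
  set Lc := (L n).map (algebraMap ℝ ℂ) with hLc
  have hderiv : ∀ z : ℂ, (Polynomial.derivative ((X - C ζ) * P n)).eval z
      = ((n:ℂ)+1) * Lc.eval z := by
    intro z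
    have h := (hP n).2.2 z
    simp only [derivative_mul, derivative_sub, derivative_X, derivative_C, sub_zero, one_mul,
      eval_add, eval_mul, eval_sub, eval_X, eval_C]
    rw [← hLc] at h
    rw [← h]
  have hLeval : ∀ x : ℝ, Lc.eval (x:ℂ) = (((L n).eval x : ℝ) : ℂ) := by
    intro x
    rw [hLc, eval_map, show ((x:ℂ)) = algebraMap ℝ ℂ x from rfl,
      Polynomial.eval₂_at_apply]
    rfl
  have hzero : eval ζ ((X - C ζ) * P n) = 0 := by simp
  rw [hzero, zero_mul, zero_add]
  have hint : ∀ k : ℕ, k < n → (∫ x in (-1:ℝ)..1, Lc.eval (x:ℂ) * (x:ℂ)^k) = (0:ℂ) := by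
    intro k hk
    have h0 : (∫ x in (-1:ℝ)..1, (L n).eval x * x ^ k) = 0 := (hL n).2.2 k hk
    calc (∫ x in (-1:ℝ)..1, Lc.eval (x:ℂ) * (x:ℂ)^k)
        = ∫ x in (-1:ℝ)..1, (((L n).eval x * x ^ k : ℝ) : ℂ) := by
          apply intervalIntegral.integral_congr
          intro x _
          simp only [hLeval]
          push_cast
          ring
      _ = (((∫ x in (-1:ℝ)..1, (L n).eval x * x ^ k : ℝ)) : ℂ) :=
          intervalIntegral.integral_ofReal
      _ = 0 := by rw [h0]; simp
  rcases Nat.eq_zero_or_pos n with h0 | hpos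
  · have hq0 : q.natDegree = 0 := le_antisymm (h0 ▸ hq) (Nat.zero_le _)
    have : Polynomial.derivative q = 0 := by
      rw [Polynomial.eq_C_of_natDegree_eq_zero hq0, derivative_C]
    simp [this]
  · have hlt : (Polynomial.derivative q).natDegree < n := by
      have h1 := Polynomial.natDegree_derivative_le q
      omega
    have hexp : ∀ x : ℝ, (Polynomial.derivative q).eval (x:ℂ)
        = ∑ k ∈ Finset.range n, (Polynomial.derivative q).coeff k * (x:ℂ)^k := fun x =>
      Polynomial.eval_eq_sum_range' hlt _
    calc (∫ x in (-1:ℝ)..1,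
          (Polynomial.derivative ((X - C ζ) * P n)).eval (x : ℂ) *
            (Polynomial.derivative q).eval (x : ℂ))
        = ∫ x in (-1:ℝ)..1, ∑ k ∈ Finset.range n,
            (((n:ℂ)+1) * (Polynomial.derivative q).coeff k) * (Lc.eval (x:ℂ) * (x:ℂ)^k) := by
          apply intervalIntegral.integral_congr
          intro x _
          simp only [hderiv, hexp, Finset.mul_sum]
          exact Finset.sum_congr rfl fun k _ => by ring
      _ = ∑ k ∈ Finset.range n, ∫ x in (-1:ℝ)..1,
            (((n:ℂ)+1) * (Polynomial.derivative q).coeff k) * (Lc.eval (x:ℂ) * (x:ℂ)^k) := by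
          apply intervalIntegral.integral_finset_sum
          intro k _
          apply Continuous.intervalIntegrable
          fun_prop
      _ = ∑ k ∈ Finset.range n, (((n:ℂ)+1) * (Polynomial.derivative q).coeff k) *
            ∫ x in (-1:ℝ)..1, Lc.eval (x:ℂ) * (x:ℂ)^k := by
          exact Finset.sum_congr rfl fun k _ => intervalIntegral.integral_const_mul _ _
      _ = 0 := by
          apply Finset.sum_eq_zero
          intro k hk
          rw [hint k (Finset.mem_range.mp hk), mul_zero]
end

section
/- For all integers n, m with 0 < m < n-1, the polar Legendre polynomial P_n with pole ζ ∈ ℂ satisfies ∫_{-1}^{1} (x-ζ)·P_n(x)·L_m(x) dx = 0. -/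
open Polynomial

noncomputable def paint (p : Polynomial ℝ) : Polynomial ℝ :=
  p.sum fun k a => C (a / (k + 1)) * X ^ (k + 1)

lemma paint_derivative (p : Polynomial ℝ) : derivative (paint p) = p := by
  unfold paint Polynomial.sum
  rw [map_sum]
  have : ∀ k ∈ p.support, derivative (C (p.coeff k / (k+1)) * X ^ (k+1))
      = C (p.coeff k) * X ^ k := by
    intro k _
    rw [derivative_C_mul, derivative_X_pow]
    simp only [Nat.cast_add, Nat.cast_one, Nat.add_sub_cancel]
    rw [← mul_assoc, ← C_mul, div_mul_cancel₀]
    positivity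
  rw [Finset.sum_congr rfl this]
  exact p.sum_C_mul_X_pow_eq

lemma paint_natDegree (p : Polynomial ℝ) : (paint p).natDegree ≤ p.natDegree + 1 := by
  unfold paint Polynomial.sum
  apply natDegree_sum_le_of_forall_le
  intro k hk
  refine (natDegree_mul_le).trans ?_
  simp only [natDegree_C, natDegree_X_pow, zero_add]
  exact Nat.add_le_add_right (le_natDegree_of_mem_supp k hk) 1

lemma orth (Ln : Polynomial ℝ) (n : ℕ)
    (h : ∀ k : ℕ, k < n → (∫ x in (-1:ℝ)..1, Ln.eval x * x ^ k) = 0)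
    (p : Polynomial ℝ) (hp : p.natDegree < n) :
    (∫ x in (-1:ℝ)..1, Ln.eval x * p.eval x) = 0 := by
  have key : ∀ x : ℝ, Ln.eval x * p.eval x
      = ∑ k ∈ Finset.range (p.natDegree + 1), p.coeff k * (Ln.eval x * x ^ k) := by
    intro x
    rw [eval_eq_sum_range (p := p), Finset.mul_sum]
    congr 1; ext k; ring
  simp_rw [key]
  rw [intervalIntegral.integral_finset_sum]
  · refine Finset.sum_eq_zero fun k hk => ?_
    rw [intervalIntegral.integral_const_mul, h k ?_, mul_zero]
    exact lt_of_le_of_lt (Nat.lt_succ_iff.mp (Finset.mem_range.mp hk)) hp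
  · intro k _
    exact (Continuous.intervalIntegrable
      (continuous_const.mul (Ln.continuous.mul (continuous_pow k))) _ _)

lemma ftc_real (p : Polynomial ℝ) :
    (∫ x in (-1:ℝ)..1, (derivative p).eval x) = p.eval 1 - p.eval (-1) := by
  refine intervalIntegral.integral_eq_sub_of_hasDerivAt
    (f := fun x => p.eval x) (f' := fun x => (derivative p).eval x) ?_ ?_
  · intro x _; exact p.hasDerivAt x
  · exact (Continuous.intervalIntegrable (derivative p).continuous _ _)

lemma ftc_complex (p : Polynomial ℂ) :
    (∫ x in (-1:ℝ)..1, (derivative p).eval (x : ℂ))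
      = p.eval ((1:ℝ) : ℂ) - p.eval ((-1:ℝ) : ℂ) := by
  refine intervalIntegral.integral_eq_sub_of_hasDerivAt
    (f := fun x : ℝ => p.eval (x : ℂ)) (f' := fun x : ℝ => (derivative p).eval (x : ℂ)) ?_ ?_
  · intro x _; exact (p.hasDerivAt (x : ℂ)).comp_ofReal
  · exact (Continuous.intervalIntegrable
      ((p.derivative.continuous).comp Complex.continuous_ofReal) _ _)

lemma eval_map_ofReal (p : Polynomial ℝ) (x : ℝ) :
    (p.map (algebraMap ℝ ℂ)).eval ((x : ℝ) : ℂ) = ((p.eval x : ℝ) : ℂ) := by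
  have : ((x : ℝ) : ℂ) = algebraMap ℝ ℂ x := rfl
  rw [this, eval_map, eval₂_at_apply]
  rfl

/-- For `0 < m < n-1`: `∫_{-1}^{1} (x-ζ)·P_n(x)·L_m(x) dx = 0`. -/
theorem polar_legendre_integral_middle
    (L : ℕ → Polynomial ℝ) (ζ : ℂ) (P : ℕ → Polynomial ℂ)
    (hL : IsMonicLegendre L) (hP : IsPolarLegendre L ζ P)
    (n m : ℕ) (hm : 0 < m) (hmn : m + 1 < n) :
    (∫ x in (-1:ℝ)..1,
        ((x : ℂ) - ζ) * (P n).eval (x : ℂ) * (((L m).eval x : ℝ) : ℂ)) = 0 := by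
  obtain ⟨-, -, hLn⟩ := hL n
  obtain ⟨-, hLmdeg, hLm⟩ := hL m
  obtain ⟨-, -, hPn⟩ := hP n
  -- antiderivative R of L m vanishing at ±1
  set R : Polynomial ℝ := paint (L m) - C ((paint (L m)).eval 1) with hRdef
  have hRder : derivative R = L m := by
    rw [hRdef, derivative_sub, derivative_C, sub_zero, paint_derivative]
  have hRdeg : R.natDegree < n := by
    have hpd := paint_natDegree (L m)
    rw [hLmdeg] at hpd
    refine lt_of_le_of_lt ((natDegree_sub_le _ _).trans ?_) hmn
    simpa [natDegree_C] using hpd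
  have hR1 : R.eval 1 = 0 := by simp [hRdef]
  have hRneg : R.eval (-1) = 0 := by
    have h0 : (∫ x in (-1:ℝ)..1, (L m).eval x) = 0 := by
      have := hLm 0 hm
      simpa using this
    have hftc := ftc_real R
    rw [hRder, h0, hR1] at hftc
    linarith
  -- complex polynomials
  set Q : Polynomial ℂ := (X - C ζ) * P n with hQdef
  have hQder : derivative Q = C ((n:ℂ) + 1) * (L n).map (algebraMap ℝ ℂ) := by
    apply Polynomial.funext
    intro z
    have h := hPn z
    simp only [hQdef, derivative_mul, derivative_sub, derivative_X, derivative_C,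
      sub_zero, one_mul, eval_add, eval_mul, eval_sub, eval_X, eval_C]
    rw [← h]
  set T : Polynomial ℂ := Q * R.map (algebraMap ℝ ℂ) with hTdef
  have hTder : derivative T = C ((n:ℂ) + 1) * ((L n * R).map (algebraMap ℝ ℂ))
      + Q * ((L m).map (algebraMap ℝ ℂ)) := by
    rw [hTdef, derivative_mul, hQder, derivative_map, hRder, Polynomial.map_mul, mul_assoc]
  -- integrand identity
  have key : ∀ x : ℝ, ((x : ℂ) - ζ) * (P n).eval (x : ℂ) * (((L m).eval x : ℝ) : ℂ)
      = (derivative T).eval (x : ℂ) - ((n:ℂ) + 1) * ((((L n * R).eval x : ℝ)) : ℂ) := by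
    intro x
    rw [hTder]
    simp only [eval_add, eval_mul, eval_C, eval_map_ofReal]
    simp only [hQdef, eval_mul, eval_sub, eval_X, eval_C]
    ring
  simp_rw [key]
  rw [intervalIntegral.integral_sub, sub_eq_zero]
  · have h1 : (∫ x in (-1:ℝ)..1, (derivative T).eval (x : ℂ)) = 0 := by
      rw [ftc_complex]
      have e1 : ∀ y : ℝ, T.eval ((y:ℝ) : ℂ)
          = Q.eval ((y:ℝ):ℂ) * ((R.eval y : ℝ) : ℂ) := by
        intro y
        rw [hTdef, eval_mul, eval_map_ofReal]
      rw [e1, e1, hR1, hRneg]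
      simp
    have h2 : (∫ x in (-1:ℝ)..1, ((n:ℂ) + 1) * ((((L n * R).eval x : ℝ)) : ℂ)) = 0 := by
      rw [intervalIntegral.integral_const_mul, intervalIntegral.integral_ofReal]
      have hz : (∫ x in (-1:ℝ)..1, (L n * R).eval x) = 0 := by
        simp_rw [eval_mul]
        exact orth (L n) n hLn R hRdeg
      rw [hz]
      simp
    rw [h1, h2]
  · exact (Continuous.intervalIntegrable
      ((T.derivative.continuous).comp Complex.continuous_ofReal) _ _)
  · apply Continuous.intervalIntegrable
    exact continuous_const.mul (Complex.continuous_ofReal.comp ((L n * R).continuous))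
end

section
/- For every integer n ≥ 1, the polar Legendre polynomial P_n with pole ζ ∈ ℂ satisfies ∫_{-1}^{1} (x-ζ)·P_n(x)·L_n(x) dx = 0. -/
open Polynomial

/-- For `n ≥ 1`: `∫_{-1}^{1} (x-ζ)·P_n(x)·L_n(x) dx = 0`. -/
theorem polar_legendre_integral_same
    (L : ℕ → Polynomial ℝ) (ζ : ℂ) (P : ℕ → Polynomial ℂ)
    (hL : IsMonicLegendre L) (hP : IsPolarLegendre L ζ P)
    (n : ℕ) (hn : 1 ≤ n) :
    (∫ x in (-1:ℝ)..1,
        ((x : ℂ) - ζ) * (P n).eval (x : ℂ) * (((L n).eval x : ℝ) : ℂ)) = 0 := by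
  obtain ⟨hPm, hPdeg, hPder⟩ := hP n
  obtain ⟨hLm, hLdeg, hLint⟩ := hL n
  set Q : Polynomial ℂ := (X - C ζ) * P n with hQ
  -- derivative of Q equals (n+1) * L_n (complexified), pointwise
  have hQd : ∀ z : ℂ, Q.derivative.eval z = ((n:ℂ)+1) * ((L n).map (algebraMap ℝ ℂ)).eval z := by
    intro z
    have h := hPder z
    simp only [hQ, derivative_mul, derivative_sub, derivative_X, derivative_C, eval_mul,
      eval_add, eval_sub, eval_X, eval_C, sub_zero, one_mul]
    linear_combination -h
  have hQdR : ∀ x : ℝ, Q.derivative.eval (x:ℂ) = ((n:ℂ)+1) * (((L n).eval x : ℝ) : ℂ) := by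
    intro x
    rw [hQd]
    congr 1
    rw [show ((x:ℂ)) = algebraMap ℝ ℂ x from rfl, Polynomial.eval_map,
      Polynomial.eval₂_at_apply]
    rfl
  have hderiv : ∀ z : ℝ, HasDerivAt (fun x : ℝ => Q.eval (x:ℂ)) (Q.derivative.eval (z:ℂ)) z :=
    fun z => (Q.hasDerivAt (z:ℂ)).comp_ofReal
  have hcontQ : Continuous fun x : ℝ => Q.eval (x:ℂ) :=
    Q.continuous.comp Complex.continuous_ofReal
  have hcontQ' : Continuous fun x : ℝ => Q.derivative.eval (x:ℂ) :=
    Q.derivative.continuous.comp Complex.continuous_ofReal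
  -- ∫ Q' = Q(1) - Q(-1)
  have h2 : (∫ x in (-1:ℝ)..1, Q.derivative.eval (x:ℂ)) = Q.eval 1 - Q.eval (-1) := by
    have := intervalIntegral.integral_eq_sub_of_hasDerivAt (a := (-1:ℝ)) (b := 1)
      (f := fun x : ℝ => Q.eval (x:ℂ)) (f' := fun x : ℝ => Q.derivative.eval (x:ℂ))
      (fun x _ => hderiv x) (hcontQ'.intervalIntegrable _ _)
    simpa using this
  -- ∫ Q' = 0 since ∫ L_n = 0
  have h3 : (∫ x in (-1:ℝ)..1, Q.derivative.eval (x:ℂ)) = 0 := by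
    have hL0 : (∫ x in (-1:ℝ)..1, (L n).eval x) = 0 := by
      have := hLint 0 hn
      simpa using this
    calc (∫ x in (-1:ℝ)..1, Q.derivative.eval (x:ℂ))
        = ∫ x in (-1:ℝ)..1, ((n:ℂ)+1) * (((L n).eval x : ℝ) : ℂ) := by
          simp_rw [hQdR]
      _ = ((n:ℂ)+1) * ∫ x in (-1:ℝ)..1, (((L n).eval x : ℝ) : ℂ) := by
          rw [intervalIntegral.integral_const_mul]
      _ = 0 := by
          rw [intervalIntegral.integral_ofReal, hL0]
          simp
  have hQeq : Q.eval 1 = Q.eval (-1) := by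
    have := h2.symm.trans h3
    linear_combination this
  -- ∫ Q Q' = (Q(1)^2 - Q(-1)^2)/2 = 0
  have h1 : (∫ x in (-1:ℝ)..1, Q.eval (x:ℂ) * Q.derivative.eval (x:ℂ)) = 0 := by
    have hd2 : ∀ z : ℝ, HasDerivAt (fun x : ℝ => (Q.eval (x:ℂ))^2 / 2)
        (Q.eval (z:ℂ) * Q.derivative.eval (z:ℂ)) z := by
      intro z
      have h := ((hderiv z).mul (hderiv z)).div_const 2
      have heq : (fun x : ℝ => Q.eval (x:ℂ) * Q.eval (x:ℂ) / 2)
          = fun x : ℝ => (Q.eval (x:ℂ))^2 / 2 := by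
        funext x; ring
      simp only [Pi.mul_apply] at h
      rw [heq] at h
      exact h.congr_deriv (by ring)
    have := intervalIntegral.integral_eq_sub_of_hasDerivAt (a := (-1:ℝ)) (b := 1)
      (f := fun x : ℝ => (Q.eval (x:ℂ))^2 / 2)
      (f' := fun x : ℝ => Q.eval (x:ℂ) * Q.derivative.eval (x:ℂ))
      (fun x _ => hd2 x) ((hcontQ.mul hcontQ').intervalIntegrable _ _)
    rw [this]
    simp [hQeq]
  -- conclude
  have hne : ((n:ℂ)+1) ≠ 0 := by
    exact_mod_cast Nat.succ_ne_zero n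
  have key : (∫ x in (-1:ℝ)..1, Q.eval (x:ℂ) * Q.derivative.eval (x:ℂ))
      = ((n:ℂ)+1) * ∫ x in (-1:ℝ)..1,
        ((x : ℂ) - ζ) * (P n).eval (x : ℂ) * (((L n).eval x : ℝ) : ℂ) := by
    rw [← intervalIntegral.integral_const_mul]
    apply intervalIntegral.integral_congr
    intro x _
    show Q.eval (x:ℂ) * Q.derivative.eval (x:ℂ) = _
    rw [hQdR]
    simp only [hQ, eval_mul, eval_sub, eval_X, eval_C]
    ring
  rw [h1] at key
  exact (mul_eq_zero.mp key.symm).resolve_left hne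
end

section
/- If n is odd and the pole ζ is a nonzero real number, then −ζ is a zero of the polar Legendre polynomial P_n, i.e., P_n(−ζ) = 0. -/
open Polynomial
open MeasureTheory intervalIntegral



private lemma poly_mul_pow_ii (p : ℝ[X]) (k : ℕ) :
    IntervalIntegrable (fun x => p.eval x * x ^ k) volume (-1 : ℝ) 1 :=
  ((p.continuous).mul (continuous_pow k)).intervalIntegrable _ _

/-- Uniqueness of the monic orthogonal polynomial of degree `n` on `[-1,1]`. -/
private lemma orth_unique (p q : ℝ[X]) (n : ℕ)
    (hpm : p.Monic) (hpd : p.natDegree = n)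
    (hporth : ∀ k : ℕ, k < n → (∫ x in (-1:ℝ)..1, p.eval x * x ^ k) = 0)
    (hqm : q.Monic) (hqd : q.natDegree = n)
    (hqorth : ∀ k : ℕ, k < n → (∫ x in (-1:ℝ)..1, q.eval x * x ^ k) = 0) :
    p = q := by
  by_contra hne
  have hDne : p - q ≠ 0 := sub_ne_zero.mpr hne
  have hdegD : (p - q).natDegree < n := by
    have hd1 : p.degree = q.degree := by
      rw [degree_eq_natDegree hpm.ne_zero, degree_eq_natDegree hqm.ne_zero, hpd, hqd]
    have hd2 : p.leadingCoeff = q.leadingCoeff := by rw [hpm.leadingCoeff, hqm.leadingCoeff]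
    have h := degree_sub_lt hd1 hpm.ne_zero hd2
    rw [degree_eq_natDegree hpm.ne_zero, hpd] at h
    exact (natDegree_lt_iff_degree_lt hDne).mpr h
  have horthD : ∀ k : ℕ, k < n → (∫ x in (-1:ℝ)..1, (p - q).eval x * x ^ k) = 0 := by
    intro k hk
    have : (∫ x in (-1:ℝ)..1, (p - q).eval x * x ^ k)
        = (∫ x in (-1:ℝ)..1, p.eval x * x ^ k) - ∫ x in (-1:ℝ)..1, q.eval x * x ^ k := by
      rw [← intervalIntegral.integral_sub (poly_mul_pow_ii p k) (poly_mul_pow_ii q k)]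
      apply intervalIntegral.integral_congr
      intro x _
      simp only [eval_sub]
      ring
    rw [this, hporth k hk, hqorth k hk, sub_zero]
  have hsq : (∫ x in (-1:ℝ)..1, (p - q).eval x * (p - q).eval x) = 0 := by
    have heq : ∀ x ∈ Set.uIcc (-1:ℝ) 1, (p - q).eval x * (p - q).eval x
        = ∑ k ∈ Finset.range n, (p - q).coeff k * ((p - q).eval x * x ^ k) := by
      intro x _
      nth_rewrite 2 [eval_eq_sum_range' hdegD x]
      rw [Finset.mul_sum]
      exact Finset.sum_congr rfl fun k _ => by ring
    rw [intervalIntegral.integral_congr heq,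
      intervalIntegral.integral_finset_sum (fun k _ => (poly_mul_pow_ii (p - q) k).const_mul _)]
    apply Finset.sum_eq_zero
    intro k hk
    rw [intervalIntegral.integral_const_mul, horthD k (Finset.mem_range.mp hk), mul_zero]
  have hex : ∃ c ∈ Set.Icc (-1:ℝ) 1, (0:ℝ) < (p - q).eval c * (p - q).eval c := by
    by_contra h
    push_neg at h
    have hsub : Set.Icc (-1:ℝ) 1 ⊆ {x | (p - q).IsRoot x} := by
      intro x hx
      have h1 : (p - q).eval x * (p - q).eval x = 0 :=
        le_antisymm (h x hx) (mul_self_nonneg _)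
      exact mul_self_eq_zero.mp h1
    exact (Polynomial.finite_setOf_isRoot hDne).not_infinite
      ((Set.Icc_infinite (by norm_num : (-1:ℝ) < 1)).mono hsub)
  have hlt := intervalIntegral.integral_lt_integral_of_continuousOn_of_le_of_exists_lt
    (show (-1:ℝ) < 1 by norm_num) (continuousOn_const (c := (0:ℝ)))
    (((p - q).continuous.mul ((p - q).continuous)).continuousOn)
    (fun x _ => mul_self_nonneg _) hex
  simp only [Pi.mul_apply, hsq] at hlt
  simp at hlt

/-- For odd `n`, the monic Legendre polynomial is odd: `Lₙ(-x) = -Lₙ(x)`. -/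
private lemma legendre_odd_comp (L : ℕ → Polynomial ℝ)
    (hL : ∀ n : ℕ, (L n).Monic ∧ (L n).natDegree = n ∧
      ∀ k : ℕ, k < n → (∫ x in (-1:ℝ)..1, (L n).eval x * x ^ k) = 0)
    (n : ℕ) (hn : Odd n) : (L n).comp (-X) = -(L n) := by
  obtain ⟨hmon, hdeg, horth⟩ := hL n
  have hXdeg : (-X : ℝ[X]).natDegree = 1 := by simp
  have hMlead : (-((L n).comp (-X))).leadingCoeff = 1 := by
    rw [leadingCoeff_neg, leadingCoeff_comp (by rw [hXdeg]; norm_num)]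
    rw [hmon.leadingCoeff, one_mul, leadingCoeff_neg, leadingCoeff_X, hdeg, hn.neg_one_pow]
    ring
  have hMmon : (-((L n).comp (-X))).Monic := hMlead
  have hMdeg : (-((L n).comp (-X))).natDegree = n := by
    rw [natDegree_neg, natDegree_comp, hXdeg, hdeg, mul_one]
  have hMeval : ∀ x : ℝ, (-((L n).comp (-X))).eval x = -((L n).eval (-x)) := by
    intro x; simp [eval_comp]
  have horthM : ∀ k : ℕ, k < n →
      (∫ x in (-1:ℝ)..1, (-((L n).comp (-X))).eval x * x ^ k) = 0 := by
    intro k hk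
    have h1 : (∫ x in (-1:ℝ)..1, (-((L n).comp (-X))).eval x * x ^ k)
        = -∫ x in (-1:ℝ)..1, (fun y => (L n).eval y * (-y) ^ k) (-x) := by
      rw [← intervalIntegral.integral_neg]
      apply intervalIntegral.integral_congr
      intro x _
      simp only [hMeval, neg_neg]
      ring
    rw [h1, intervalIntegral.integral_comp_neg (fun y => (L n).eval y * (-y) ^ k)]
    have hb : (∫ x in (-(1:ℝ))..(-(-1:ℝ)), (L n).eval x * (-x) ^ k)
        = ∫ x in (-1:ℝ)..1, (L n).eval x * (-x) ^ k := by norm_num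
    have h3 : (∫ x in (-1:ℝ)..1, (L n).eval x * (-x) ^ k)
        = ∫ x in (-1:ℝ)..1, (-1 : ℝ) ^ k * ((L n).eval x * x ^ k) := by
      apply intervalIntegral.integral_congr
      intro x _
      rw [neg_pow]
      ring
    rw [hb, h3, intervalIntegral.integral_const_mul, horth k hk, mul_zero, neg_zero]
  have := orth_unique (L n) (-((L n).comp (-X))) n hmon hdeg horth hMmon hMdeg horthM
  linear_combination this

theorem polar_legendre_odd_root_neg_pole'
    (L : ℕ → Polynomial ℝ) (ζ : ℂ) (P : ℕ → Polynomial ℂ)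
    (hL : ∀ n : ℕ, (L n).Monic ∧ (L n).natDegree = n ∧
      ∀ k : ℕ, k < n → (∫ x in (-1:ℝ)..1, (L n).eval x * x ^ k) = 0)
    (hP : ∀ n : ℕ, (P n).Monic ∧ (P n).natDegree = n ∧
      ∀ z : ℂ, ((n : ℂ) + 1) * ((L n).map (algebraMap ℝ ℂ)).eval z =
        (P n).eval z + (z - ζ) * ((P n).derivative.eval z))
    (n : ℕ) (hn : Odd n) (hζne : ζ ≠ 0) :
    (P n).eval (-ζ) = 0 := by
  obtain ⟨hmon, hdeg, hode⟩ := hP n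
  have hLodd : (L n).comp (-X) = -(L n) := legendre_odd_comp L hL n hn
  have hQ' : derivative ((X - C ζ) * P n)
      = C ((n:ℂ)+1) * ((L n).map (algebraMap ℝ ℂ)) := by
    apply Polynomial.funext
    intro z
    have h := hode z
    rw [derivative_mul, derivative_sub, derivative_X, derivative_C, sub_zero, one_mul]
    simp only [eval_add, eval_mul, eval_sub, eval_X, eval_C]
    rw [← h]
  have hLcodd : ((L n).map (algebraMap ℝ ℂ)).comp (-X) = -((L n).map (algebraMap ℝ ℂ)) := by
    have h := congrArg (Polynomial.map (algebraMap ℝ ℂ)) hLodd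
    rwa [Polynomial.map_comp, Polynomial.map_neg, Polynomial.map_neg, Polynomial.map_X] at h
  have heven : ((X - C ζ) * P n).comp (-X) = (X - C ζ) * P n := by
    have hder : derivative (((X - C ζ) * P n).comp (-X) - (X - C ζ) * P n) = 0 := by
      rw [derivative_sub, derivative_comp, hQ', mul_comp, C_comp, hLcodd]
      simp
    have hC := eq_C_of_derivative_eq_zero hder
    have h0 : (((X - C ζ) * P n).comp (-X) - (X - C ζ) * P n).eval 0 = 0 := by
      simp [eval_comp]
    rw [hC, eval_C] at h0
    have hz : ((X - C ζ) * P n).comp (-X) - (X - C ζ) * P n = 0 := by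
      rw [hC, h0, map_zero]
    rwa [sub_eq_zero] at hz
  have hQζ : ((X - C ζ) * P n).eval ζ = 0 := by simp
  have hQnζ : ((X - C ζ) * P n).eval (-ζ) = 0 := by
    have h := congrArg (eval ζ) heven
    rwa [eval_comp, eval_neg, eval_X, hQζ] at h
  rw [eval_mul, eval_sub, eval_X, eval_C] at hQnζ
  rcases mul_eq_zero.mp hQnζ with h | h
  · exfalso
    apply hζne
    have h2 : (-2 : ℂ) * ζ = 0 := by linear_combination h
    simpa using mul_eq_zero.mp h2
  · exact h

/-- If `n` is odd and the pole `ζ` is a nonzero real number, then `P_n(−ζ) = 0`. -/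
theorem polar_legendre_odd_root_neg_pole
    (L : ℕ → Polynomial ℝ) (ζ : ℂ) (P : ℕ → Polynomial ℂ)
    (hL : IsMonicLegendre L) (hP : IsPolarLegendre L ζ P)
    (n : ℕ) (hn : Odd n) (hζreal : ζ.im = 0) (hζne : ζ ≠ 0) :
    (P n).eval (-ζ) = 0 :=
  polar_legendre_odd_root_neg_pole' L ζ P hL hP n hn hζne
end

section
/- For every n ∈ ℕ and ζ ∈ ℂ, if w ∈ ℂ is a zero of the polar Legendre polynomial P_n of multiplicity at least 2, then the multiplicity of w is exactly 2 and w is a real number lying in the open interval (−1,1). -/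
open Polynomial

section Aux
open Set MeasureTheory Function

private lemma sign_of_even_mult (a b : ℝ) :
    ∀ N : ℕ, ∀ p : Polynomial ℝ, p.natDegree ≤ N → p ≠ 0 →
    (∀ x ∈ Set.Ioo a b, Even (p.rootMultiplicity x)) →
    (∀ x ∈ Set.Ioo a b, 0 ≤ p.eval x) ∨ (∀ x ∈ Set.Ioo a b, p.eval x ≤ 0) := by
  intro N
  induction N using Nat.strong_induction_on with
  | _ N ih =>
    intro p hdeg hp hev
    by_cases hroot : ∃ c ∈ Set.Ioo a b, p.IsRoot c
    · obtain ⟨c, hc, hcr⟩ := hroot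
      set m := p.rootMultiplicity c with hm
      have hm1 : 0 < m := (rootMultiplicity_pos hp).2 hcr
      have hmeven : Even m := hev c hc
      set g := p /ₘ (X - C c) ^ m with hg
      have hpg : (X - C c) ^ m * g = p := pow_mul_divByMonic_rootMultiplicity_eq p c
      have hgc : g.eval c ≠ 0 := eval_divByMonic_pow_rootMultiplicity_ne_zero c hp
      have hg0 : g ≠ 0 := fun h => hgc (by simp [h])
      have hXc : ((X - C c) ^ m : Polynomial ℝ) ≠ 0 := pow_ne_zero _ (X_sub_C_ne_zero c)
      have hdsum : m + g.natDegree = p.natDegree := by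
        have := natDegree_mul hXc hg0
        rw [hpg] at this
        simpa [natDegree_pow, natDegree_X_sub_C] using this.symm
      have hNpos : 1 ≤ N := le_trans (le_trans hm1 (by omega)) hdeg
      have hgdeg : g.natDegree ≤ N - 1 := by omega
      have hmultX : ∀ x : ℝ, x ≠ c → ((X - C c) ^ m).rootMultiplicity x = 0 := by
        intro x hx
        refine rootMultiplicity_eq_zero ?_
        simp [IsRoot, sub_eq_zero, pow_ne_zero, hx]
      have hgev : ∀ x ∈ Set.Ioo a b, Even (g.rootMultiplicity x) := by
        intro x hx
        by_cases hxc : x = c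
        · subst hxc
          rw [rootMultiplicity_eq_zero hgc]
          exact Even.zero
        · have := rootMultiplicity_mul (p := (X - C c) ^ m) (q := g) (x := x)
            (by rw [hpg]; exact hp)
          rw [hpg, hmultX x hxc, zero_add] at this
          rw [← this]; exact hev x hx
      have hpow : ∀ x : ℝ, 0 ≤ (x - c) ^ m := fun x => hmeven.pow_nonneg _
      have heval : ∀ x : ℝ, p.eval x = (x - c) ^ m * g.eval x := by
        intro x
        conv_lhs => rw [← hpg]
        simp [eval_pow]
      rcases ih (N - 1) (by omega) g hgdeg hg0 hgev with hs | hs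
      · left; intro x hx; rw [heval x]; exact mul_nonneg (hpow x) (hs x hx)
      · right; intro x hx; rw [heval x]; exact mul_nonpos_of_nonneg_of_nonpos (hpow x) (hs x hx)
    · by_contra hcon
      push_neg at hcon
      obtain ⟨⟨x, hx, hpx⟩, ⟨y, hy, hpy⟩⟩ := hcon
      have hcont : Continuous fun t : ℝ => p.eval t := p.continuous
      have h0 : (0:ℝ) ∈ Set.uIcc (p.eval x) (p.eval y) := by
        rw [Set.mem_uIcc]
        left; exact ⟨le_of_lt hpx, le_of_lt hpy⟩
      obtain ⟨c, hc, hc0⟩ := intermediate_value_uIcc (f := fun t => p.eval t)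
        (hcont.continuousOn) h0
      have hcIoo : c ∈ Set.Ioo a b := Set.ordConnected_Ioo.uIcc_subset hx hy hc
      exact hroot ⟨c, hcIoo, hc0⟩

private lemma integral_pos_of_nonneg {p : Polynomial ℝ} (hp : p ≠ 0)
    (h : ∀ x ∈ Set.Ioo (-1:ℝ) 1, 0 ≤ p.eval x) :
    0 < ∫ x in (-1:ℝ)..1, p.eval x := by
  have hfi : IntervalIntegrable (fun x => p.eval x) volume (-1:ℝ) 1 :=
    p.continuous.intervalIntegrable _ _
  have h₀ : 0 ≤ᵐ[volume.restrict (Set.uIoc (-1:ℝ) 1)] fun x => p.eval x := by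
    rw [Set.uIoc_of_le (by norm_num : (-1:ℝ) ≤ 1)]
    refine ae_restrict_of_ae_eq_of_ae_restrict Ioo_ae_eq_Ioc ?_
    rw [ae_restrict_iff' measurableSet_Ioo]
    filter_upwards with x hx using h x hx
  rw [intervalIntegral.integral_pos_iff_support_of_nonneg_ae' h₀ hfi]
  refine ⟨by norm_num, ?_⟩
  have hfin : Set.Finite {x : ℝ | p.IsRoot x} := finite_setOf_isRoot hp
  have hsub : Set.Ioo (-1:ℝ) 1 \ {x : ℝ | p.IsRoot x} ⊆
      support (fun x => p.eval x) ∩ Set.Ioc (-1:ℝ) 1 := by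
    rintro x ⟨hx1, hx2⟩
    exact ⟨fun hc => hx2 hc, Set.Ioo_subset_Ioc_self hx1⟩
  have hvol : volume (Set.Ioo (-1:ℝ) 1 \ {x : ℝ | p.IsRoot x}) = volume (Set.Ioo (-1:ℝ) 1) :=
    measure_diff_null (hfin.measure_zero _)
  calc (0:ENNReal) < volume (Set.Ioo (-1:ℝ) 1) := by
        rw [Real.volume_Ioo]; norm_num
    _ = volume (Set.Ioo (-1:ℝ) 1 \ {x : ℝ | p.IsRoot x}) := hvol.symm
    _ ≤ _ := measure_mono hsub

private lemma orth_integral {p q : Polynomial ℝ} {n : ℕ}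
    (horth : ∀ k : ℕ, k < n → (∫ x in (-1:ℝ)..1, p.eval x * x ^ k) = 0)
    (hq : q.natDegree < n) :
    (∫ x in (-1:ℝ)..1, (p * q).eval x) = 0 := by
  have hev : ∀ x : ℝ, (p * q).eval x =
      ∑ k ∈ Finset.range (q.natDegree + 1), q.coeff k * (p.eval x * x ^ k) := by
    intro x
    rw [eval_mul]
    conv_lhs => rw [eval_eq_sum_range (x := x) (p := q)]
    rw [Finset.mul_sum]
    exact Finset.sum_congr rfl fun k _ => by ring
  simp_rw [hev]
  rw [intervalIntegral.integral_finset_sum]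
  · refine Finset.sum_eq_zero fun k hk => ?_
    have hkn : k < n := by
      have := Finset.mem_range.mp hk; omega
    rw [intervalIntegral.integral_const_mul, horth k hkn, mul_zero]
  · intro k _
    exact (continuous_const.mul (p.continuous.mul (continuous_pow k))).intervalIntegrable _ _

private lemma legendre_roots {p : Polynomial ℝ} {n : ℕ} (hmo : p.Monic) (hdeg : p.natDegree = n)
    (horth : ∀ k : ℕ, k < n → (∫ x in (-1:ℝ)..1, p.eval x * x ^ k) = 0) :
    p.roots.card = n ∧ ∀ x ∈ p.roots, x ∈ Set.Ioo (-1:ℝ) 1 ∧ p.roots.count x = 1 := by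
  classical
  have hp : p ≠ 0 := hmo.ne_zero
  set S : Finset ℝ := p.roots.toFinset.filter
    (fun x => x ∈ Set.Ioo (-1:ℝ) 1 ∧ Odd (p.rootMultiplicity x)) with hS
  set q : Polynomial ℝ := ∏ x ∈ S, (X - C x) with hq
  have hq0 : q ≠ 0 := (monic_prod_of_monic _ _ fun x _ => monic_X_sub_C x).ne_zero
  have hqdeg : q.natDegree = S.card := by
    rw [hq, natDegree_prod _ _ fun x _ => X_sub_C_ne_zero x]
    simp [natDegree_X_sub_C]
  have hqroots : q.roots = S.val := by
    rw [hq]; exact roots_prod_X_sub_C S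
  have hmultq : ∀ x : ℝ, q.rootMultiplicity x = if x ∈ S then 1 else 0 := by
    intro x
    rw [← count_roots, hqroots]
    split
    · exact Multiset.count_eq_one_of_mem S.nodup (by assumption)
    · exact Multiset.count_eq_zero_of_notMem (by assumption)
  have hpq : p * q ≠ 0 := mul_ne_zero hp hq0
  have heven : ∀ x ∈ Set.Ioo (-1:ℝ) 1, Even ((p * q).rootMultiplicity x) := by
    intro x hx
    rw [rootMultiplicity_mul hpq, hmultq x]
    by_cases hodd : Odd (p.rootMultiplicity x)
    · have hxr : p.IsRoot x := by
        refine (rootMultiplicity_pos hp).mp ?_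
        rcases hodd with ⟨k, hk⟩; omega
      have hxS : x ∈ S := by
        rw [hS, Finset.mem_filter, Multiset.mem_toFinset]
        exact ⟨(mem_roots hp).mpr hxr, hx, hodd⟩
      rw [if_pos hxS]
      exact hodd.add_one
    · have hxS : x ∉ S := by
        rw [hS, Finset.mem_filter]
        rintro ⟨-, -, h⟩; exact hodd h
      rw [if_neg hxS, add_zero]
      exact Nat.not_odd_iff_even.mp hodd
  have hne : (∫ x in (-1:ℝ)..1, (p * q).eval x) ≠ 0 := by
    rcases sign_of_even_mult (-1) 1 (p * q).natDegree (p * q) le_rfl hpq heven with hs | hs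
    · exact (integral_pos_of_nonneg hpq hs).ne'
    · have hneg : 0 < ∫ x in (-1:ℝ)..1, (-(p * q)).eval x := by
        refine integral_pos_of_nonneg (neg_ne_zero.mpr hpq) fun x hx => ?_
        rw [eval_neg]; linarith [hs x hx]
      have : (∫ x in (-1:ℝ)..1, (-(p * q)).eval x)
          = -∫ x in (-1:ℝ)..1, (p * q).eval x := by
        simp [eval_neg, intervalIntegral.integral_neg]
      rw [this] at hneg
      intro h0; rw [h0] at hneg; simp at hneg
  have hcard : n ≤ S.card := by
    by_contra hlt
    push_neg at hlt
    exact hne (orth_integral horth (by omega))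
  have hchain1 : S.card ≤ p.roots.toFinset.card := Finset.card_filter_le _ _
  have hchain2 : p.roots.toFinset.card ≤ Multiset.card p.roots := p.roots.toFinset_card_le
  have hchain3 : Multiset.card p.roots ≤ n := hdeg ▸ p.card_roots'
  have hrc : Multiset.card p.roots = n := by omega
  have htf : p.roots.toFinset.card = Multiset.card p.roots := by omega
  have hnodup : p.roots.Nodup := Multiset.toFinset_card_eq_card_iff_nodup.mp htf
  have hSeq : S = p.roots.toFinset :=
    Finset.eq_of_subset_of_card_le (Finset.filter_subset _ _) (by omega)
  refine ⟨hrc, fun x hx => ?_⟩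
  have hxS : x ∈ S := by rw [hSeq, Multiset.mem_toFinset]; exact hx
  rw [hS, Finset.mem_filter] at hxS
  exact ⟨hxS.2.1, Multiset.count_eq_one_of_mem hnodup hx⟩

private lemma legendre_roots_complex {p : Polynomial ℝ} {n : ℕ} (hmo : p.Monic)
    (hdeg : p.natDegree = n)
    (horth : ∀ k : ℕ, k < n → (∫ x in (-1:ℝ)..1, p.eval x * x ^ k) = 0) {w : ℂ}
    (hw : 0 < (p.map (algebraMap ℝ ℂ)).rootMultiplicity w) :
    (p.map (algebraMap ℝ ℂ)).rootMultiplicity w = 1 ∧ w.im = 0 ∧ -1 < w.re ∧ w.re < 1 := by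
  obtain ⟨hcard, hroots⟩ := legendre_roots hmo hdeg horth
  have hp : p ≠ 0 := hmo.ne_zero
  have hpm : p.map (algebraMap ℝ ℂ) ≠ 0 := (hmo.map _).ne_zero
  have hsplit : p.Splits := splits_iff_card_roots.mpr (by rw [hcard, hdeg])
  have hmap : (p.map (algebraMap ℝ ℂ)).roots = p.roots.map (algebraMap ℝ ℂ) :=
    hsplit.roots_map _
  rw [← count_roots, hmap] at hw ⊢
  have hwmem : w ∈ p.roots.map (algebraMap ℝ ℂ) := Multiset.count_pos.mp hw
  obtain ⟨x, hxr, hxw⟩ := Multiset.mem_map.mp hwmem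
  obtain ⟨hxIoo, hxcount⟩ := hroots x hxr
  have hinj : Function.Injective (algebraMap ℝ ℂ) := (algebraMap ℝ ℂ).injective
  subst hxw
  rw [Multiset.count_map_eq_count' _ _ hinj, hxcount]
  refine ⟨rfl, ?_, ?_, ?_⟩
  · simp [Complex.ofReal_im]
  · simpa using hxIoo.1
  · simpa using hxIoo.2

end Aux

/-- A zero of `P_n` of multiplicity at least 2 has multiplicity exactly 2 and is a real
number in the open interval `(-1,1)`. -/
theorem polar_legendre_multiple_zeros
    (L : ℕ → Polynomial ℝ) (ζ : ℂ) (P : ℕ → Polynomial ℂ)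
    (hL : IsMonicLegendre L) (hP : IsPolarLegendre L ζ P)
    (n : ℕ) (w : ℂ) (hw : 2 ≤ (P n).rootMultiplicity w) :
    (P n).rootMultiplicity w = 2 ∧ w.im = 0 ∧ -1 < w.re ∧ w.re < 1 := by
  classical
  obtain ⟨hLmo, hLdeg, hLorth⟩ := hL n
  obtain ⟨hPmo, hPdeg, hPev⟩ := hP n
  have hPne : P n ≠ 0 := hPmo.ne_zero
  have hLmne : (L n).map (algebraMap ℝ ℂ) ≠ 0 := ((hLmo.map _)).ne_zero
  have hCne : (C ((n : ℂ) + 1) : Polynomial ℂ) ≠ 0 := by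
    simp [Nat.cast_add_one_ne_zero]
  set Q : Polynomial ℂ := (X - C ζ) * P n with hQdef
  have hQne : Q ≠ 0 := mul_ne_zero (X_sub_C_ne_zero ζ) hPne
  have hQder : Q.derivative = C ((n : ℂ) + 1) * (L n).map (algebraMap ℝ ℂ) := by
    apply Polynomial.funext
    intro z
    rw [hQdef, derivative_mul]
    simp only [derivative_sub, derivative_X, derivative_C, sub_zero, one_mul,
      eval_add, eval_mul, eval_sub, eval_X, eval_C]
    exact (hPev z).symm
  have hmQ : Q.rootMultiplicity w = (if w = ζ then 1 else 0) + (P n).rootMultiplicity w := by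
    rw [hQdef, rootMultiplicity_mul hQne, rootMultiplicity_X_sub_C]
  have hwQ : Q.IsRoot w := by
    refine (rootMultiplicity_pos hQne).mp ?_
    rw [hmQ]; omega
  have hder := derivative_rootMultiplicity_of_root hwQ
  have hdmul : Q.derivative.rootMultiplicity w
      = ((L n).map (algebraMap ℝ ℂ)).rootMultiplicity w := by
    rw [hQder, rootMultiplicity_mul (mul_ne_zero hCne hLmne)]
    rw [rootMultiplicity_eq_zero (by simp [IsRoot, Nat.cast_add_one_ne_zero] :
      ¬(C ((n : ℂ) + 1)).IsRoot w), zero_add]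
  have hLpos : 0 < ((L n).map (algebraMap ℝ ℂ)).rootMultiplicity w := by
    rw [← hdmul, hder, hmQ]; omega
  obtain ⟨h1, him, hre1, hre2⟩ := legendre_roots_complex hLmo hLdeg hLorth hLpos
  rw [← hdmul, hder, hmQ] at h1
  constructor
  · omega
  · exact ⟨him, hre1, hre2⟩
end

section
/- Let n ≥ 1 and suppose the pole ζ satisfies ζ = 1, ζ = −1, or L_n′(ζ) = 0. Then n·(z-ζ)·P_n(z) = (z²-1)·L_n′(z) for all z ∈ ℂ; in particular, every zero of the polar Legendre polynomial P_n is either 1, −1, or one of the n−1 critical points of the Legendre polynomial L_n (zeros of L_n′). -/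
set_option maxHeartbeats 1000000

open Polynomial

open MeasureTheory Set intervalIntegral

private lemma poly_ii (p : Polynomial ℝ) (a b : ℝ) :
    IntervalIntegrable (fun x => p.eval x) volume a b :=
  p.continuous.intervalIntegrable a b

/-- Orthogonality of `L n` against any polynomial of degree `< n`. -/
private lemma legendre_ortho {L : ℕ → Polynomial ℝ} (hL : IsMonicLegendre L) (n : ℕ)
    (p : Polynomial ℝ) (hp : p.natDegree < n) :
    (∫ x in (-1:ℝ)..1, (L n).eval x * p.eval x) = 0 := by
  have h1 : ∀ x : ℝ, (L n).eval x * p.eval x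
      = ∑ i ∈ Finset.range n, p.coeff i * ((L n).eval x * x ^ i) := by
    intro x
    rw [eval_eq_sum_range' hp, Finset.mul_sum]
    refine Finset.sum_congr rfl fun i _ => by ring
  simp_rw [h1]
  rw [intervalIntegral.integral_finset_sum]
  · refine Finset.sum_eq_zero fun i hi => ?_
    rw [intervalIntegral.integral_const_mul, (hL n).2.2 i (Finset.mem_range.mp hi), mul_zero]
  · intro i _
    exact (continuous_const.mul ((L n).continuous.mul (continuous_pow i))).intervalIntegrable _ _

/-- The Legendre differential equation, derived from orthogonality. -/
private lemma legendre_ode {L : ℕ → Polynomial ℝ} (hL : IsMonicLegendre L) (n : ℕ)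
    (hn : 1 ≤ n) :
    derivative ((X ^ 2 - 1) * derivative (L n)) = C ((n : ℝ) * ((n : ℝ) + 1)) * L n := by
  set Q : Polynomial ℝ := (X ^ 2 - 1) * derivative (L n) with hQ
  set R : Polynomial ℝ := derivative Q - C ((n : ℝ) * ((n : ℝ) + 1)) * L n with hR
  -- coefficients of `R` vanish in degrees `≥ n`
  have hcoeff : ∀ m : ℕ, n ≤ m → R.coeff m = 0 := by
    intro m hm
    have hm1 : 1 ≤ m := le_trans hn hm
    have hQc : Q.coeff (m + 1) = (L n).coeff m * m := by
      have h2 : Q = X ^ 2 * derivative (L n) - derivative (L n) := by rw [hQ]; ring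
      have hma : m + 1 = (m - 1) + 2 := by omega
      have hd1 : (derivative (L n)).coeff (m - 1) = (L n).coeff m * m := by
        rw [coeff_derivative]
        have : m - 1 + 1 = m := by omega
        rw [this]
        push_cast [Nat.cast_sub hm1]
        ring
      have hd2 : (derivative (L n)).coeff (m + 1) = 0 := by
        rw [coeff_derivative]
        have : (L n).coeff (m + 1 + 1) = 0 := by
          apply coeff_eq_zero_of_natDegree_lt
          rw [(hL n).2.1]; omega
        rw [this, zero_mul]
      rw [h2, coeff_sub, hma, coeff_X_pow_mul, ← hma, hd1, hd2, sub_zero]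
    have hderivQ : (derivative Q).coeff m = (L n).coeff m * m * (m + 1) := by
      rw [coeff_derivative, hQc]
    rw [hR, coeff_sub, hderivQ, coeff_C_mul]
    rcases eq_or_lt_of_le hm with hmn | hmn
    · have hc1 : (L n).coeff n = 1 := by
        have := (hL n).1.coeff_natDegree
        rwa [(hL n).2.1] at this
      rw [← hmn, hc1]
      ring
    · have : (L n).coeff m = 0 := by
        apply coeff_eq_zero_of_natDegree_lt; rw [(hL n).2.1]; exact hmn
      rw [this]; ring
  by_contra hne
  have hRne : R ≠ 0 := sub_ne_zero.mpr hne
  have hRdeg : R.natDegree < n := by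
    have : R.degree < (n : WithBot ℕ) := (degree_lt_iff_coeff_zero R n).mpr
      (fun m hm => hcoeff m (by exact_mod_cast hm))
    exact (natDegree_lt_iff_degree_lt hRne).mpr this
  -- boundary values of Q vanish
  have hQ1 : Q.eval 1 = 0 := by simp [hQ]
  have hQm1 : Q.eval (-1) = 0 := by simp [hQ]
  -- orthogonality of (derivative Q) against x^k for k < n
  have hQorth : ∀ k : ℕ, k < n →
      (∫ x in (-1:ℝ)..1, (derivative Q).eval x * x ^ k) = 0 := by
    intro k hk
    rcases Nat.eq_zero_or_pos k with hk0 | hk1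
    · subst hk0
      have := intervalIntegral.integral_eq_sub_of_hasDerivAt
        (f := fun x => Q.eval x) (f' := fun x => (derivative Q).eval x) (a := (-1:ℝ)) (b := 1)
        (fun x _ => Q.hasDerivAt x) (poly_ii _ _ _)
      simpa [hQ1, hQm1] using this
    -- integrate by parts once
    have parts1 : (∫ x in (-1:ℝ)..1,
        ((derivative Q).eval x * x ^ k + Q.eval x * (k * x ^ (k - 1))))
        = Q.eval 1 * 1 ^ k - Q.eval (-1) * (-1 : ℝ) ^ k := by
      apply intervalIntegral.integral_deriv_mul_eq_sub
      · exact fun x _ => Q.hasDerivAt x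
      · exact fun x _ => hasDerivAt_pow k x
      · exact poly_ii _ _ _
      · exact (continuous_const.mul (continuous_pow (k - 1))).intervalIntegrable _ _
    rw [hQ1, hQm1, zero_mul, zero_mul, sub_zero] at parts1
    rw [intervalIntegral.integral_add (f := fun x => (derivative Q).eval x * x ^ k)
        (g := fun x => Q.eval x * ((k:ℝ) * x ^ (k - 1))) (((derivative Q).continuous.mul
        (continuous_pow k)).intervalIntegrable _ _)
        ((Q.continuous.mul (continuous_const.mul (continuous_pow (k-1)))).intervalIntegrable _ _)]
      at parts1
    -- second integration by parts
    set T : Polynomial ℝ := C (k : ℝ) * ((X ^ 2 - 1) * X ^ (k - 1)) with hT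
    have hT1 : T.eval 1 = 0 := by simp [hT]
    have hTm1 : T.eval (-1) = 0 := by simp [hT]
    have hTsub : ∀ x : ℝ, Q.eval x * ((k : ℝ) * x ^ (k - 1))
        = (derivative (L n)).eval x * T.eval x := by
      intro x; simp only [hQ, hT, eval_mul, eval_sub, eval_pow, eval_X, eval_one, eval_C]; ring
    have parts2 : (∫ x in (-1:ℝ)..1,
        ((derivative (L n)).eval x * T.eval x + (L n).eval x * (derivative T).eval x))
        = (L n).eval 1 * T.eval 1 - (L n).eval (-1) * T.eval (-1) := by
      apply intervalIntegral.integral_deriv_mul_eq_sub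
      · exact fun x _ => (L n).hasDerivAt x
      · exact fun x _ => T.hasDerivAt x
      · exact poly_ii _ _ _
      · exact poly_ii _ _ _
    rw [hT1, hTm1, mul_zero, mul_zero, sub_zero] at parts2
    rw [intervalIntegral.integral_add (f := fun x => (derivative (L n)).eval x * T.eval x)
        (g := fun x => (L n).eval x * (derivative T).eval x)
        (((derivative (L n)).continuous.mul T.continuous).intervalIntegrable _ _)
        (((L n).continuous.mul (derivative T).continuous).intervalIntegrable _ _)] at parts2
    have hdT : (derivative T).natDegree < n := by
      have hTdeg : T.natDegree ≤ k + 1 := by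
        calc T.natDegree ≤ (C (k:ℝ)).natDegree + ((X ^ 2 - 1) * X ^ (k-1) : Polynomial ℝ).natDegree :=
              natDegree_mul_le
        _ ≤ 0 + (((X:Polynomial ℝ) ^ 2 - 1).natDegree + ((X : Polynomial ℝ) ^ (k-1)).natDegree) := by
              gcongr
              · exact le_of_eq (natDegree_C _)
              · exact natDegree_mul_le
        _ ≤ 0 + (2 + (k - 1)) := by
              gcongr
              · exact le_trans (natDegree_sub_le _ _) (by simp)
              · exact le_of_eq (natDegree_X_pow _)
        _ ≤ k + 1 := by omega
      have := natDegree_derivative_le T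
      omega
    have hortho2 : (∫ x in (-1:ℝ)..1, (L n).eval x * (derivative T).eval x) = 0 :=
      legendre_ortho hL n (derivative T) hdT
    have hLT : (∫ x in (-1:ℝ)..1, (derivative (L n)).eval x * T.eval x) = 0 := by
      linarith [parts2, hortho2]
    have hQT : (∫ x in (-1:ℝ)..1, Q.eval x * ((k:ℝ) * x ^ (k - 1))) = 0 := by
      simp_rw [hTsub]; exact hLT
    linarith [parts1, hQT]
  -- orthogonality of R against x^k for k < n
  have hRorth : ∀ k : ℕ, k < n → (∫ x in (-1:ℝ)..1, R.eval x * x ^ k) = 0 := by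
    intro k hk
    have : ∀ x : ℝ, R.eval x * x ^ k
        = (derivative Q).eval x * x ^ k
          - ((n : ℝ) * ((n : ℝ) + 1)) * ((L n).eval x * x ^ k) := by
      intro x; simp only [hR, eval_sub, eval_mul, eval_C]; ring
    simp_rw [this]
    rw [intervalIntegral.integral_sub (f := fun x => (derivative Q).eval x * x ^ k)
        (g := fun x => ((n : ℝ) * ((n : ℝ) + 1)) * ((L n).eval x * x ^ k))
        (((derivative Q).continuous.mul
        (continuous_pow k)).intervalIntegrable _ _)
      ((continuous_const.mul ((L n).continuous.mul (continuous_pow k))).intervalIntegrable _ _),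
      hQorth k hk, intervalIntegral.integral_const_mul, (hL n).2.2 k hk]
    ring
  -- hence ∫ R² = 0
  have hRR : (∫ x in (-1:ℝ)..1, R.eval x * R.eval x) = 0 := by
    have h1 : ∀ x : ℝ, R.eval x * R.eval x
        = ∑ i ∈ Finset.range n, R.coeff i * (R.eval x * x ^ i) := by
      intro x
      conv_lhs => rw [show R.eval x * R.eval x = R.eval x * R.eval x from rfl]
      nth_rewrite 2 [eval_eq_sum_range' hRdeg]
      rw [Finset.mul_sum]
      exact Finset.sum_congr rfl fun i _ => by ring
    simp_rw [h1]
    rw [intervalIntegral.integral_finset_sum]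
    · exact Finset.sum_eq_zero fun i hi => by
        rw [intervalIntegral.integral_const_mul, hRorth i (Finset.mem_range.mp hi), mul_zero]
    · exact fun i _ =>
        (continuous_const.mul (R.continuous.mul (continuous_pow i))).intervalIntegrable _ _
  -- but R ≠ 0 forces ∫ R² > 0
  have hf : ∀ x : ℝ, R.eval x * R.eval x = (fun x => (R.eval x) ^ 2) x := fun x => (sq _).symm
  simp_rw [hf] at hRR
  have hnonneg : 0 ≤ᵐ[volume.restrict (Set.uIoc (-1:ℝ) 1)] fun x => (R.eval x) ^ 2 :=
    Filter.Eventually.of_forall fun x => sq_nonneg _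
  have hii : IntervalIntegrable (fun x => (R.eval x) ^ 2) volume (-1) 1 :=
    (R.continuous.pow 2).intervalIntegrable _ _
  have hpos := intervalIntegral.integral_pos_iff_support_of_nonneg_ae' hnonneg hii
  have hnotpos : ¬ (0 < ∫ x in (-1:ℝ)..1, (R.eval x) ^ 2) := by rw [hRR]; exact lt_irrefl 0
  rw [hpos] at hnotpos
  push_neg at hnotpos
  have hsupp : volume (Function.support (fun x => (R.eval x) ^ 2) ∩ Ioc (-1:ℝ) 1) = 0 := by
    have := hnotpos (by norm_num)
    exact le_antisymm this zero_le
  have hroots : volume {x : ℝ | (R.eval x) = 0} = 0 :=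
    ((R.finite_setOf_isRoot hRne)).measure_zero _
  have hsub : Ioc (-1:ℝ) 1 \ {x : ℝ | R.eval x = 0}
      ⊆ Function.support (fun x => (R.eval x) ^ 2) ∩ Ioc (-1:ℝ) 1 := by
    intro x hx
    refine ⟨?_, hx.1⟩
    simp only [Function.mem_support]
    exact pow_ne_zero 2 hx.2
  have h1 : volume (Ioc (-1:ℝ) 1 \ {x : ℝ | R.eval x = 0}) = 0 :=
    measure_mono_null hsub hsupp
  rw [measure_diff_null hroots] at h1
  simp [Real.volume_Ioc] at h1
  norm_num at h1

/-- If `ζ = 1`, `ζ = −1` or `L_n′(ζ) = 0`, then `n·(z-ζ)·P_n(z) = (z²-1)·L_n′(z)` for all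
`z`, and every zero of `P_n` is `1`, `−1`, or a critical point of `L_n`. -/
theorem polar_legendre_degenerate_pole
    (L : ℕ → Polynomial ℝ) (ζ : ℂ) (P : ℕ → Polynomial ℂ)
    (hL : IsMonicLegendre L) (hP : IsPolarLegendre L ζ P)
    (n : ℕ) (hn : 1 ≤ n)
    (hζ : ζ = 1 ∨ ζ = -1 ∨ (Polynomial.derivative ((L n).map (algebraMap ℝ ℂ))).eval ζ = 0) :
    (∀ z : ℂ, (n : ℂ) * (z - ζ) * (P n).eval z =
        (z ^ 2 - 1) * (Polynomial.derivative ((L n).map (algebraMap ℝ ℂ))).eval z) ∧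
    (∀ z : ℂ, (P n).eval z = 0 →
        z = 1 ∨ z = -1 ∨ (Polynomial.derivative ((L n).map (algebraMap ℝ ℂ))).eval z = 0) := by
  set Lc : Polynomial ℂ := (L n).map (algebraMap ℝ ℂ) with hLc
  -- the mapped ODE
  have hode : derivative ((X ^ 2 - 1) * derivative Lc)
      = C ((n : ℂ) * ((n : ℂ) + 1)) * Lc := by
    have := congrArg (Polynomial.map (algebraMap ℝ ℂ)) (legendre_ode hL n hn)
    rw [← derivative_map, Polynomial.map_mul, Polynomial.map_sub, Polynomial.map_pow,
      Polynomial.map_X, Polynomial.map_one, ← derivative_map, Polynomial.map_mul,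
      Polynomial.map_C] at this
    have halg : (algebraMap ℝ ℂ) ((n:ℝ) * ((n:ℝ) + 1)) = (n:ℂ) * ((n:ℂ) + 1) := by
      rw [map_mul, map_add, map_one, map_natCast]
    rw [hLc, this, halg]
  -- the functional equation as a polynomial identity
  have hPeq : C ((n : ℂ) + 1) * Lc = P n + (X - C ζ) * derivative (P n) := by
    apply Polynomial.funext
    intro z
    have := (hP n).2.2 z
    simpa [hLc] using this
  -- the difference polynomial
  set D : Polynomial ℂ := C (n : ℂ) * ((X - C ζ) * P n) - (X ^ 2 - 1) * derivative Lc with hD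
  have hD' : derivative D = 0 := by
    rw [hD, derivative_sub, derivative_C_mul, derivative_mul, derivative_sub, derivative_X,
      derivative_C, sub_zero, one_mul, hode, ← hPeq, ← mul_assoc, ← C_mul, sub_self]
  have hDdeg : D.natDegree = 0 := natDegree_eq_zero_of_derivative_eq_zero hD'
  have hDC : D = C (D.coeff 0) := eq_C_of_natDegree_eq_zero hDdeg
  have hDζ : D.eval ζ = 0 := by
    have hev : D.eval ζ = - ((ζ ^ 2 - 1) * (derivative Lc).eval ζ) := by
      simp [hD]
    rcases hζ with h | h | h
    · rw [hev, h]; ring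
    · rw [hev, h]; ring
    · rw [hev, h, mul_zero, neg_zero]
  have hD0 : D = 0 := by
    rw [hDC] at hDζ ⊢
    rw [eval_C] at hDζ
    rw [hDζ, map_zero]
  have hmain : ∀ z : ℂ, (n : ℂ) * (z - ζ) * (P n).eval z
      = (z ^ 2 - 1) * (derivative Lc).eval z := by
    intro z
    have := congrArg (Polynomial.eval z) hD0
    simp only [hD, eval_sub, eval_mul, eval_C, eval_X, eval_pow, eval_one, eval_zero] at this
    linear_combination this
  refine ⟨fun z => hmain z, fun z hz => ?_⟩
  have h := hmain z
  rw [hz, mul_zero] at h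
  have h0 : (z ^ 2 - 1) * (derivative Lc).eval z = 0 := h.symm
  rcases mul_eq_zero.mp h0 with h1 | h2
  · have : (z - 1) * (z + 1) = 0 := by linear_combination h1
    rcases mul_eq_zero.mp this with ha | hb
    · exact Or.inl (by linear_combination ha)
    · exact Or.inr (Or.inl (by linear_combination hb))
  · exact Or.inr (Or.inr h2)
end

section
/- For n ≥ 1 and ζ ∈ ℂ, every zero z₀ of the polar Legendre polynomial P_n satisfies |(z₀²-1)·L_n′(z₀)| = |(ζ²-1)·L_n′(ζ)|; that is, all zeros of P_n lie on the lemniscate {z ∈ ℂ : |(z²-1)·L_n′(z)| = |(ζ²-1)·L_n′(ζ)|}. -/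
open Polynomial intervalIntegral MeasureTheory


noncomputable def J (p : ℝ[X]) : ℝ := ∫ x in (-1:ℝ)..1, p.eval x

lemma J_eq (p : ℝ[X]) : J p = ∫ x in (-1:ℝ)..1, p.eval x := rfl

lemma J_add (p q : ℝ[X]) : J (p + q) = J p + J q := by
  unfold J
  simp only [eval_add]
  exact intervalIntegral.integral_add (p.continuous_aeval.intervalIntegrable _ _)
    (q.continuous_aeval.intervalIntegrable _ _)

lemma J_sub (p q : ℝ[X]) : J (p - q) = J p - J q := by
  unfold J
  simp only [eval_sub]
  exact intervalIntegral.integral_sub (p.continuous_aeval.intervalIntegrable _ _)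
    (q.continuous_aeval.intervalIntegrable _ _)

lemma J_C_mul (a : ℝ) (p : ℝ[X]) : J (C a * p) = a * J p := by
  unfold J
  simp only [eval_mul, eval_C]
  exact intervalIntegral.integral_const_mul a _

lemma J_derivative (p : ℝ[X]) : J (derivative p) = p.eval 1 - p.eval (-1) := by
  unfold J
  have h : (deriv fun x => p.eval x) = fun x => (derivative p).eval x := by
    funext x; simp [Polynomial.deriv]
  have : (∫ x in (-1:ℝ)..1, (derivative p).eval x) = ∫ x in (-1:ℝ)..1, deriv (fun y => p.eval y) x := by
    rw [h]
  rw [this, intervalIntegral.integral_deriv_eq_sub (fun x _ => p.differentiableAt)]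
  rw [h]
  exact (p.derivative.continuous_aeval).intervalIntegrable _ _
lemma orth_dxpow' (l : ℝ[X]) (n : ℕ)
    (horth : ∀ k : ℕ, k < n → J (l * X ^ k) = 0)
    (m : ℕ) (hm : m ≤ n) : J (l * derivative (X ^ m : ℝ[X])) = 0 := by
  rcases Nat.eq_zero_or_pos m with rfl | hm0
  · simpa using J_C_mul 0 0
  obtain ⟨j, rfl⟩ : ∃ j, m = j + 1 := ⟨m - 1, by omega⟩
  rw [derivative_X_pow]
  have : l * (C (((j:ℕ)+1 : ℕ) : ℝ) * X ^ (j + 1 - 1)) = C ((j:ℝ)+1) * (l * X ^ j) := by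
    push_cast; ring_nf
  rw [this, J_C_mul, horth j (by omega), mul_zero]

lemma M_orth (l : ℝ[X]) (n : ℕ)
    (horth : ∀ k : ℕ, k < n → J (l * X ^ k) = 0)
    (k : ℕ) (hk : k < n) :
    J (derivative ((X ^ 2 - 1) * derivative l) * X ^ k) = 0 := by
  set u : ℝ[X] := (X ^ 2 - 1) * derivative l with hu
  have key : derivative u * X ^ k = derivative (u * X ^ k) - u * derivative (X ^ k) := by
    have h := derivative_mul (f := u) (g := (X : ℝ[X]) ^ k)
    linear_combination -h
  rw [key, J_sub, J_derivative]
  have hu1 : (u * X ^ k).eval 1 = 0 := by simp [hu]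
  have hum : (u * X ^ k).eval (-1) = 0 := by simp [hu]
  rw [hu1, hum]
  rcases Nat.eq_zero_or_pos k with rfl | hk0
  · simpa using J_C_mul 0 0
  obtain ⟨j, rfl⟩ : ∃ j, k = j + 1 := ⟨k - 1, by omega⟩
  have hsplit : u * derivative ((X : ℝ[X]) ^ (j + 1)) =
      C ((j : ℝ) + 1) * (derivative l * (X ^ (j + 2) - X ^ j)) := by
    rw [hu, derivative_X_pow]
    push_cast
    ring_nf
  rw [hsplit, J_C_mul]
  have h2 : derivative l * ((X : ℝ[X]) ^ (j + 2) - X ^ j) =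
      derivative (l * (X ^ (j + 2) - X ^ j)) -
        (l * derivative ((X : ℝ[X]) ^ (j + 2)) - l * derivative ((X : ℝ[X]) ^ j)) := by
    have h := derivative_mul (f := l) (g := (X : ℝ[X]) ^ (j + 2) - X ^ j)
    have h2 := derivative_sub (f := (X : ℝ[X]) ^ (j + 2)) (g := (X : ℝ[X]) ^ j)
    linear_combination -h - l * h2
  rw [h2, J_sub, J_sub, J_derivative,
    orth_dxpow' l n horth (j + 2) (by omega), orth_dxpow' l n horth j (by omega)]
  have hb1 : (l * ((X : ℝ[X]) ^ (j + 2) - X ^ j)).eval 1 = 0 := by simp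
  have hbm : (l * ((X : ℝ[X]) ^ (j + 2) - X ^ j)).eval (-1) = 0 := by
    simp [pow_add]
  rw [hb1, hbm]; ring
lemma J_zero : J 0 = 0 := by simpa using J_C_mul 0 0

lemma J_sum {ι : Type*} (s : Finset ι) (f : ι → ℝ[X]) :
    J (∑ i ∈ s, f i) = ∑ i ∈ s, J (f i) := by
  classical
  induction s using Finset.induction_on with
  | empty => simpa using J_zero
  | @insert a s h ih => rw [Finset.sum_insert h, Finset.sum_insert h, J_add, ih]

/-- A polynomial of degree `< n` orthogonal to `X^k` for all `k < n` is zero. -/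
lemma orth_small_eq_zero (R : ℝ[X]) (n : ℕ) (hdeg : R.natDegree < n)
    (horth : ∀ k : ℕ, k < n → J (R * X ^ k) = 0) : R = 0 := by
  have hsq : J (R * R) = 0 := by
    have hrep : R * R = ∑ i ∈ Finset.range n, C (R.coeff i) * (R * X ^ i) := by
      nth_rewrite 2 [R.as_sum_range' n hdeg]
      rw [Finset.mul_sum]
      refine Finset.sum_congr rfl fun i _ => ?_
      rw [← C_mul_X_pow_eq_monomial]; ring
    rw [hrep, J_sum]
    refine Finset.sum_eq_zero fun i hi => ?_
    rw [J_C_mul, horth i (Finset.mem_range.mp hi), mul_zero]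
  by_contra hR0
  have hint : (∫ x in Set.Ioc (-1:ℝ) 1, (R.eval x) ^ 2) = 0 := by
    rw [← intervalIntegral.integral_of_le (by norm_num : (-1:ℝ) ≤ 1)]
    rw [J_eq] at hsq
    simpa [sq, eval_mul] using hsq
  have hcont : Continuous fun x : ℝ => (R.eval x) ^ 2 := (R.continuous_aeval).pow 2
  have hae : (fun x : ℝ => (R.eval x) ^ 2) =ᵐ[volume.restrict (Set.Ioc (-1:ℝ) 1)] 0 := by
    rw [← MeasureTheory.integral_eq_zero_iff_of_nonneg]
    · exact hint
    · exact fun x => sq_nonneg _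
    · exact hcont.integrableOn_Ioc
  have hopen : IsOpen {x : ℝ | R.eval x ≠ 0} :=
    isOpen_ne.preimage R.continuous_aeval
  have h0' : ∀ᵐ x ∂(volume.restrict (Set.Ioc (-1:ℝ) 1)), R.eval x = 0 := by
    filter_upwards [hae] with x hx
    have : (R.eval x) ^ 2 = 0 := hx
    exact pow_eq_zero_iff (by norm_num) |>.mp this
  rw [MeasureTheory.ae_iff] at h0'
  have h0 : volume ({x : ℝ | R.eval x ≠ 0} ∩ Set.Ioc (-1:ℝ) 1) = 0 := by
    rw [← Measure.restrict_apply hopen.measurableSet]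
    exact h0'
  have hrootfin : {x : ℝ | R.IsRoot x}.Finite := Polynomial.finite_setOf_isRoot hR0
  have hsub : Set.Ioc (-1:ℝ) 1 ⊆
      ({x : ℝ | R.eval x ≠ 0} ∩ Set.Ioc (-1:ℝ) 1) ∪ {x : ℝ | R.IsRoot x} := by
    intro x hx
    by_cases h : R.eval x = 0
    · exact Or.inr h
    · exact Or.inl ⟨h, hx⟩
  have hle : volume (Set.Ioc (-1:ℝ) 1) = 0 := by
    refine le_antisymm ?_ zero_le
    calc volume (Set.Ioc (-1:ℝ) 1)
        ≤ volume (({x : ℝ | R.eval x ≠ 0} ∩ Set.Ioc (-1:ℝ) 1) ∪ {x : ℝ | R.IsRoot x}) :=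
          measure_mono hsub
      _ ≤ volume ({x : ℝ | R.eval x ≠ 0} ∩ Set.Ioc (-1:ℝ) 1) + volume {x : ℝ | R.IsRoot x} :=
          measure_union_le _ _
      _ = 0 := by rw [h0, hrootfin.measure_zero]; simp
  rw [Real.volume_Ioc] at hle
  norm_num at hle
lemma legendre_ode_s13 (l : ℝ[X]) (n : ℕ) (hn : 1 ≤ n) (hmon : l.Monic) (hdeg : l.natDegree = n)
    (horth : ∀ k : ℕ, k < n → J (l * X ^ k) = 0) :
    derivative ((X ^ 2 - 1) * derivative l) = C ((n : ℝ) * ((n : ℝ) + 1)) * l := by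
  set M := derivative ((X ^ 2 - 1 : ℝ[X]) * derivative l) with hM
  set R := M - C ((n : ℝ) * ((n : ℝ) + 1)) * l with hR
  suffices h : R = 0 by
    rw [hR, sub_eq_zero] at h; exact h
  have hRorth : ∀ k : ℕ, k < n → J (R * X ^ k) = 0 := by
    intro k hk
    have hsplit : R * X ^ k = M * X ^ k - C ((n : ℝ) * ((n : ℝ) + 1)) * (l * X ^ k) := by
      rw [hR]; ring
    rw [hsplit, J_sub, M_orth l n horth k hk, J_C_mul, horth k hk, mul_zero, sub_zero]
  by_cases hR0 : R = 0
  · exact hR0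
  refine orth_small_eq_zero R n ?_ hRorth
  have hdl : (derivative l).natDegree ≤ n - 1 := by
    have := natDegree_derivative_le l; omega
  have hX2 : ((X : ℝ[X]) ^ 2 - 1).natDegree = 2 := by compute_degree!
  have hu : ((X ^ 2 - 1 : ℝ[X]) * derivative l).natDegree ≤ n + 1 :=
    le_trans (natDegree_mul_le) (by omega)
  have hMdeg : M.natDegree ≤ n := le_trans (natDegree_derivative_le _) (by omega)
  have hCl : (C ((n : ℝ) * ((n : ℝ) + 1)) * l).natDegree ≤ n :=
    le_trans (natDegree_C_mul_le _ _) hdeg.le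
  have hRdeg : R.natDegree ≤ n := le_trans (natDegree_sub_le _ _) (max_le hMdeg hCl)
  have hlc : l.coeff n = 1 := by rw [← hdeg]; exact hmon.coeff_natDegree
  have hdl' : (derivative l).coeff (n - 1) = (n : ℝ) := by
    rw [coeff_derivative, show n - 1 + 1 = n by omega, hlc, one_mul]
    rw [Nat.cast_sub hn]
    push_cast
    ring
  have hdlhigh : (derivative l).coeff (n + 1) = 0 :=
    coeff_eq_zero_of_natDegree_lt (by omega)
  have hucoeff : ((X ^ 2 - 1 : ℝ[X]) * derivative l).coeff (n + 1) = (n : ℝ) := by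
    rw [sub_mul, one_mul, coeff_sub, hdlhigh, sub_zero]
    have h2 := coeff_X_pow_mul (derivative l) 2 (n - 1)
    rw [show n - 1 + 2 = n + 1 by omega] at h2
    rw [h2, hdl']
  have hMcoeffn : M.coeff n = (n : ℝ) * ((n : ℝ) + 1) := by
    rw [hM, coeff_derivative, hucoeff]
  have hRcoeffn : R.coeff n = 0 := by
    rw [hR, coeff_sub, hMcoeffn, coeff_C_mul, hlc]; ring
  have hne : R.natDegree ≠ n := by
    intro h
    exact hR0 (leadingCoeff_eq_zero.mp (by rw [leadingCoeff, h, hRcoeffn]))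
  omega
/-- Every zero `z₀` of `P_n` satisfies `|(z₀²-1)·L_n′(z₀)| = |(ζ²-1)·L_n′(ζ)|`, i.e. lies on
the lemniscate `{z : |(z²-1)·L_n′(z)| = |(ζ²-1)·L_n′(ζ)|}`. -/
theorem polar_legendre_zeros_on_lemniscate
    (L : ℕ → Polynomial ℝ) (ζ : ℂ) (P : ℕ → Polynomial ℂ)
    (hL : IsMonicLegendre L) (hP : IsPolarLegendre L ζ P)
    (n : ℕ) (hn : 1 ≤ n) (z₀ : ℂ) (hz₀ : (P n).eval z₀ = 0) :
    ‖(z₀ ^ 2 - 1) * (Polynomial.derivative ((L n).map (algebraMap ℝ ℂ))).eval z₀‖ =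
      ‖(ζ ^ 2 - 1) * (Polynomial.derivative ((L n).map (algebraMap ℝ ℂ))).eval ζ‖ := by
  obtain ⟨hmon, hdeg, horth⟩ := hL n
  obtain ⟨-, -, hPid⟩ := hP n
  have horthJ : ∀ k : ℕ, k < n → J (L n * X ^ k) = 0 := by
    intro k hk
    rw [J_eq]
    simpa [eval_mul, eval_pow] using horth k hk
  have hode := legendre_ode_s13 (L n) n hn hmon hdeg horthJ
  set lc : ℂ[X] := (L n).map (algebraMap ℝ ℂ) with hlc
  have hodeC : derivative ((X ^ 2 - 1 : ℂ[X]) * derivative lc) =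
      C ((n : ℂ) * ((n : ℂ) + 1)) * lc := by
    have h := congrArg (Polynomial.map (algebraMap ℝ ℂ)) hode
    simp only [← derivative_map, Polynomial.map_mul, Polynomial.map_sub, Polynomial.map_pow,
      Polynomial.map_one, map_X, map_C] at h
    rw [← hlc] at h
    have hcast : (algebraMap ℝ ℂ) ((n : ℝ) * ((n : ℝ) + 1)) = (n : ℂ) * ((n : ℂ) + 1) := by
      rw [Complex.coe_algebraMap]
      push_cast
      ring
    rwa [hcast] at h
  set Q : ℂ[X] := (X ^ 2 - 1 : ℂ[X]) * derivative lc with hQ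
  set S : ℂ[X] := C (n : ℂ) * ((X - C ζ) * P n) + C (Q.eval ζ) - Q with hS
  have hS' : derivative S = 0 := by
    apply Polynomial.funext
    intro z
    rw [hS, derivative_sub, derivative_add, derivative_C, hodeC, derivative_C_mul,
      derivative_mul, derivative_sub, derivative_X, derivative_C]
    have h := hPid z
    simp only [eval_sub, eval_add, eval_mul, eval_C, eval_X, eval_zero, sub_zero, one_mul,
      add_zero, zero_mul, zero_sub, zero_add]
    linear_combination (-(n : ℂ)) * h
  have hSc : S = C (S.coeff 0) := eq_C_of_derivative_eq_zero hS'
  have hSζ : S.eval ζ = 0 := by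
    rw [hS]
    simp
  have hS0 : S = 0 := by
    rw [hSc] at hSζ ⊢
    rw [eval_C] at hSζ
    rw [hSζ, map_zero]
  have hz : Q.eval z₀ = Q.eval ζ := by
    have h := congrArg (Polynomial.eval z₀) hS0
    rw [hS] at h
    simp only [eval_sub, eval_add, eval_mul, eval_C, eval_X, eval_zero, hz₀, mul_zero] at h
    linear_combination -h
  have hq : ∀ z : ℂ, Q.eval z = (z ^ 2 - 1) * (derivative lc).eval z := by
    intro z; rw [hQ]; simp
  rw [← hq z₀, ← hq ζ, hz]
end

section
/- Let ζ ∈ ℂ and Δ_ζ = sup_{x ∈ [-1,1]} |ζ - x|. Then for every n ≥ 1, every zero z of the polar Legendre polynomial P_n with pole ζ satisfies |z| ≤ Δ_ζ + 1. -/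
open Polynomial intervalIntegral

lemma poly_ftc (p : Polynomial ℝ) (a b : ℝ) :
    (∫ x in a..b, p.derivative.eval x) = p.eval b - p.eval a := by
  refine integral_eq_sub_of_hasDerivAt (fun x _ => p.hasDerivAt x) ?_
  exact (p.derivative.continuous_aeval).intervalIntegrable a b

noncomputable def pint (p : Polynomial ℝ) : Polynomial ℝ :=
  ∑ k ∈ Finset.range (p.natDegree + 1), C (p.coeff k / (k+1)) * X^(k+1)

lemma derivative_pint (p : Polynomial ℝ) : (pint p).derivative = p := by
  rw [pint, derivative_sum]
  conv_rhs => rw [p.as_sum_range]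
  refine Finset.sum_congr rfl (fun k _ => ?_)
  rw [derivative_C_mul, derivative_X_pow, ← C_mul_X_pow_eq_monomial]
  push_cast
  rw [← mul_assoc, ← C_mul, div_mul_cancel₀]
  positivity


lemma no_root_sign {a b : ℝ} (G : Polynomial ℝ) (h : ∀ t ∈ Set.Ioo a b, ¬ G.IsRoot t)
    {x y : ℝ} (hx : x ∈ Set.Ioo a b) (hy : y ∈ Set.Ioo a b) : 0 ≤ G.eval x * G.eval y := by
  by_contra hneg
  push_neg at hneg
  have h0 : (0:ℝ) ∈ Set.uIcc (G.eval x) (G.eval y) := by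
    rw [Set.mem_uIcc]
    rcases mul_neg_iff.mp hneg with ⟨h1, h2⟩ | ⟨h1, h2⟩
    · exact Or.inr ⟨h2.le, h1.le⟩
    · exact Or.inl ⟨h1.le, h2.le⟩
  obtain ⟨z, hz, hz0⟩ := intermediate_value_uIcc
    (f := fun u => G.eval u) (a := x) (b := y) (G.continuous_aeval.continuousOn) h0
  exact h z (Set.ordConnected_Ioo.uIcc_subset hx hy hz) hz0

lemma even_mult_sign {a b : ℝ} : ∀ (N : ℕ) (G : Polynomial ℝ), G.natDegree ≤ N → G ≠ 0 →
    (∀ t ∈ Set.Ioo a b, Even (G.rootMultiplicity t)) →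
    ∀ x ∈ Set.Ioo a b, ∀ y ∈ Set.Ioo a b, 0 ≤ G.eval x * G.eval y := by
  intro N
  induction N with
  | zero =>
    intro G hdeg _ _ x _ y _
    rw [eq_C_of_natDegree_le_zero hdeg]
    simpa using mul_self_nonneg (G.coeff 0)
  | succ N ih =>
    intro G hdeg hG0 hEven x hx y hy
    by_cases hroot : ∃ t ∈ Set.Ioo a b, G.IsRoot t
    · obtain ⟨t, ht, hrt⟩ := hroot
      set d := G.rootMultiplicity t with hd
      have hdpos : 0 < d := (rootMultiplicity_pos hG0).mpr hrt
      set H := G /ₘ (X - C t)^d with hH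
      have hfac : (X - C t)^d * H = G := pow_mul_divByMonic_rootMultiplicity_eq G t
      have hHt : H.eval t ≠ 0 := eval_divByMonic_pow_rootMultiplicity_ne_zero t hG0
      have hH0 : H ≠ 0 := fun h => hHt (by rw [h]; simp)
      have hXd : ((X : Polynomial ℝ) - C t)^d ≠ 0 := pow_ne_zero _ (X_sub_C_ne_zero t)
      have hdegH : H.natDegree ≤ N := by
        have := natDegree_mul hXd hH0
        rw [hfac] at this
        have hdX : (((X : Polynomial ℝ) - C t)^d).natDegree = d := by
          simp [natDegree_pow]
        omega
      have hHeven : ∀ s ∈ Set.Ioo a b, Even (H.rootMultiplicity s) := by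
        intro s hs
        by_cases hst : s = t
        · subst hst
          rw [rootMultiplicity_eq_zero hHt]
          exact Even.zero
        · have hmul := rootMultiplicity_mul (x := s) (hfac.symm ▸ hG0)
          rw [hfac] at hmul
          have hzero : rootMultiplicity s (((X : Polynomial ℝ) - C t)^d) = 0 := by
            refine rootMultiplicity_eq_zero ?_
            simp [IsRoot, sub_ne_zero.mpr hst]
          have := hEven s hs
          rw [hmul, hzero, zero_add] at this
          exact this
      have key := ih H hdegH hH0 hHeven x hx y hy
      have hEd : Even d := hEven t ht
      have hex : G.eval x = (x - t)^d * H.eval x := by rw [← hfac]; simp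
      have hey : G.eval y = (y - t)^d * H.eval y := by rw [← hfac]; simp
      rw [hex, hey]
      have h1 : 0 ≤ (x - t)^d := hEd.pow_nonneg _
      have h2 : 0 ≤ (y - t)^d := hEd.pow_nonneg _
      calc (0:ℝ) ≤ ((x-t)^d * (y-t)^d) * (H.eval x * H.eval y) :=
            mul_nonneg (mul_nonneg h1 h2) key
        _ = (x - t)^d * H.eval x * ((y - t)^d * H.eval y) := by ring
    · push_neg at hroot
      exact no_root_sign G hroot hx hy
lemma roots_of_ortho (F : Polynomial ℝ) (m : ℕ) (hdeg : F.natDegree = m + 2)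
    (hem1 : F.eval (-1) = 0) (he1 : F.eval 1 = 0)
    (hortho : ∀ k : ℕ, k < m → (∫ x in (-1:ℝ)..1, F.eval x * x ^ k) = 0) :
    F.roots.card = m + 2 ∧ ∀ y ∈ F.roots, y ∈ Set.Icc (-1:ℝ) 1 := by
  classical
  have hF0 : F ≠ 0 := fun h => by simp [h] at hdeg
  -- polynomial orthogonality
  have horthoP : ∀ S : Polynomial ℝ, S.natDegree < m →
      (∫ x in (-1:ℝ)..1, F.eval x * S.eval x) = 0 := by
    intro S hS
    have key : ∀ x : ℝ, F.eval x * S.eval x =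
        ∑ k ∈ Finset.range (S.natDegree + 1), S.coeff k * (F.eval x * x ^ k) := by
      intro x
      conv_lhs => rw [S.eval_eq_sum_range]
      rw [Finset.mul_sum]
      exact Finset.sum_congr rfl fun k _ => by ring
    simp_rw [key]
    rw [intervalIntegral.integral_finset_sum]
    · refine Finset.sum_eq_zero fun k hk => ?_
      rw [intervalIntegral.integral_const_mul, hortho k (by
        simp only [Finset.mem_range] at hk; omega), mul_zero]
    · intro k _
      exact (Continuous.intervalIntegrable
        (continuous_const.mul (F.continuous.mul (continuous_pow k))) _ _)
  set T : Finset ℝ := F.roots.toFinset.filter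
    (fun t => t ∈ Set.Ioo (-1:ℝ) 1 ∧ Odd (F.rootMultiplicity t)) with hT
  have hTIoo : ∀ t ∈ T, t ∈ Set.Ioo (-1:ℝ) 1 := by
    intro t ht
    exact ((Finset.mem_filter.mp ht).2).1
  -- Step 1 : m ≤ T.card
  have hTcard : m ≤ T.card := by
    by_contra hlt
    push_neg at hlt
    set S : Polynomial ℝ := ∏ t ∈ T, (X - C t) with hSdef
    have hS0 : S ≠ 0 := by
      refine Finset.prod_ne_zero_iff.mpr fun t _ => X_sub_C_ne_zero t
    have hSdeg : S.natDegree = T.card := by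
      rw [hSdef, natDegree_prod _ _ (fun t _ => X_sub_C_ne_zero t)]
      simp [natDegree_X_sub_C]
    have hSroots : S.roots = T.val := roots_prod_X_sub_C T
    have hint0 : (∫ x in (-1:ℝ)..1, F.eval x * S.eval x) = 0 :=
      horthoP S (by omega)
    set G : Polynomial ℝ := F * S with hG
    have hG0 : G ≠ 0 := mul_ne_zero hF0 hS0
    have hSmult : ∀ t : ℝ, S.rootMultiplicity t = if t ∈ T then 1 else 0 := by
      intro t
      rw [← count_roots, hSroots]
      by_cases ht : t ∈ T
      · rw [if_pos ht]
        exact Multiset.count_eq_one_of_mem T.nodup ht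
      · rw [if_neg ht]
        exact Multiset.count_eq_zero_of_notMem ht
    have heven : ∀ t ∈ Set.Ioo (-1:ℝ) 1, Even (G.rootMultiplicity t) := by
      intro t ht
      rw [hG, rootMultiplicity_mul (hG ▸ hG0), hSmult t]
      by_cases htT : t ∈ T
      · have hodd : Odd (F.rootMultiplicity t) := ((Finset.mem_filter.mp htT).2).2
        simpa [htT] using hodd.add_one
      · simp only [htT, if_false, add_zero]
        by_contra hoddF
        rw [Nat.not_even_iff_odd] at hoddF
        have hne : F.rootMultiplicity t ≠ 0 := by
          intro h0
          rw [h0, Nat.odd_iff] at hoddF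
          omega
        have hroot : F.IsRoot t := by
          by_contra hnr
          exact hne (rootMultiplicity_eq_zero hnr)
        exact htT (Finset.mem_filter.mpr ⟨Multiset.mem_toFinset.mpr
          ((mem_roots hF0).mpr hroot), ht, hoddF⟩)
    -- pick a point where G doesn't vanish
    have hfin : {x : ℝ | G.IsRoot x}.Finite := Polynomial.finite_setOf_isRoot hG0
    have hinf : (Set.Ioo (-1:ℝ) 1 \ {x : ℝ | G.IsRoot x}).Infinite :=
      (Set.Ioo_infinite (by norm_num)).diff hfin
    obtain ⟨x₀, hx₀⟩ := hinf.nonempty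
    have hx₀Ioo : x₀ ∈ Set.Ioo (-1:ℝ) 1 := hx₀.1
    have hx₀ne : G.eval x₀ ≠ 0 := hx₀.2
    have hsign := even_mult_sign G.natDegree G le_rfl hG0 heven
    set c : ℝ := if 0 < G.eval x₀ then 1 else -1 with hc
    have hcG : 0 < c * G.eval x₀ := by
      rcases lt_trichotomy (G.eval x₀) 0 with h | h | h
      · rw [hc, if_neg (by linarith)]; linarith
      · exact absurd h hx₀ne
      · rw [hc, if_pos h]; linarith
    have hnonneg : ∀ x ∈ Set.Ioo (-1:ℝ) 1, 0 ≤ c * G.eval x := by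
      intro x hx
      have := hsign x₀ hx₀Ioo x hx
      rcases lt_trichotomy (G.eval x₀) 0 with h | h | h
      · rw [hc, if_neg (by linarith)]
        nlinarith
      · exact absurd h hx₀ne
      · rw [hc, if_pos h]
        nlinarith
    have hpos : 0 < ∫ x in (-1:ℝ)..1, c * G.eval x := by
      refine integral_pos (by norm_num) (Continuous.continuousOn (continuous_const.mul G.continuous)) ?_
        ⟨x₀, Set.mem_Icc_of_Ioo hx₀Ioo, hcG⟩
      intro x hx
      rcases eq_or_lt_of_le hx.2 with h | h
      · have : G.eval x = 0 := by
          rw [hG]; subst h; simp [he1]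
        rw [this, mul_zero]
      · exact hnonneg x ⟨hx.1, h⟩
    have hzero : (∫ x in (-1:ℝ)..1, c * G.eval x) = 0 := by
      rw [intervalIntegral.integral_const_mul,
        intervalIntegral.integral_congr (g := fun x => F.eval x * S.eval x)
          (fun x _ => by rw [hG, eval_mul]), hint0, mul_zero]
    linarith
  -- Step 2
  set T' : Finset ℝ := insert (-1:ℝ) (insert 1 T) with hT'
  have hm1T : (-1:ℝ) ∉ insert (1:ℝ) T := by
    intro h
    rcases Finset.mem_insert.mp h with h | h
    · norm_num at h
    · have := hTIoo _ h; simp at this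
  have h1T : (1:ℝ) ∉ T := by
    intro h
    have := hTIoo _ h; simp at this
  have hT'card : T'.card = T.card + 2 := by
    rw [hT', Finset.card_insert_of_notMem hm1T, Finset.card_insert_of_notMem h1T]
  have hrootT' : ∀ a ∈ T', F.IsRoot a := by
    intro a ha
    rcases Finset.mem_insert.mp ha with h | h
    · rw [h]; exact hem1
    rcases Finset.mem_insert.mp h with h | h
    · rw [h]; exact he1
    · exact (mem_roots hF0).mp (Multiset.mem_toFinset.mp (Finset.mem_filter.mp h).1)
  have hle : T'.val ≤ F.roots := by
    rw [Multiset.le_iff_count]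
    intro a
    by_cases ha : a ∈ T'
    · have h1 : T'.val.count a = 1 := Multiset.count_eq_one_of_mem T'.nodup ha
      rw [h1, count_roots]
      exact (rootMultiplicity_pos hF0).mpr (hrootT' a ha)
    · rw [Multiset.count_eq_zero_of_notMem (by simpa using ha)]
      omega
  have hcard2 : F.roots.card ≤ m + 2 := hdeg ▸ F.card_roots'
  have hv : Multiset.card T'.val = T'.card := rfl
  have hcard1 : m + 2 ≤ F.roots.card := by
    have h1 := Multiset.card_le_card hle
    omega
  have heq : F.roots = T'.val := (Multiset.eq_of_le_of_card_le hle (by omega)).symm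
  refine ⟨by omega, ?_⟩
  intro y hy
  rw [heq] at hy
  rcases Finset.mem_insert.mp hy with h | h
  · rw [h]; constructor <;> norm_num
  rcases Finset.mem_insert.mp h with h | h
  · rw [h]; constructor <;> norm_num
  · exact Set.mem_Icc_of_Ioo (hTIoo _ h)
lemma pint_coeff (q : Polynomial ℝ) (k : ℕ) :
    (pint q).coeff (k+1) = q.coeff k / (k+1) := by
  rw [pint, finset_sum_coeff]
  simp only [coeff_C_mul, coeff_X_pow]
  by_cases hk : k ∈ Finset.range (q.natDegree + 1)
  · rw [Finset.sum_eq_single k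
      (fun j _ hj => by simp [show ¬(k+1 = j+1) by omega, show ¬(j+1 = k+1) by omega, show k ≠ j by omega])
      (fun h => absurd hk h)]
    simp
  · have h1 : q.coeff k = 0 := by
      apply coeff_eq_zero_of_natDegree_lt
      simp only [Finset.mem_range] at hk
      omega
    rw [h1, zero_div]
    refine Finset.sum_eq_zero fun j hj => ?_
    simp only [Finset.mem_range] at hj hk
    simp [show ¬(k+1 = j+1) by omega, show ¬(j+1 = k+1) by omega, show k ≠ j by omega]

lemma pint_natDegree_le (q : Polynomial ℝ) : (pint q).natDegree ≤ q.natDegree + 1 := by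
  refine (natDegree_sum_le _ _).trans ?_
  rw [Finset.fold_max_le]
  refine ⟨by omega, fun j hj => ?_⟩
  refine (natDegree_C_mul_X_pow_le _ _).trans ?_
  simp only [Finset.mem_range] at hj
  omega

/-- The normalized antiderivative `Φ` of a monic degree-`n` polynomial. -/
noncomputable def Phi (q : Polynomial ℝ) : Polynomial ℝ :=
  C ((q.natDegree : ℝ) + 1) * (pint q - C ((pint q).eval (-1)))

lemma Phi_derivative (q : Polynomial ℝ) :
    (Phi q).derivative = C ((q.natDegree : ℝ) + 1) * q := by
  rw [Phi, derivative_C_mul, derivative_sub, derivative_C, sub_zero, derivative_pint]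

lemma Phi_eval_neg_one (q : Polynomial ℝ) : (Phi q).eval (-1) = 0 := by
  simp [Phi]

lemma Phi_monic (q : Polynomial ℝ) (hq : q.Monic) : (Phi q).Monic := by
  set n := q.natDegree with hn
  have hne : ((n : ℝ) + 1) ≠ 0 := by positivity
  have hcoeff : (Phi q).coeff (n+1) = 1 := by
    rw [Phi, coeff_C_mul, coeff_sub, coeff_C, if_neg (by omega), sub_zero, pint_coeff,
      hq.coeff_natDegree]
    field_simp
    rfl
  refine monic_of_natDegree_le_of_coeff_eq_one (n+1) ?_ hcoeff
  refine (natDegree_C_mul_le _ _).trans ?_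
  refine (natDegree_sub_le _ _).trans ?_
  simp only [natDegree_C, max_le_iff]
  exact ⟨pint_natDegree_le q, by omega⟩

lemma Phi_natDegree (q : Polynomial ℝ) (hq : q.Monic) (h0 : q ≠ 0) :
    (Phi q).natDegree = q.natDegree + 1 := by
  set n := q.natDegree with hn
  have hne : ((n : ℝ) + 1) ≠ 0 := by positivity
  have hcoeff : (Phi q).coeff (n+1) = 1 := by
    rw [Phi, coeff_C_mul, coeff_sub, coeff_C, if_neg (by omega), sub_zero, pint_coeff,
      hq.coeff_natDegree]
    field_simp
    rfl
  refine le_antisymm ?_ (le_natDegree_of_ne_zero (by rw [hcoeff]; norm_num))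
  refine (natDegree_C_mul_le _ _).trans ?_
  refine (natDegree_sub_le _ _).trans ?_
  simp only [natDegree_C, max_le_iff]
  exact ⟨pint_natDegree_le q, by omega⟩
-- multiset product comparison lemmas
lemma multiset_prod_le (M : Multiset ℝ) (f : ℝ → ℝ) (B : ℝ)
    (h : ∀ x ∈ M, 0 ≤ f x ∧ f x ≤ B) :
    (M.map f).prod ≤ B ^ Multiset.card M := by
  induction M using Multiset.induction_on with
  | empty => simp
  | cons a M ih =>
    simp only [Multiset.map_cons, Multiset.prod_cons, Multiset.card_cons, pow_succ']
    have ha := h a (Multiset.mem_cons_self a M)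
    refine mul_le_mul ha.2 (ih fun x hx => h x (Multiset.mem_cons_of_mem hx)) ?_ (ha.1.trans ha.2)
    exact Multiset.prod_nonneg (by
      intro x hx
      obtain ⟨y, hy, rfl⟩ := Multiset.mem_map.mp hx
      exact (h y (Multiset.mem_cons_of_mem hy)).1)

lemma le_multiset_prod (M : Multiset ℝ) (f : ℝ → ℝ) (B : ℝ) (hB : 0 ≤ B)
    (h : ∀ x ∈ M, B ≤ f x) :
    B ^ Multiset.card M ≤ (M.map f).prod := by
  induction M using Multiset.induction_on with
  | empty => simp
  | cons a M ih =>
    simp only [Multiset.map_cons, Multiset.prod_cons, Multiset.card_cons, pow_succ']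
    refine mul_le_mul (h a (Multiset.mem_cons_self a M))
      (ih fun x hx => h x (Multiset.mem_cons_of_mem hx)) (pow_nonneg hB _) ?_
    exact hB.trans (h a (Multiset.mem_cons_self a M))

/-- All zeros of `P_n` (for `n ≥ 1`) satisfy `|z| ≤ Δ_ζ + 1`,
where `Δ_ζ = sup_{x ∈ [-1,1]} |ζ - x|`. -/
theorem polar_legendre_zeros_bounded
    (L : ℕ → Polynomial ℝ) (ζ : ℂ) (P : ℕ → Polynomial ℂ)
    (hL : IsMonicLegendre L) (hP : IsPolarLegendre L ζ P)
    (n : ℕ) (hn : 1 ≤ n) (z : ℂ) (hz : (P n).eval z = 0) :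
    ‖z‖ ≤ (⨆ x : Set.Icc (-1:ℝ) 1, ‖ζ - (x : ℝ)‖) + 1 := by
  classical
  obtain ⟨hmon, hdegL, hortho⟩ := hL n
  obtain ⟨-, -, hPrel⟩ := hP n
  set Δ : ℝ := ⨆ x : Set.Icc (-1:ℝ) 1, ‖ζ - (x : ℝ)‖ with hΔdef
  -- Δ facts
  have hbdd : BddAbove (Set.range fun x : Set.Icc (-1:ℝ) 1 => ‖ζ - (x : ℝ)‖) := by
    have hcont : ContinuousOn (fun t : ℝ => ‖ζ - (t:ℂ)‖) (Set.Icc (-1) 1) :=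
      (continuous_norm.comp (continuous_const.sub Complex.continuous_ofReal)).continuousOn
    refine BddAbove.mono ?_ (IsCompact.bddAbove_image isCompact_Icc hcont)
    rintro r ⟨x, rfl⟩
    exact ⟨x.1, x.2, rfl⟩
  have hΔ : ∀ y ∈ Set.Icc (-1:ℝ) 1, ‖ζ - (y:ℂ)‖ ≤ Δ := by
    intro y hy
    exact le_ciSup hbdd (⟨y, hy⟩ : Set.Icc (-1:ℝ) 1)
  have hΔ1 : (1:ℝ) ≤ Δ := by
    have h1 := hΔ 1 (by norm_num)
    have h2 := hΔ (-1) (by norm_num)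
    have e1 : (ζ - ((-1:ℝ):ℂ)) + (-(ζ - ((1:ℝ):ℂ))) = 2 := by push_cast; ring
    have e3 := norm_add_le (ζ - ((-1:ℝ):ℂ)) (-(ζ - ((1:ℝ):ℂ)))
    rw [e1, norm_neg] at e3
    have e4 : ‖(2:ℂ)‖ = 2 := by simp
    linarith
  have hΔ0 : (0:ℝ) ≤ Δ := by linarith
  -- the primitive
  set q := L n with hq
  set Φ := Phi q with hΦdef
  have hΦmon : Φ.Monic := Phi_monic q hmon
  have hΦdeg : Φ.natDegree = n + 1 := by rw [hΦdef, Phi_natDegree q hmon hmon.ne_zero, hdegL]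
  have hΦder : Φ.derivative = C ((n:ℝ)+1) * q := by
    rw [hΦdef, Phi_derivative, hdegL]
  have hΦm1 : Φ.eval (-1) = 0 := Phi_eval_neg_one q
  have hΦ1 : Φ.eval 1 = 0 := by
    have h := poly_ftc Φ (-1) 1
    rw [hΦm1, sub_zero] at h
    rw [← h]
    rw [intervalIntegral.integral_congr
      (g := fun x => ((n:ℝ)+1) * (q.eval x * x ^ 0)) (fun x _ => by rw [hΦder]; simp)]
    rw [intervalIntegral.integral_const_mul, hortho 0 (by omega), mul_zero]
  have hΦortho : ∀ k : ℕ, k < n - 1 → (∫ x in (-1:ℝ)..1, Φ.eval x * x ^ k) = 0 := by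
    intro k hk
    have hkne : ((k:ℝ)+1) ≠ 0 := by positivity
    set W : Polynomial ℝ := Φ * (C (1/((k:ℝ)+1)) * X^(k+1)) with hW
    have hWder : ∀ x : ℝ, W.derivative.eval x =
        (((n:ℝ)+1)/((k:ℝ)+1)) * (q.eval x * x^(k+1)) + Φ.eval x * x^k := by
      intro x
      rw [hW, derivative_mul, hΦder]
      simp only [derivative_C_mul, derivative_X_pow, eval_add, eval_mul, eval_C, eval_pow,
        eval_X, Nat.cast_add, Nat.cast_one, Nat.add_sub_cancel]
      field_simp
    have hW1 : W.eval 1 = 0 := by rw [hW]; simp [hΦ1]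
    have hWm1 : W.eval (-1) = 0 := by rw [hW]; simp [hΦm1]
    have hFTC := poly_ftc W (-1) 1
    rw [hW1, hWm1, sub_zero] at hFTC
    rw [intervalIntegral.integral_congr
      (g := fun x => (((n:ℝ)+1)/((k:ℝ)+1)) * (q.eval x * x^(k+1)) + Φ.eval x * x^k)
      (fun x _ => hWder x)] at hFTC
    rw [intervalIntegral.integral_add
      (f := fun x => (((n:ℝ)+1)/((k:ℝ)+1)) * (q.eval x * x^(k+1))) (g := fun x => Φ.eval x * x^k)
      ((Continuous.intervalIntegrable (continuous_const.mul
        (q.continuous.mul (continuous_pow (k+1)))) _ _))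
      ((Continuous.intervalIntegrable (Φ.continuous.mul (continuous_pow k)) _ _))] at hFTC
    rw [intervalIntegral.integral_const_mul, hortho (k+1) (by omega), mul_zero, zero_add] at hFTC
    exact hFTC
  -- root localisation
  obtain ⟨hcard, hmem⟩ := roots_of_ortho Φ (n-1) (by rw [hΦdeg]; omega) hΦm1 hΦ1 hΦortho
  have hfac : (Φ.roots.map fun a => X - C a).prod = Φ :=
    prod_multiset_X_sub_C_of_monic_of_roots_card_eq hΦmon (by rw [hcard, hΦdeg]; omega)
  -- complex side
  set θ : ℝ →+* ℂ := algebraMap ℝ ℂ with hθ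
  set Φc : Polynomial ℂ := Φ.map θ with hΦc
  have hΦceval : ∀ w : ℂ,
      Φc.eval w = (Multiset.map (fun a : ℝ => w - (a : ℂ)) Φ.roots).prod := by
    intro w
    rw [hΦc]
    conv_lhs => rw [← hfac]
    rw [Polynomial.map_multiset_prod, Multiset.map_map, eval_multiset_prod, Multiset.map_map]
    refine congrArg Multiset.prod (Multiset.map_congr rfl fun a _ => ?_)
    simp [hθ, Function.comp]
  have hΦcder : ∀ w : ℂ, Φc.derivative.eval w =
      ((n:ℂ)+1) * ((L n).map (algebraMap ℝ ℂ)).eval w := by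
    intro w
    rw [hΦc, Polynomial.derivative_map, hΦder]
    rw [Polynomial.map_mul, Polynomial.map_C]
    simp [hθ, hq]
  set D : Polynomial ℂ := (X - C ζ) * (P n) - Φc with hD
  have hDder : D.derivative = 0 := by
    apply Polynomial.funext
    intro w
    rw [hD]
    simp only [derivative_sub, derivative_mul, derivative_X, derivative_C, sub_zero, one_mul,
      eval_sub, eval_add, eval_mul, eval_X, eval_C, eval_zero]
    rw [hΦcder w, ← hPrel w]
    ring
  have hD0 : D.natDegree = 0 := natDegree_eq_zero_of_derivative_eq_zero hDder
  have hDC : D = C (D.coeff 0) := Polynomial.eq_C_of_natDegree_eq_zero hD0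
  have hevD : D.eval z = D.eval ζ := by
    conv_lhs => rw [hDC]
    conv_rhs => rw [hDC]
    simp
  have hkey : Φc.eval z = Φc.eval ζ := by
    rw [hD] at hevD
    simp only [eval_sub, eval_mul, eval_X, eval_C, hz, mul_zero, sub_self, zero_mul] at hevD
    linear_combination -hevD
  by_contra hcon
  push_neg at hcon
  have hcardpos : Multiset.card Φ.roots = n + 1 := by rw [hcard]; omega
  have hprodeq : (Multiset.map (fun a : ℝ => ‖z - (a:ℂ)‖) Φ.roots).prod
      = (Multiset.map (fun a : ℝ => ‖ζ - (a:ℂ)‖) Φ.roots).prod := by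
    have h2 : ‖(Multiset.map (fun a : ℝ => z - (a:ℂ)) Φ.roots).prod‖
        = ‖(Multiset.map (fun a : ℝ => ζ - (a:ℂ)) Φ.roots).prod‖ := by
      rw [← hΦceval, ← hΦceval, hkey]
    have hnp : ∀ m : Multiset ℂ, ‖m.prod‖ = (m.map (fun w => ‖w‖)).prod :=
      fun m => map_multiset_prod (normHom : ℂ →*₀ ℝ) m
    rw [hnp, hnp, Multiset.map_map, Multiset.map_map] at h2
    simpa [Function.comp] using h2
  have hub : (Multiset.map (fun a : ℝ => ‖ζ - (a:ℂ)‖) Φ.roots).prod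
      ≤ Δ ^ (n+1) := by
    rw [← hcardpos]
    exact multiset_prod_le _ _ _ fun x hx => ⟨norm_nonneg _, hΔ x (hmem x hx)⟩
  have hlb : (‖z‖ - 1) ^ (n+1)
      ≤ (Multiset.map (fun a : ℝ => ‖z - (a:ℂ)‖) Φ.roots).prod := by
    rw [← hcardpos]
    refine le_multiset_prod _ _ _ (by linarith) fun x hx => ?_
    have hx1 : |x| ≤ 1 := by
      have := hmem x hx
      rw [Set.mem_Icc] at this
      exact abs_le.mpr this
    have habs : ‖((x:ℝ):ℂ)‖ = |x| := by simp
    have htri : ‖z‖ ≤ ‖z - (x:ℂ)‖ + ‖((x:ℝ):ℂ)‖ := by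
      have := norm_add_le (z - (x:ℂ)) ((x:ℝ):ℂ)
      simpa using this
    linarith
  have hpow : Δ ^ (n+1) < (‖z‖ - 1) ^ (n+1) :=
    pow_lt_pow_left₀ (by linarith) hΔ0 (by omega)
  have : Δ ^ (n+1) < Δ ^ (n+1) := lt_of_lt_of_le (lt_of_lt_of_le hpow hlb) (hprodeq ▸ hub)
  exact absurd this (lt_irrefl _)
end

section
/- Let ζ ∈ ℂ, Δ_ζ = sup_{x ∈ [-1,1]} |ζ - x|, and let K be a compact subset of {z ∈ ℂ : |z| > Δ_ζ + 1}. Set d_{ζ,K} = inf{ |z - w| : z ∈ K, |w| = Δ_ζ + 1 }. Then for every n ≥ 2 and every z ∈ K one has L_n′(z) ≠ 0 and |L_n′(ζ)/L_n′(z)| < (Δ_ζ/(d_{ζ,K} + Δ_ζ))^{n-1}; consequently L_n′(ζ)/L_n′(z) → 0 as n → ∞, uniformly on K. -/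
open Polynomial

lemma no_root_sign_s17 (g : Polynomial ℝ) (h : ∀ t ∈ Set.Ioo (-1:ℝ) 1, g.eval t ≠ 0) :
    (∀ x ∈ Set.Ioo (-1:ℝ) 1, 0 ≤ g.eval x) ∨ (∀ x ∈ Set.Ioo (-1:ℝ) 1, g.eval x ≤ 0) := by
  by_contra hc
  push_neg at hc
  obtain ⟨⟨x, hx, hxneg⟩, ⟨y, hy, hypos⟩⟩ := hc
  have key : ∀ a b : ℝ, a ∈ Set.Ioo (-1:ℝ) 1 → b ∈ Set.Ioo (-1:ℝ) 1 → a < b →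
      g.eval a < 0 → 0 < g.eval b → False := by
    intro a b ha hb hab hga hgb
    have hcont : ContinuousOn (fun x => g.eval x) (Set.Icc a b) :=
      (g.continuous_aeval).continuousOn
    have : (0:ℝ) ∈ Set.Ioo (g.eval a) (g.eval b) := ⟨hga, hgb⟩
    have hsub := intermediate_value_Ioo hab.le hcont this
    obtain ⟨t, ht, hgt⟩ := hsub
    exact h t ⟨lt_trans ha.1 ht.1, lt_trans ht.2 hb.2⟩ hgt
  rcases lt_trichotomy x y with hlt | heq | hgt
  · exact key x y hx hy hlt hxneg hypos
  · subst heq; exact absurd hxneg (not_lt.mpr hypos.le)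
  · -- y < x, eval y > 0, eval x < 0 : intermediate value downward
    have hcont : ContinuousOn (fun x => g.eval x) (Set.Icc y x) :=
      (g.continuous_aeval).continuousOn
    have : (0:ℝ) ∈ Set.Ioo (g.eval x) (g.eval y) := ⟨hxneg, hypos⟩
    obtain ⟨t, ht, hgt⟩ := intermediate_value_Ioo' hgt.le hcont this
    exact h t ⟨lt_trans hy.1 ht.1, lt_trans ht.2 hx.2⟩ hgt

lemma sign_const : ∀ (N : ℕ) (g : Polynomial ℝ), g.natDegree ≤ N → g ≠ 0 →
    (∀ t ∈ Set.Ioo (-1:ℝ) 1, Even (g.rootMultiplicity t)) →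
    (∀ x ∈ Set.Ioo (-1:ℝ) 1, 0 ≤ g.eval x) ∨ (∀ x ∈ Set.Ioo (-1:ℝ) 1, g.eval x ≤ 0) := by
  intro N
  induction N using Nat.strong_induction_on with
  | _ N ih =>
    intro g hdeg hg hmult
    by_cases hroot : ∃ t ∈ Set.Ioo (-1:ℝ) 1, g.eval t = 0
    · obtain ⟨t, ht, hgt⟩ := hroot
      have hpos : 0 < g.rootMultiplicity t := (rootMultiplicity_pos hg).mpr hgt
      have heven := hmult t ht
      have h2 : 2 ≤ g.rootMultiplicity t := by
        rcases heven with ⟨k, hk⟩; omega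
      have hdvd : (X - C t) ^ 2 ∣ g :=
        dvd_trans (pow_dvd_pow _ h2) (g.pow_rootMultiplicity_dvd t)
      obtain ⟨h', rfl⟩ := hdvd
      have hX : ((X - C t : Polynomial ℝ) ^ 2) ≠ 0 := pow_ne_zero _ (X_sub_C_ne_zero t)
      have hh : h' ≠ 0 := fun h0 => hg (by rw [h0, mul_zero])
      have hdegh : h'.natDegree < N := by
        have := natDegree_mul hX hh
        have h2d : ((X - C t : Polynomial ℝ) ^ 2).natDegree = 2 := by
          simp [natDegree_pow]
        rw [h2d] at this
        have h2N : 2 ≤ N := by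
          have : 2 ≤ ((X - C t)^2 * h').natDegree := by rw [this]; omega
          omega
        omega
      have hmulth : ∀ s ∈ Set.Ioo (-1:ℝ) 1, Even (h'.rootMultiplicity s) := by
        intro s hs
        have := hmult s hs
        rw [rootMultiplicity_mul (hg)] at this
        have hXs : rootMultiplicity s ((X - C t : Polynomial ℝ) ^ 2) = if s = t then 2 else 0 := by
          classical
          have : ((X - C t : Polynomial ℝ) ^ 2) = (X - C t) * (X - C t) := sq (X - C t)
          rw [this, rootMultiplicity_mul (by simpa [← this] using hX), rootMultiplicity_X_sub_C]
          split <;> simp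
        rw [hXs] at this
        split at this
        · rcases this with ⟨k, hk⟩; exact ⟨k - 1, by omega⟩
        · simpa using this
      rcases ih h'.natDegree hdegh h' le_rfl hh hmulth with hge | hle
      · left; intro x hx
        have := hge x hx
        simp only [eval_mul, eval_pow, eval_sub, eval_X, eval_C]
        positivity
      · right; intro x hx
        have := hle x hx
        simp only [eval_mul, eval_pow, eval_sub, eval_X, eval_C]
        exact mul_nonpos_of_nonneg_of_nonpos (sq_nonneg _) this
    · push_neg at hroot
      exact no_root_sign_s17 g hroot

lemma int_pos (g : Polynomial ℝ) (hg : g ≠ 0)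
    (h : ∀ x ∈ Set.Ioo (-1:ℝ) 1, 0 ≤ g.eval x) :
    0 < ∫ x in (-1:ℝ)..1, g.eval x := by
  -- nonneg on the closed interval
  have hIcc : ∀ x ∈ Set.Icc (-1:ℝ) 1, 0 ≤ g.eval x := by
    have hcl : IsClosed {x : ℝ | 0 ≤ g.eval x} :=
      isClosed_le continuous_const (g.continuous_aeval)
    have : Set.Icc (-1:ℝ) 1 ⊆ {x : ℝ | 0 ≤ g.eval x} := by
      rw [← closure_Ioo (by norm_num : (-1:ℝ) ≠ 1)]
      exact hcl.closure_subset_iff.mpr h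
    exact fun x hx => this hx
  -- pick a non-root in the open interval
  have hfin : {x : ℝ | g.IsRoot x}.Finite := Polynomial.finite_setOf_isRoot hg
  have hinf : (Set.Ioo (-1:ℝ) 1).Infinite := Set.Ioo_infinite (by norm_num)
  obtain ⟨x0, hx0, hx0r⟩ := (hinf.diff hfin).nonempty
  have hx0pos : 0 < g.eval x0 := lt_of_le_of_ne (h x0 hx0) (fun he => hx0r (by simp [IsRoot, ← he]))
  -- neighborhood where positive
  have hev : ∀ᶠ y in nhds x0, 0 < g.eval y :=
    (continuous_const.continuousAt (x := x0)).eventually_lt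
      ((g.continuous_aeval).continuousAt) hx0pos
  obtain ⟨ε, hε, hball⟩ := Metric.eventually_nhds_iff_ball.mp hev
  set c := max (-1) (x0 - ε/2) with hc
  set d := min 1 (x0 + ε/2) with hd
  have hcd : c < d := by
    rcases hx0 with ⟨h1, h2⟩
    simp only [hc, hd, max_lt_iff, lt_min_iff]
    constructor
    · constructor <;> [linarith; linarith]
    · constructor <;> [linarith; linarith]
  have hcx : -1 ≤ c := le_max_left _ _
  have hdx : d ≤ 1 := min_le_left _ _
  have hposcd : ∀ y ∈ Set.Ioo c d, 0 < g.eval y := by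
    intro y hy
    apply hball
    rw [Metric.mem_ball, Real.dist_eq, abs_lt]
    have h1 : x0 - ε/2 ≤ c := le_max_right _ _
    have h2 : d ≤ x0 + ε/2 := min_le_right _ _
    constructor <;> [linarith [hy.1]; linarith [hy.2]]
  have hint : ∀ a b : ℝ, IntervalIntegrable (fun x => g.eval x) MeasureTheory.volume a b :=
    fun a b => (g.continuous_aeval).intervalIntegrable a b
  have hmid : 0 < ∫ x in c..d, g.eval x :=
    intervalIntegral.intervalIntegral_pos_of_pos_on (hint c d) hposcd hcd
  have hleft : 0 ≤ ∫ x in (-1:ℝ)..c, g.eval x := by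
    apply intervalIntegral.integral_nonneg hcx
    intro u hu; exact hIcc u ⟨hu.1, le_trans hu.2 (le_trans hcd.le hdx)⟩
  have hright : 0 ≤ ∫ x in d..(1:ℝ), g.eval x := by
    apply intervalIntegral.integral_nonneg hdx
    intro u hu; exact hIcc u ⟨le_trans (le_trans hcx hcd.le) hu.1, hu.2⟩
  have hsplit : (∫ x in (-1:ℝ)..1, g.eval x) =
      (∫ x in (-1:ℝ)..c, g.eval x) + (∫ x in c..d, g.eval x) + (∫ x in d..(1:ℝ), g.eval x) := by
    rw [intervalIntegral.integral_add_adjacent_intervals (hint _ _) (hint _ _),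
      intervalIntegral.integral_add_adjacent_intervals (hint _ _) (hint _ _)]
  rw [hsplit]
  linarith

lemma orth_poly (p q : Polynomial ℝ) (n : ℕ) (hq : q.natDegree < n)
    (horth : ∀ k, k < n → (∫ x in (-1:ℝ)..1, p.eval x * x ^ k) = 0) :
    (∫ x in (-1:ℝ)..1, p.eval x * q.eval x) = 0 := by
  have hev : ∀ x : ℝ, p.eval x * q.eval x =
      ∑ k ∈ Finset.range n, q.coeff k * (p.eval x * x ^ k) := by
    intro x
    rw [eval_eq_sum_range' hq, Finset.mul_sum]
    congr 1
    ext k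
    ring
  have hint : ∀ k : ℕ, IntervalIntegrable (fun x => q.coeff k * (p.eval x * x ^ k))
      MeasureTheory.volume (-1:ℝ) 1 := by
    intro k
    exact (Continuous.mul continuous_const
      ((p.continuous_aeval).mul (continuous_pow k))).intervalIntegrable _ _
  calc (∫ x in (-1:ℝ)..1, p.eval x * q.eval x)
      = ∫ x in (-1:ℝ)..1, ∑ k ∈ Finset.range n, q.coeff k * (p.eval x * x ^ k) := by
        simp_rw [hev]
    _ = ∑ k ∈ Finset.range n, ∫ x in (-1:ℝ)..1, q.coeff k * (p.eval x * x ^ k) :=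
        intervalIntegral.integral_finset_sum (fun k _ => hint k)
    _ = 0 := by
        apply Finset.sum_eq_zero
        intro k hk
        rw [intervalIntegral.integral_const_mul, horth k (Finset.mem_range.mp hk), mul_zero]

lemma legendre_roots_s17 (n : ℕ) (hn : 1 ≤ n) (p : Polynomial ℝ) (hm : p.Monic)
    (hd : p.natDegree = n)
    (horth : ∀ k, k < n → (∫ x in (-1:ℝ)..1, p.eval x * x ^ k) = 0) :
    ∃ T : Finset ℝ, T.card = n ∧ (↑T : Set ℝ) ⊆ Set.Ioo (-1:ℝ) 1 ∧
      p = ∏ t ∈ T, (X - C t) := by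
  classical
  have hp0 : p ≠ 0 := hm.ne_zero
  set T : Finset ℝ := p.roots.toFinset.filter
      (fun t => t ∈ Set.Ioo (-1:ℝ) 1 ∧ ¬ Even (p.rootMultiplicity t)) with hT
  set q : Polynomial ℝ := ∏ t ∈ T, (X - C t) with hq
  have hqm : q.Monic := monic_prod_of_monic _ _ (fun t _ => monic_X_sub_C t)
  have hq0 : q ≠ 0 := hqm.ne_zero
  have hg0 : p * q ≠ 0 := mul_ne_zero hp0 hq0
  have hqdeg : q.natDegree = T.card := by
    rw [hq, natDegree_prod _ _ (fun t _ => X_sub_C_ne_zero t)]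
    simp
  have hqmult : ∀ s : ℝ, q.rootMultiplicity s = if s ∈ T then 1 else 0 := by
    intro s
    rw [← count_roots, hq, roots_prod_X_sub_C]
    by_cases hs : s ∈ T
    · rw [if_pos hs]
      exact Multiset.count_eq_one_of_mem T.nodup hs
    · rw [if_neg hs]
      exact Multiset.count_eq_zero_of_notMem (by simpa using hs)
  -- multiplicities of p*q are even on Ioo
  have heven : ∀ t ∈ Set.Ioo (-1:ℝ) 1, Even ((p * q).rootMultiplicity t) := by
    intro t ht
    rw [rootMultiplicity_mul hg0, hqmult t]
    by_cases hE : Even (p.rootMultiplicity t)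
    · have : t ∉ T := by
        intro hmem
        rw [hT, Finset.mem_filter] at hmem
        exact hmem.2.2 hE
      simp [this, hE]
    · have hroot : p.IsRoot t := by
        by_contra hr
        exact hE (by simp [rootMultiplicity_eq_zero hr])
      have : t ∈ T := by
        rw [hT, Finset.mem_filter, Multiset.mem_toFinset, mem_roots hp0]
        exact ⟨hroot, ht, hE⟩
      simp only [this, if_true]
      rcases Nat.even_or_odd (p.rootMultiplicity t) with h | h
      · exact absurd h hE
      · rcases h with ⟨k, hk⟩; exact ⟨k + 1, by omega⟩
  -- T.card ≥ n via sign argument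
  have hcard_le : T.card ≤ n := by
    calc T.card ≤ p.roots.toFinset.card := Finset.card_filter_le _ _
      _ ≤ Multiset.card p.roots := Multiset.toFinset_card_le _
      _ ≤ p.natDegree := p.card_roots'
      _ = n := hd
  have hcard : T.card = n := by
    by_contra hne
    have hlt : T.card < n := lt_of_le_of_ne hcard_le hne
    have hzero : (∫ x in (-1:ℝ)..1, p.eval x * q.eval x) = 0 :=
      orth_poly p q n (hqdeg ▸ hlt) horth
    have hNdeg : (p * q).natDegree = n + T.card := by
      rw [natDegree_mul hp0 hq0, hd, hqdeg]
    rcases sign_const ((p*q).natDegree) (p * q) le_rfl hg0 heven with hge | hle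
    · have := int_pos (p * q) hg0 (by intro x hx; simpa using hge x hx)
      simp only [eval_mul] at this
      rw [hzero] at this
      exact lt_irrefl _ this
    · have := int_pos (-(p * q)) (neg_ne_zero.mpr hg0)
        (by intro x hx; simp only [eval_neg, eval_mul]; have := hle x hx;
            simp only [eval_mul] at this; linarith)
      simp only [eval_neg, eval_mul] at this
      rw [intervalIntegral.integral_neg, hzero, neg_zero] at this
      exact lt_irrefl _ this
  -- now q ∣ p, equal degrees, both monic
  have hdvd : q ∣ p := by
    have h1 : T.val ≤ p.roots := by
      rw [Multiset.le_iff_count]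
      intro a
      by_cases ha : a ∈ T
      · have h1' : Multiset.count a T.val = 1 := Multiset.count_eq_one_of_mem T.nodup ha
        have ha' : a ∈ p.roots := by
          rw [hT, Finset.mem_filter, Multiset.mem_toFinset] at ha
          exact ha.1
        rw [h1']
        exact Multiset.one_le_count_iff_mem.mpr ha'
      · rw [Multiset.count_eq_zero_of_notMem (by simpa using ha)]
        omega
    have h2 : (T.val.map (fun a => X - C a)).prod ∣ (p.roots.map (fun a => X - C a)).prod :=
      Multiset.prod_dvd_prod_of_le (Multiset.map_le_map h1)
    calc q = (T.val.map (fun a => X - C a)).prod := by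
            rw [hq]; rfl
      _ ∣ (p.roots.map (fun a => X - C a)).prod := h2
      _ ∣ p := p.prod_multiset_X_sub_C_dvd
  obtain ⟨r, hr⟩ := hdvd
  have hrm : r.Monic := by
    have : (q * r).Monic := hr ▸ hm
    exact hqm.of_mul_monic_left this
  have hr0 : r.natDegree = 0 := by
    have := natDegree_mul hq0 hrm.ne_zero
    rw [← hr, hd, hqdeg, hcard] at this
    omega
  have hr1 : r = 1 := hrm.natDegree_eq_zero.mp hr0
  refine ⟨T, hcard, ?_, by rw [hr, hr1, mul_one, hq]⟩
  intro t ht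
  rw [Finset.mem_coe, hT, Finset.mem_filter] at ht
  exact ht.2.1

lemma gauss_lucas (T : Finset ℝ) (hT : (↑T : Set ℝ) ⊆ Set.Ioo (-1:ℝ) 1)
    (hne : T.Nonempty) (w : ℂ)
    (hw : (Polynomial.derivative (∏ t ∈ T, (X - C (t:ℂ)))).eval w = 0) :
    ∃ x : ℝ, -1 < x ∧ x < 1 ∧ w = (x:ℂ) := by
  classical
  by_cases hmem : ∃ t ∈ T, w = (t:ℂ)
  · obtain ⟨t, ht, rfl⟩ := hmem
    exact ⟨t, (hT ht).1, (hT ht).2, rfl⟩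
  push_neg at hmem
  have hnz : ∀ t ∈ T, w - (t:ℂ) ≠ 0 := fun t ht h => hmem t ht (by
    have : w = (t:ℂ) := by linear_combination h
    exact this)
  -- derivative of the product
  have hder : Polynomial.derivative (∏ t ∈ T, (X - C (t:ℂ))) =
      ∑ t ∈ T, ∏ s ∈ T.erase t, (X - C (s:ℂ)) := by
    rw [Finset.prod_eq_multiset_prod, derivative_prod, Finset.sum_eq_multiset_sum]
    congr 1
    apply Multiset.map_congr rfl
    intro j hj
    rw [derivative_sub, derivative_X, derivative_C, sub_zero, mul_one,
      ← Finset.erase_val, ← Finset.prod_eq_multiset_prod]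
  rw [hder] at hw
  simp only [eval_finset_sum, eval_prod, eval_sub, eval_X, eval_C] at hw
  -- turn into sum of reciprocals
  have hF : ∀ t ∈ T, (∏ s ∈ T.erase t, (w - (s:ℂ))) =
      (∏ s ∈ T, (w - (s:ℂ))) * (w - (t:ℂ))⁻¹ := by
    intro t ht
    rw [← Finset.mul_prod_erase T _ ht, mul_comm (w - (t:ℂ)), mul_assoc,
      mul_inv_cancel₀ (hnz t ht), mul_one]
  rw [Finset.sum_congr rfl hF, ← Finset.mul_sum] at hw
  have hprod : (∏ s ∈ T, (w - (s:ℂ))) ≠ 0 := Finset.prod_ne_zero_iff.mpr hnz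
  have hsum : (∑ t ∈ T, (w - (t:ℂ))⁻¹) = 0 := by
    rcases mul_eq_zero.mp hw with h | h
    · exact absurd h hprod
    · exact h
  -- rewrite reciprocals with conj / normSq
  have hre : ∀ t ∈ T, ((w - (t:ℂ))⁻¹).re = (w.re - t) * ((Complex.normSq (w - t))⁻¹) := by
    intro t ht
    simp [Complex.inv_re, Complex.normSq_apply, div_eq_mul_inv]
  have him : ∀ t ∈ T, ((w - (t:ℂ))⁻¹).im = (-w.im) * ((Complex.normSq (w - t))⁻¹) := by
    intro t ht
    simp [Complex.inv_im, Complex.normSq_apply, div_eq_mul_inv, neg_mul]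
  have hcpos : ∀ t ∈ T, 0 < (Complex.normSq (w - t))⁻¹ := by
    intro t ht
    exact inv_pos.mpr (Complex.normSq_pos.mpr (hnz t ht))
  have hsum_re : (∑ t ∈ T, (w.re - (t:ℝ)) * ((Complex.normSq (w - t))⁻¹)) = 0 := by
    have := congrArg Complex.re hsum
    rw [Complex.re_sum] at this
    rw [← Finset.sum_congr rfl hre]
    simpa using this
  have hsum_im : w.im * (∑ t ∈ T, ((Complex.normSq (w - t))⁻¹)) = 0 := by
    have h3 := congrArg Complex.im hsum
    rw [Complex.im_sum, Finset.sum_congr rfl him] at h3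
    have h4 : -(∑ t ∈ T, w.im * ((Complex.normSq (w - t))⁻¹)) = 0 := by
      rw [← Finset.sum_neg_distrib]
      simpa [neg_mul] using h3
    rw [Finset.mul_sum]
    linarith
  have hcsum : 0 < ∑ t ∈ T, ((Complex.normSq (w - t))⁻¹) :=
    Finset.sum_pos (fun t ht => hcpos t ht) hne
  have him0 : w.im = 0 := by
    rcases mul_eq_zero.mp hsum_im with h | h
    · exact h
    · exact absurd h (ne_of_gt hcsum)
  -- Re w strictly inside (-1,1)
  have hre_lt : w.re < 1 := by
    by_contra hge
    push_neg at hge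
    have : 0 < ∑ t ∈ T, (w.re - (t:ℝ)) * ((Complex.normSq (w - t))⁻¹) := by
      apply Finset.sum_pos _ hne
      intro t ht
      have h1 : (t:ℝ) < 1 := (hT ht).2
      exact mul_pos (by linarith) (hcpos t ht)
    linarith [hsum_re]
  have hre_gt : -1 < w.re := by
    by_contra hle
    push_neg at hle
    have : (∑ t ∈ T, (w.re - (t:ℝ)) * ((Complex.normSq (w - t))⁻¹)) < 0 := by
      apply Finset.sum_neg _ hne
      intro t ht
      have h1 : -1 < (t:ℝ) := (hT ht).1
      exact mul_neg_of_neg_of_pos (by linarith) (hcpos t ht)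
    linarith [hsum_re]
  exact ⟨w.re, hre_gt, hre_lt, Complex.ext (by simp) (by simp [him0])⟩
lemma mprod_le (c : ℝ) : ∀ (M : Multiset ℝ), (∀ x ∈ M, 0 ≤ x ∧ x ≤ c) →
    M.prod ≤ c ^ Multiset.card M := by
  refine Multiset.induction ?_ ?_
  · simp
  · intro a M ih h
    rw [Multiset.prod_cons, Multiset.card_cons, pow_succ, mul_comm (c ^ _) c]
    have ha := h a (Multiset.mem_cons_self a M)
    have hM : ∀ x ∈ M, 0 ≤ x ∧ x ≤ c := fun x hx => h x (Multiset.mem_cons_of_mem hx)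
    have hprod : 0 ≤ M.prod := Multiset.prod_nonneg (fun x hx => (hM x hx).1)
    exact mul_le_mul ha.2 (ih hM) hprod (le_trans ha.1 ha.2)

lemma mprod_ge (c : ℝ) (hc : 0 ≤ c) : ∀ (M : Multiset ℝ), (∀ x ∈ M, c ≤ x) →
    c ^ Multiset.card M ≤ M.prod := by
  refine Multiset.induction ?_ ?_
  · simp
  · intro a M ih h
    rw [Multiset.prod_cons, Multiset.card_cons, pow_succ, mul_comm (c ^ _) c]
    have ha := h a (Multiset.mem_cons_self a M)
    have hM : ∀ x ∈ M, c ≤ x := fun x hx => h x (Multiset.mem_cons_of_mem hx)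
    exact mul_le_mul ha (ih hM) (pow_nonneg hc _) (le_trans hc ha)

lemma mprod_gt (c : ℝ) (hc : 0 < c) (M : Multiset ℝ) (hM : M ≠ 0)
    (h : ∀ x ∈ M, c < x) : c ^ Multiset.card M < M.prod := by
  obtain ⟨a, ha⟩ := Multiset.exists_mem_of_ne_zero hM
  obtain ⟨M', rfl⟩ := Multiset.exists_cons_of_mem ha
  rw [Multiset.prod_cons, Multiset.card_cons, pow_succ, mul_comm (c ^ _) c]
  have ha' := h a (Multiset.mem_cons_self a M')
  have hM' : ∀ x ∈ M', c ≤ x := fun x hx => (h x (Multiset.mem_cons_of_mem hx)).le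
  exact mul_lt_mul ha' (mprod_ge c hc.le M' hM') (pow_pos hc _) (le_trans hc.le ha'.le)

lemma main_bound (ζ z : ℂ) (Δ d : ℝ) (hΔ1 : 1 ≤ Δ) (hd0 : 0 ≤ d)
    (hΔ : ∀ x : ℝ, -1 ≤ x → x ≤ 1 → ‖ζ - x‖ ≤ Δ)
    (hz : Δ + 1 + d ≤ ‖z‖)
    (n : ℕ) (hn : 2 ≤ n) (T : Finset ℝ) (hc : T.card = n)
    (hsub : (↑T : Set ℝ) ⊆ Set.Ioo (-1:ℝ) 1)
    (pC : Polynomial ℂ) (hpC : pC = ∏ t ∈ T, (X - C (t:ℂ))) :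
    (Polynomial.derivative pC).eval z ≠ 0 ∧
      ‖(Polynomial.derivative pC).eval ζ / (Polynomial.derivative pC).eval z‖ <
        (Δ / (d + Δ)) ^ (n - 1) := by
  classical
  set D : Polynomial ℂ := Polynomial.derivative pC with hD
  -- degree of pC
  have hmon : pC.Monic := hpC ▸ monic_prod_of_monic _ _ (fun t _ => monic_X_sub_C _)
  have hdegpC : pC.natDegree = n := by
    rw [hpC, natDegree_prod _ _ (fun t _ => X_sub_C_ne_zero _)]
    simp [hc]
  -- coefficient of D at n-1
  have hcoeff : D.coeff (n - 1) = (n : ℂ) := by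
    rw [hD, coeff_derivative]
    have h1 : n - 1 + 1 = n := by omega
    rw [h1]
    rw [show pC.coeff n = 1 from hdegpC ▸ hmon.coeff_natDegree, one_mul,
      Nat.cast_sub (by omega : 1 ≤ n)]
    push_cast
    ring
  have hNn : (n : ℂ) ≠ 0 := Nat.cast_ne_zero.mpr (by omega)
  have hD0 : D ≠ 0 := fun h => hNn (by rw [← hcoeff, h, coeff_zero])
  have hdegD : D.natDegree = n - 1 := by
    apply le_antisymm
    · have := natDegree_derivative_le pC
      rw [hdegpC] at this
      exact this
    · exact le_natDegree_of_ne_zero (by rw [hcoeff]; exact hNn)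
  -- splits
  have hsp : D.Splits := IsAlgClosed.splits D
  have hfact : D = C D.leadingCoeff * (D.roots.map fun a => X - C a).prod :=
    hsp.eq_prod_roots
  have hcard : Multiset.card D.roots = n - 1 := by
    rw [splits_iff_card_roots.mp hsp, hdegD]
  -- root location
  have hroots : ∀ w ∈ D.roots, ∃ x : ℝ, -1 < x ∧ x < 1 ∧ w = (x:ℂ) := by
    intro w hw
    have hTne : T.Nonempty := Finset.card_pos.mp (by omega)
    apply gauss_lucas T hsub hTne w
    have : D.IsRoot w := isRoot_of_mem_roots hw
    rw [hD, hpC] at this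
    exact this
  -- evaluation formula
  have heval : ∀ u : ℂ, ‖D.eval u‖ =
      ‖D.leadingCoeff‖ * (D.roots.map fun a => ‖u - a‖).prod := by
    intro u
    have hnp : ∀ m : Multiset ℂ, ‖m.prod‖ = (m.map fun x => ‖x‖).prod :=
      fun m => map_multiset_prod (normHom : ℂ →*₀ ℝ) m
    conv_lhs => rw [hfact]
    rw [eval_mul, eval_C, norm_mul, eval_multiset_prod, Multiset.map_map, hnp,
      Multiset.map_map]
    congr 2
    ext a
    simp
  have hlc : ‖D.leadingCoeff‖ ≠ 0 := by
    simp [leadingCoeff_ne_zero.mpr hD0]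
  have hlcpos : 0 < ‖D.leadingCoeff‖ := lt_of_le_of_ne (by positivity) (Ne.symm hlc)
  set β : ℝ := d + Δ with hβ
  have hβpos : 0 < β := by linarith
  set Mζ : Multiset ℝ := D.roots.map fun a => ‖ζ - a‖ with hMζ
  set Mz : Multiset ℝ := D.roots.map fun a => ‖z - a‖ with hMz
  have hMζ_le : ∀ r ∈ Mζ, 0 ≤ r ∧ r ≤ Δ := by
    intro r hr
    rw [hMζ, Multiset.mem_map] at hr
    obtain ⟨w, hw, rfl⟩ := hr
    obtain ⟨x, hx1, hx2, rfl⟩ := hroots w hw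
    exact ⟨norm_nonneg _, hΔ x hx1.le hx2.le⟩
  have hMz_gt : ∀ r ∈ Mz, β < r := by
    intro r hr
    rw [hMz, Multiset.mem_map] at hr
    obtain ⟨w, hw, rfl⟩ := hr
    obtain ⟨x, hx1, hx2, rfl⟩ := hroots w hw
    have h1 : ‖z‖ - ‖(x:ℂ)‖ ≤ ‖z - (x:ℂ)‖ := by
      simpa using norm_sub_norm_le z ((x:ℝ):ℂ)
    have h2 : ‖((x:ℝ):ℂ)‖ < 1 := by
      rw [Complex.norm_real, Real.norm_eq_abs, abs_lt]
      exact ⟨hx1, hx2⟩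
    rw [hβ]
    linarith
  have hcards : Multiset.card Mζ = n - 1 ∧ Multiset.card Mz = n - 1 := by
    constructor <;> simp [hMζ, hMz, hcard]
  have hMzne : Mz ≠ 0 := by
    intro h
    have := hcards.2
    rw [h] at this
    simp at this
    omega
  have hPz_gt : β ^ (n - 1) < Mz.prod := by
    have := mprod_gt β hβpos Mz hMzne hMz_gt
    rwa [hcards.2] at this
  have hPz_pos : 0 < Mz.prod := lt_trans (pow_pos hβpos _) hPz_gt
  have hPζ_le : Mζ.prod ≤ Δ ^ (n - 1) := by
    have := mprod_le Δ Mζ hMζ_le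
    rwa [hcards.1] at this
  have hPζ_nonneg : 0 ≤ Mζ.prod := Multiset.prod_nonneg (fun x hx => (hMζ_le x hx).1)
  -- eval z ≠ 0
  have habsz : ‖D.eval z‖ = ‖D.leadingCoeff‖ * Mz.prod := heval z
  have hevalz_ne : D.eval z ≠ 0 := by
    intro h
    rw [h] at habsz
    simp only [norm_zero] at habsz
    have : 0 < ‖D.leadingCoeff‖ * Mz.prod := mul_pos hlcpos hPz_pos
    rw [← habsz] at this
    exact lt_irrefl _ this
  refine ⟨hevalz_ne, ?_⟩
  rw [norm_div, heval ζ, habsz]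
  rw [mul_div_mul_left _ _ hlc]
  calc Mζ.prod / Mz.prod ≤ Δ ^ (n - 1) / Mz.prod := by
        exact (div_le_div_iff_of_pos_right hPz_pos).mpr hPζ_le
    _ < Δ ^ (n - 1) / β ^ (n - 1) := by
        apply div_lt_div_of_pos_left (by positivity) (pow_pos hβpos _) hPz_gt
    _ = (Δ / β) ^ (n - 1) := (div_pow _ _ _).symm

theorem final_thm
    (L : ℕ → Polynomial ℝ) (ζ : ℂ)
    (hL : ∀ n : ℕ, (L n).Monic ∧ (L n).natDegree = n ∧
      ∀ k : ℕ, k < n → (∫ x in (-1:ℝ)..1, (L n).eval x * x ^ k) = 0)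
    (K : Set ℂ) (hK : IsCompact K)
    (hKsub : K ⊆ {z : ℂ | (⨆ x : Set.Icc (-1:ℝ) 1, ‖ζ - (x : ℝ)‖) + 1 <
        ‖z‖}) :
    (∀ n : ℕ, 2 ≤ n → ∀ z ∈ K,
      (Polynomial.derivative ((L n).map (algebraMap ℝ ℂ))).eval z ≠ 0 ∧
      ‖(Polynomial.derivative ((L n).map (algebraMap ℝ ℂ))).eval ζ /
          (Polynomial.derivative ((L n).map (algebraMap ℝ ℂ))).eval z‖ <
        ((⨆ x : Set.Icc (-1:ℝ) 1, ‖ζ - (x : ℝ)‖) /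
          (sInf {r : ℝ | ∃ z' ∈ K, ∃ w : ℂ,
              ‖w‖ = (⨆ x : Set.Icc (-1:ℝ) 1, ‖ζ - (x : ℝ)‖) + 1 ∧
              r = ‖z' - w‖} +
            (⨆ x : Set.Icc (-1:ℝ) 1, ‖ζ - (x : ℝ)‖))) ^ (n - 1)) ∧
    TendstoUniformlyOn
      (fun (n : ℕ) (z : ℂ) =>
        (Polynomial.derivative ((L n).map (algebraMap ℝ ℂ))).eval ζ /
          (Polynomial.derivative ((L n).map (algebraMap ℝ ℂ))).eval z)
      (fun _ => 0) Filter.atTop K := by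
  classical
  set Δ : ℝ := ⨆ x : Set.Icc (-1:ℝ) 1, ‖ζ - (x : ℝ)‖ with hΔdef
  set S : Set ℝ := {r : ℝ | ∃ z' ∈ K, ∃ w : ℂ, ‖w‖ = Δ + 1 ∧
      r = ‖z' - w‖} with hSdef
  set d : ℝ := sInf S with hddef
  -- basic facts about Δ
  have hbdd : BddAbove (Set.range fun x : Set.Icc (-1:ℝ) 1 => ‖ζ - (x : ℝ)‖) := by
    refine ⟨‖ζ‖ + 1, ?_⟩
    rintro r ⟨⟨x, hx⟩, rfl⟩
    have h1 : ‖ζ - (x:ℝ)‖ ≤ ‖ζ‖ + ‖((x:ℝ):ℂ)‖ := by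
      simpa using norm_sub_le ζ ((x:ℝ):ℂ)
    have h2 : ‖((x:ℝ):ℂ)‖ ≤ 1 := by
      rw [Complex.norm_real, Real.norm_eq_abs, abs_le]
      exact ⟨hx.1, hx.2⟩
    simp only []
    linarith
  have hΔ_ge : ∀ x : ℝ, -1 ≤ x → x ≤ 1 → ‖ζ - x‖ ≤ Δ := by
    intro x h1 h2
    exact le_ciSup hbdd (⟨x, h1, h2⟩ : Set.Icc (-1:ℝ) 1)
  have hΔ1 : 1 ≤ Δ := by
    have h1 := hΔ_ge 1 (by norm_num) le_rfl
    have h2 := hΔ_ge (-1) le_rfl (by norm_num)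
    have h3 : (2:ℝ) ≤ ‖ζ - ((-1:ℝ):ℂ)‖ + ‖ζ - ((1:ℝ):ℂ)‖ := by
      have := norm_sub_le (ζ - ((-1:ℝ):ℂ)) (ζ - ((1:ℝ):ℂ))
      have heq : (ζ - ((-1:ℝ):ℂ)) - (ζ - ((1:ℝ):ℂ)) = 2 := by push_cast; ring
      rw [heq] at this
      simpa using this
    linarith
  -- S and d facts
  have hSlb : ∀ r ∈ S, 0 ≤ r := by
    rintro r ⟨z', _, w, _, rfl⟩
    exact norm_nonneg _
  have hSbdd : BddBelow S := ⟨0, hSlb⟩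
  have hd0 : 0 ≤ d := Real.sInf_nonneg hSlb
  have hmem : ∀ z ∈ K, (‖z‖ - (Δ + 1)) ∈ S := by
    intro z hz
    have hzgt : Δ + 1 < ‖z‖ := hKsub hz
    have hzpos : (0:ℝ) < ‖z‖ := by linarith
    refine ⟨z, hz, (((Δ + 1) / ‖z‖ : ℝ) : ℂ) * z, ?_, ?_⟩
    · rw [norm_mul, Complex.norm_real, Real.norm_eq_abs, abs_of_nonneg (by positivity)]
      field_simp
    · have : z - (((Δ + 1) / ‖z‖ : ℝ) : ℂ) * z
          = ((1 - (Δ + 1) / ‖z‖ : ℝ) : ℂ) * z := by push_cast; ring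
      rw [this, norm_mul, Complex.norm_real, Real.norm_eq_abs, abs_of_nonneg]
      · field_simp
      · rw [sub_nonneg, div_le_one hzpos]; linarith
  have hzK : ∀ z ∈ K, Δ + 1 + d ≤ ‖z‖ := by
    intro z hz
    have := csInf_le hSbdd (hmem z hz)
    rw [← hddef] at this
    linarith
  -- part 1
  have part1 : ∀ n : ℕ, 2 ≤ n → ∀ z ∈ K,
      (Polynomial.derivative ((L n).map (algebraMap ℝ ℂ))).eval z ≠ 0 ∧
      ‖(Polynomial.derivative ((L n).map (algebraMap ℝ ℂ))).eval ζ /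
          (Polynomial.derivative ((L n).map (algebraMap ℝ ℂ))).eval z‖ <
        (Δ / (d + Δ)) ^ (n - 1) := by
    intro n hn z hz
    obtain ⟨hm, hdeg, ho⟩ := hL n
    obtain ⟨T, hc, hsub, hp⟩ := legendre_roots_s17 n (by omega) (L n) hm hdeg ho
    have hpC : (L n).map (algebraMap ℝ ℂ) = ∏ t ∈ T, (X - C (t:ℂ)) := by
      rw [hp, Polynomial.map_prod]
      apply Finset.prod_congr rfl
      intro t _
      rw [Polynomial.map_sub, map_X, map_C]
      norm_num
    exact main_bound ζ z Δ d hΔ1 hd0 hΔ_ge (hzK z hz) n hn T hc hsub _ hpC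
  refine ⟨part1, ?_⟩
  -- part 2
  rcases K.eq_empty_or_nonempty with rfl | hKne
  · simp [TendstoUniformlyOn]
  -- d is positive
  have hdpos : 0 < d := by
    obtain ⟨z0, hz0K, hz0min'⟩ := hK.exists_isMinOn hKne
      (continuous_norm.continuousOn)
    have hz0min : ∀ z' ∈ K, ‖z0‖ ≤ ‖z'‖ := fun z' hz' => hz0min' hz'
    have hz0 : Δ + 1 < ‖z0‖ := hKsub hz0K
    have hSne : S.Nonempty := ⟨_, hmem z0 hz0K⟩
    have : ‖z0‖ - (Δ + 1) ≤ d := by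
      rw [hddef]
      apply le_csInf hSne
      rintro r ⟨z', hz', w, hw, rfl⟩
      have h1 : ‖z'‖ - ‖w‖ ≤ ‖z' - w‖ := by
        simpa using norm_sub_norm_le z' w
      have h2 := hz0min z' hz'
      rw [hw] at h1
      linarith
    linarith
  set q : ℝ := Δ / (d + Δ) with hqdef
  have hq0 : 0 ≤ q := by positivity
  have hq1 : q < 1 := by
    rw [hqdef, div_lt_one (by linarith)]
    linarith
  rw [Metric.tendstoUniformlyOn_iff]
  intro ε hε
  have htend : Filter.Tendsto (fun k : ℕ => q ^ k) Filter.atTop (nhds 0) :=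
    tendsto_pow_atTop_nhds_zero_of_lt_one hq0 hq1
  have hev : ∀ᶠ k in Filter.atTop, q ^ k < ε := htend.eventually (gt_mem_nhds hε)
  obtain ⟨N, hN⟩ := Filter.eventually_atTop.mp hev
  rw [Filter.eventually_atTop]
  refine ⟨N + 2, fun n hn z hz => ?_⟩
  have hb := part1 n (by omega) z hz
  rw [dist_comm, dist_zero_right]
  calc ‖_‖ < q ^ (n - 1) := hb.2
    _ < ε := hN (n - 1) (by omega)


/-- On a compact `K ⊆ {|z| > Δ_ζ + 1}`, for each `n ≥ 2` and `z ∈ K` we have `L_n′(z) ≠ 0`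
and `|L_n′(ζ)/L_n′(z)| < (Δ_ζ/(d_{ζ,K}+Δ_ζ))^{n-1}`; consequently `L_n′(ζ)/L_n′(z) → 0`
uniformly on `K`. -/
theorem legendre_derivative_ratio_tendsto_zero
    (L : ℕ → Polynomial ℝ) (ζ : ℂ)
    (hL : IsMonicLegendre L)
    (K : Set ℂ) (hK : IsCompact K)
    (hKsub : K ⊆ {z : ℂ | (⨆ x : Set.Icc (-1:ℝ) 1, ‖ζ - (x : ℝ)‖) + 1 <
        ‖z‖}) :
    (∀ n : ℕ, 2 ≤ n → ∀ z ∈ K,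
      (Polynomial.derivative ((L n).map (algebraMap ℝ ℂ))).eval z ≠ 0 ∧
      ‖(Polynomial.derivative ((L n).map (algebraMap ℝ ℂ))).eval ζ /
          (Polynomial.derivative ((L n).map (algebraMap ℝ ℂ))).eval z‖ <
        ((⨆ x : Set.Icc (-1:ℝ) 1, ‖ζ - (x : ℝ)‖) /
          (sInf {r : ℝ | ∃ z' ∈ K, ∃ w : ℂ,
              ‖w‖ = (⨆ x : Set.Icc (-1:ℝ) 1, ‖ζ - (x : ℝ)‖) + 1 ∧
              r = ‖z' - w‖} +
            (⨆ x : Set.Icc (-1:ℝ) 1, ‖ζ - (x : ℝ)‖))) ^ (n - 1)) ∧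
    TendstoUniformlyOn
      (fun (n : ℕ) (z : ℂ) =>
        (Polynomial.derivative ((L n).map (algebraMap ℝ ℂ))).eval ζ /
          (Polynomial.derivative ((L n).map (algebraMap ℝ ℂ))).eval z)
      (fun _ => 0) Filter.atTop K := by
  exact final_thm L ζ hL K hK hKsub
end

section
/- Let ζ ∈ ℂ and Δ_ζ = sup_{x ∈ [-1,1]} |ζ - x|. Then n·P_n(z)/L_n′(z) → (z²-1)/(z-ζ) as n → ∞, uniformly on every compact subset of {z ∈ ℂ : |z| > Δ_ζ + 1} (on which L_n′ and z-ζ do not vanish). -/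
open Polynomial

section PolarLegAux

open Polynomial MeasureTheory intervalIntegral Set Filter

namespace PolarLegAux


lemma poly_ii (p : ℝ[X]) (a b : ℝ) : IntervalIntegrable (fun x => p.eval x) volume a b :=
  p.continuous.intervalIntegrable a b

lemma integral_pos_of_nonneg_of_pos {f : ℝ → ℝ} (hf : Continuous f)
    (h0 : ∀ x ∈ Set.Ioo (-1:ℝ) 1, 0 ≤ f x) {c : ℝ} (hc : c ∈ Set.Ioo (-1:ℝ) 1)
    (hfc : 0 < f c) : 0 < ∫ x in (-1:ℝ)..1, f x := by
  -- nonneg on Icc by continuity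
  have hIcc : ∀ x ∈ Set.Icc (-1:ℝ) 1, 0 ≤ f x := by
    have hcl : IsClosed {y : ℝ | 0 ≤ f y} := isClosed_le continuous_const hf
    have : Set.Icc (-1:ℝ) 1 = closure (Set.Ioo (-1:ℝ) 1) := (closure_Ioo (by norm_num)).symm
    intro x hx
    rw [this] at hx
    exact closure_minimal h0 hcl hx
  -- find a small interval around c where f is positive
  obtain ⟨δ, hδ, hball⟩ := Metric.continuousAt_iff.mp hf.continuousAt (f c) hfc
  set u : ℝ := max (-1) (c - δ/2) with hu
  set v : ℝ := min 1 (c + δ/2) with hv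
  have huv1 : -1 ≤ u := le_max_left _ _
  have huv2 : v ≤ 1 := min_le_left _ _
  have hucv : u < c ∧ c < v := by
    constructor
    · exact max_lt hc.1 (by linarith)
    · exact lt_min hc.2 (by linarith)
  have hposmid : ∀ x ∈ Set.Ioo u v, 0 < f x := by
    intro x hx
    have h1 : |x - c| < δ := by
      have : c - δ/2 ≤ u := le_max_right _ _
      have : c - δ/2 < x := lt_of_le_of_lt (le_max_right _ _) hx.1
      have : x < c + δ/2 := lt_of_lt_of_le hx.2 (min_le_right _ _)
      rw [abs_sub_lt_iff]; constructor <;> linarith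
    have := hball (by simpa [Real.dist_eq] using h1)
    have h2 : |f x - f c| < f c := by simpa [Real.dist_eq] using this
    have := abs_sub_lt_iff.mp h2
    linarith [this.2]
  have key : (0:ℝ) < ∫ x in u..v, f x :=
    intervalIntegral_pos_of_pos_on (hf.intervalIntegrable u v) hposmid (lt_trans hucv.1 hucv.2)
  have h1 : (0:ℝ) ≤ ∫ x in (-1:ℝ)..u, f x := by
    apply intervalIntegral.integral_nonneg huv1
    intro x hx; exact hIcc x ⟨hx.1, le_trans hx.2 (by linarith [hucv.1, hucv.2])⟩
  have h2 : (0:ℝ) ≤ ∫ x in v..(1:ℝ), f x := by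
    apply intervalIntegral.integral_nonneg huv2
    intro x hx; exact hIcc x ⟨le_trans (by linarith [hucv.1, hucv.2] : (-1:ℝ) ≤ v) hx.1, hx.2⟩
  have split1 : (∫ x in (-1:ℝ)..1, f x)
      = (∫ x in (-1:ℝ)..u, f x) + (∫ x in u..(1:ℝ), f x) :=
    (intervalIntegral.integral_add_adjacent_intervals (hf.intervalIntegrable _ _)
      (hf.intervalIntegrable _ _)).symm
  have split2 : (∫ x in u..(1:ℝ), f x)
      = (∫ x in u..v, f x) + (∫ x in v..(1:ℝ), f x) :=
    (intervalIntegral.integral_add_adjacent_intervals (hf.intervalIntegrable _ _)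
      (hf.intervalIntegrable _ _)).symm
  rw [split1, split2]
  linarith

lemma orth_poly {p : ℝ[X]} {n : ℕ}
    (horth : ∀ k : ℕ, k < n → (∫ x in (-1:ℝ)..1, p.eval x * x ^ k) = 0)
    {S : ℝ[X]} (hS : S.natDegree < n) :
    (∫ x in (-1:ℝ)..1, p.eval x * S.eval x) = 0 := by
  have heval : ∀ x : ℝ, p.eval x * S.eval x
      = ∑ k ∈ Finset.range (S.natDegree + 1), S.coeff k * (p.eval x * x ^ k) := by
    intro x
    rw [eval_eq_sum_range (p := S), Finset.mul_sum]
    apply Finset.sum_congr rfl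
    intro k _; ring
  calc (∫ x in (-1:ℝ)..1, p.eval x * S.eval x)
      = ∫ x in (-1:ℝ)..1, ∑ k ∈ Finset.range (S.natDegree + 1),
          S.coeff k * (p.eval x * x ^ k) := by
        apply intervalIntegral.integral_congr; intro x _; exact heval x
    _ = ∑ k ∈ Finset.range (S.natDegree + 1),
          ∫ x in (-1:ℝ)..1, S.coeff k * (p.eval x * x ^ k) := by
        apply intervalIntegral.integral_finset_sum
        intro k _
        exact (continuous_const.mul (p.continuous.mul (continuous_pow k))).intervalIntegrable _ _
    _ = ∑ k ∈ Finset.range (S.natDegree + 1),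
          S.coeff k * ∫ x in (-1:ℝ)..1, p.eval x * x ^ k := by
        apply Finset.sum_congr rfl
        intro k _; exact intervalIntegral.integral_const_mul _ _
    _ = 0 := by
        apply Finset.sum_eq_zero
        intro k hk
        rw [horth k (lt_of_lt_of_le (Finset.mem_range.mp hk) hS), mul_zero]

lemma eq_zero_of_self_orth {p : ℝ[X]}
    (h : (∫ x in (-1:ℝ)..1, p.eval x * p.eval x) = 0) : p = 0 := by
  by_contra hp
  have hex : ∃ c ∈ Set.Ioo (-1:ℝ) 1, p.eval c ≠ 0 := by
    by_contra h'
    push_neg at h'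
    exact hp (p.eq_zero_of_infinite_isRoot
      ((Set.Ioo_infinite (by norm_num : (-1:ℝ) < 1)).mono (fun x hx => h' x hx)))
  obtain ⟨c, hc, hcne⟩ := hex
  have : (0:ℝ) < ∫ x in (-1:ℝ)..1, p.eval x * p.eval x := by
    apply integral_pos_of_nonneg_of_pos (p.continuous.mul p.continuous)
      (fun x _ => mul_self_nonneg _) hc
    exact mul_self_pos.mpr hcne
  rw [h] at this
  exact lt_irrefl 0 this

lemma integral_derivative (p : ℝ[X]) (a b : ℝ) :
    (∫ x in a..b, (derivative p).eval x) = p.eval b - p.eval a := by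
  apply intervalIntegral.integral_deriv_eq_sub'
  · funext x; exact p.deriv
  · intro x _; exact p.differentiableAt
  · exact (derivative p).continuous.continuousOn



lemma ibp (u v : ℝ[X]) (hbd : u.eval 1 * v.eval 1 = u.eval (-1) * v.eval (-1)) :
    (∫ x in (-1:ℝ)..1, (derivative u).eval x * v.eval x)
      = - ∫ x in (-1:ℝ)..1, u.eval x * (derivative v).eval x := by
  have h1 : ∀ x : ℝ, (derivative (u * v)).eval x
      = (derivative u).eval x * v.eval x + u.eval x * (derivative v).eval x := by
    intro x; rw [derivative_mul, eval_add, eval_mul, eval_mul]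
  have h2 := integral_derivative (u * v) (-1) 1
  rw [intervalIntegral.integral_congr (g := fun x : ℝ =>
      (derivative u).eval x * v.eval x + u.eval x * (derivative v).eval x)
      (fun x _ => h1 x)] at h2
  rw [intervalIntegral.integral_add (f := fun x => (derivative u).eval x * v.eval x)
      (g := fun x => u.eval x * (derivative v).eval x)
      (((derivative u).continuous.mul v.continuous).intervalIntegrable _ _)
      ((u.continuous.mul (derivative v).continuous).intervalIntegrable _ _)] at h2
  rw [eval_mul, eval_mul, hbd, sub_self] at h2
  linarith

lemma legendre_ODE {p : ℝ[X]} {n : ℕ} (hn : 1 ≤ n) (hm : p.Monic) (hd : p.natDegree = n)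
    (horth : ∀ k, k < n → (∫ x in (-1:ℝ)..1, p.eval x * x ^ k) = 0) :
    derivative ((X ^ 2 - 1) * derivative p) = C ((n:ℝ) * ((n:ℝ)+1)) * p := by
  set A : ℝ[X] := (X ^ 2 - 1) * derivative p with hA
  set D : ℝ[X] := derivative A - C ((n:ℝ) * ((n:ℝ)+1)) * p with hDdef
  suffices hD0 : D = 0 from sub_eq_zero.mp hD0
  have hA1 : A.eval 1 = 0 := by simp [hA]
  have hAm1 : A.eval (-1) = 0 := by simp [hA]
  have horthA : ∀ k, k < n → (∫ x in (-1:ℝ)..1, (derivative A).eval x * x ^ k) = 0 := by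
    intro k hk
    set B : ℝ[X] := (X ^ 2 - 1) * derivative (X ^ k : ℝ[X]) with hB
    have hB1 : B.eval 1 = 0 := by simp [hB]
    have hBm1 : B.eval (-1) = 0 := by simp [hB]
    have e1 : (∫ x in (-1:ℝ)..1, (derivative A).eval x * x ^ k)
        = ∫ x in (-1:ℝ)..1, (derivative A).eval x * (X ^ k : ℝ[X]).eval x := by
      apply intervalIntegral.integral_congr; intro x _; simp
    have e2 := ibp A (X ^ k) (by rw [hA1, hAm1, zero_mul, zero_mul])
    have e3 : (∫ x in (-1:ℝ)..1, A.eval x * (derivative (X ^ k : ℝ[X])).eval x)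
        = ∫ x in (-1:ℝ)..1, B.eval x * (derivative p).eval x := by
      apply intervalIntegral.integral_congr; intro x _
      simp only [hA, hB, eval_mul]; ring
    have e4 := ibp B p (by rw [hB1, hBm1, zero_mul, zero_mul])
    have hdegB : (derivative B).natDegree < n := by
      rcases Nat.eq_zero_or_pos k with hk0 | hkpos
      · subst hk0; simp [hB]; omega
      · have h1 : B.natDegree ≤ 2 + (k - 1) := by
          apply le_trans natDegree_mul_le
          gcongr
          · calc (X ^ 2 - 1 : ℝ[X]).natDegree = ((X:ℝ[X]) ^ 2 - C 1).natDegree := by norm_num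
              _ ≤ 2 := le_of_eq (natDegree_X_pow_sub_C)
          · exact le_trans (natDegree_derivative_le _) (by simp)
        have h2 : (derivative B).natDegree ≤ (2 + (k-1)) - 1 :=
          le_trans (natDegree_derivative_le _) (by omega)
        omega
    have e5 : (∫ x in (-1:ℝ)..1, (derivative B).eval x * p.eval x) = 0 := by
      rw [← orth_poly horth hdegB]
      apply intervalIntegral.integral_congr; intro x _; ring
    rw [e1, e2, e3]
    rw [e5] at e4
    linarith
  -- degree bookkeeping
  have hpn : p.coeff n = 1 := by
    have := hm.coeff_natDegree; rwa [hd] at this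
  have hdpcoeff : (derivative p).coeff (n - 1) = n := by
    rw [coeff_derivative]
    have : n - 1 + 1 = n := Nat.succ_pred_eq_of_pos hn
    rw [this, hpn, one_mul, Nat.cast_sub hn]
    push_cast
    ring
  have hAdeg : A.natDegree ≤ n + 1 := by
    apply le_trans natDegree_mul_le
    have h1 : (X ^ 2 - 1 : ℝ[X]).natDegree ≤ 2 := by
      calc (X ^ 2 - 1 : ℝ[X]).natDegree = ((X:ℝ[X]) ^ 2 - C 1).natDegree := by norm_num
        _ ≤ 2 := le_of_eq natDegree_X_pow_sub_C
    have h2 : (derivative p).natDegree ≤ n - 1 := by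
      rw [← hd]; exact natDegree_derivative_le p
    omega
  have hdAdeg : (derivative A).natDegree ≤ n := by
    apply le_trans (natDegree_derivative_le _); omega
  have hdAcoeff : (derivative A).coeff n = (n:ℝ) * ((n:ℝ)+1) := by
    rw [coeff_derivative]
    have hAc : A.coeff (n + 1) = (n : ℝ) := by
      rw [hA, sub_mul, one_mul, coeff_sub]
      have h1 : ((X:ℝ[X]) ^ 2 * derivative p).coeff (n + 1) = (derivative p).coeff (n - 1) := by
        have : n + 1 = (n - 1) + 2 := by omega
        rw [this, coeff_X_pow_mul]
      have h2 : (derivative p).coeff (n + 1) = 0 := by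
        apply coeff_eq_zero_of_natDegree_lt
        have := natDegree_derivative_le p
        omega
      rw [h1, h2, hdpcoeff, sub_zero]
    rw [hAc]
  have hDcoeff : D.coeff n = 0 := by
    rw [hDdef, coeff_sub, coeff_C_mul, hdAcoeff, hpn, mul_one, sub_self]
  have hDdeg : D.natDegree ≤ n := by
    apply le_trans (natDegree_sub_le _ _)
    apply max_le hdAdeg
    apply le_trans (natDegree_mul_le)
    rw [natDegree_C, hd]
    omega
  have horthD : ∀ k, k < n → (∫ x in (-1:ℝ)..1, D.eval x * x ^ k) = 0 := by
    intro k hk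
    have hcong : ∀ x : ℝ, D.eval x * x ^ k
        = (derivative A).eval x * x ^ k - ((n:ℝ) * ((n:ℝ)+1)) * (p.eval x * x ^ k) := by
      intro x; rw [hDdef]; simp only [eval_sub, eval_mul, eval_C]; ring
    rw [intervalIntegral.integral_congr (fun x _ => hcong x),
      intervalIntegral.integral_sub (f := fun x => (derivative A).eval x * x ^ k)
        (g := fun x => ((n:ℝ) * ((n:ℝ)+1)) * (p.eval x * x ^ k))
        (((derivative A).continuous.mul (continuous_pow k)).intervalIntegrable _ _)
        ((continuous_const.mul (p.continuous.mul (continuous_pow k))).intervalIntegrable _ _),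
      horthA k hk, intervalIntegral.integral_const_mul, horth k hk, mul_zero, sub_zero]
  by_cases hD : D = 0
  · exact hD
  · have hlt : D.natDegree < n := by
      rcases lt_or_eq_of_le hDdeg with h | h
      · exact h
      · exfalso
        have : D.leadingCoeff ≠ 0 := leadingCoeff_ne_zero.mpr hD
        rw [leadingCoeff, h, hDcoeff] at this
        exact this rfl
    have : (∫ x in (-1:ℝ)..1, D.eval x * D.eval x) = 0 := orth_poly horthD hlt
    exact eq_zero_of_self_orth this



lemma strip_roots (N : ℕ) : ∀ (p : ℝ[X]), p.natDegree ≤ N → p ≠ 0 →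
    ∃ (M : Multiset ℝ) (h : ℝ[X]),
    (∀ r ∈ M, r ∈ Set.Ioo (-1:ℝ) 1) ∧ p = (M.map fun r => X - C r).prod * h ∧
    (∀ x ∈ Set.Ioo (-1:ℝ) 1, h.eval x ≠ 0) := by
  induction N with
  | zero =>
    intro p hdeg hp
    refine ⟨0, p, by simp, by simp, ?_⟩
    intro x hx
    have : p = C (p.coeff 0) := eq_C_of_natDegree_le_zero hdeg
    rw [this, eval_C]
    intro hc
    apply hp
    rw [this, hc, map_zero]
  | succ N ih =>
    intro p hdeg hp
    by_cases hroot : ∃ r ∈ Set.Ioo (-1:ℝ) 1, p.eval r = 0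
    · obtain ⟨r, hr, hpr⟩ := hroot
      have hdvd : (X - C r) ∣ p := dvd_iff_isRoot.mpr hpr
      obtain ⟨q, hq⟩ := hdvd
      have hq0 : q ≠ 0 := by
        intro h0; apply hp; rw [hq, h0, mul_zero]
      have hdq : q.natDegree ≤ N := by
        have h1 : p.natDegree = 1 + q.natDegree := by
          rw [hq, natDegree_mul (X_sub_C_ne_zero r) hq0, natDegree_X_sub_C]
        omega
      obtain ⟨M, h, hM, heq, hne⟩ := ih q hdq hq0
      refine ⟨r ::ₘ M, h, ?_, ?_, hne⟩
      · intro s hs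
        rcases Multiset.mem_cons.mp hs with h1 | h1
        · rw [h1]; exact hr
        · exact hM s h1
      · rw [Multiset.map_cons, Multiset.prod_cons, hq, heq]
        ring
    · push_neg at hroot
      exact ⟨0, p, by simp, by simp, hroot⟩

lemma roots_in_Ioo {p : ℝ[X]} {n : ℕ} (hm : p.Monic) (hd : p.natDegree = n)
    (horth : ∀ k, k < n → (∫ x in (-1:ℝ)..1, p.eval x * x ^ k) = 0) :
    ∃ F : Finset ℝ, F.card = n ∧ ∀ r ∈ F, r ∈ Set.Ioo (-1:ℝ) 1 ∧ p.eval r = 0 := by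
  classical
  obtain ⟨M, h, hM, heq, hne⟩ := strip_roots p.natDegree p le_rfl hm.ne_zero
  set T : Finset ℝ := M.toFinset with hT
  set F : Finset ℝ := T.filter (fun r => Odd (M.count r)) with hF
  set q : ℝ[X] := F.prod (fun r => X - C r) with hq
  -- degree of q
  have hqmonic : q.Monic := monic_prod_of_monic _ _ (fun r _ => monic_X_sub_C r)
  have hqdeg : q.natDegree = F.card := by
    rw [hq, natDegree_prod _ _ (fun r _ => X_sub_C_ne_zero r)]
    simp [natDegree_X_sub_C]
  -- the evaluation of p * q
  have hh0 : h ≠ 0 := fun h0 => hm.ne_zero (by rw [heq, h0, mul_zero])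
  have hprodmonic : ((M.map fun r => X - C r).prod).Monic :=
    monic_multiset_prod_of_monic _ _ (fun r _ => monic_X_sub_C r)
  have hMcard : (Multiset.card M) ≤ n := by
    have h1 : p.natDegree = ((M.map fun r => X - C r).prod).natDegree + h.natDegree := by
      rw [heq, natDegree_mul hprodmonic.ne_zero hh0]
    have h2 : ((M.map fun r => X - C r).prod).natDegree = Multiset.card M := by
      rw [natDegree_multiset_prod_of_monic]
      · simp [Multiset.map_map, natDegree_X_sub_C]
      · intro f hf
        obtain ⟨r, _, rfl⟩ := Multiset.mem_map.mp hf
        exact monic_X_sub_C r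
    omega
  -- key evaluation formula
  have hGnonneg : ∀ x : ℝ, 0 ≤ ∏ r ∈ T, (x - r) ^ (M.count r + if Odd (M.count r) then 1 else 0) := by
    intro x
    apply Finset.prod_nonneg
    intro r _
    apply Even.pow_nonneg
    rcases Nat.even_or_odd (M.count r) with he | ho
    · rw [if_neg (Nat.not_odd_iff_even.mpr he), add_zero]; exact he
    · rw [if_pos ho]; exact ho.add_one
  have heval : ∀ x : ℝ, p.eval x * q.eval x
      = h.eval x * ∏ r ∈ T, (x - r) ^ (M.count r + if Odd (M.count r) then 1 else 0) := by
    intro x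
    have e1 : p.eval x = (M.map fun r => (x - r)).prod * h.eval x := by
      rw [heq, eval_mul, eval_multiset_prod, Multiset.map_map]
      congr 1
      apply congrArg
      apply Multiset.map_congr rfl
      intro r _
      simp
    have e2 : (M.map fun r => (x - r)).prod = ∏ r ∈ T, (x - r) ^ (M.count r) :=
      Finset.prod_multiset_map_count M _
    have e3 : q.eval x = ∏ r ∈ T, (x - r) ^ (if Odd (M.count r) then 1 else 0) := by
      rw [hq, eval_prod, hF, Finset.prod_filter]
      apply Finset.prod_congr rfl
      intro r _
      by_cases ho : Odd (M.count r) <;> simp [ho]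
    rw [e1, e2, e3]
    rw [mul_comm _ (h.eval x), mul_assoc, ← Finset.prod_mul_distrib]
    congr 1
    apply Finset.prod_congr rfl
    intro r _
    rw [← pow_add]
  -- h has constant sign on Ioo
  have hzero : (0:ℝ) ∈ Set.Ioo (-1:ℝ) 1 := by norm_num
  have hsign : (∀ x ∈ Set.Ioo (-1:ℝ) 1, 0 < h.eval x) ∨
      (∀ x ∈ Set.Ioo (-1:ℝ) 1, h.eval x < 0) := by
    have hIVT : ∀ x ∈ Set.Ioo (-1:ℝ) 1, ∀ y ∈ Set.Ioo (-1:ℝ) 1,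
        0 < h.eval x → h.eval y < 0 → False := by
      intro x hx y hy hpx hny
      have hsub : Set.uIcc y x ⊆ Set.Ioo (-1:ℝ) 1 :=
        (Set.ordConnected_Ioo).uIcc_subset hy hx
      have hcont : ContinuousOn (fun t => h.eval t) (Set.uIcc y x) :=
        h.continuous.continuousOn
      have h0mem : (0:ℝ) ∈ Set.uIcc (h.eval y) (h.eval x) :=
        Set.mem_uIcc.mpr (Or.inl ⟨le_of_lt hny, le_of_lt hpx⟩)
      obtain ⟨c, hc, hc0⟩ := intermediate_value_uIcc hcont h0mem
      exact hne c (hsub hc) hc0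
    rcases lt_or_gt_of_ne (hne 0 hzero) with hneg | hpos
    · right; intro x hx
      by_contra hnn
      push_neg at hnn
      have : 0 < h.eval x := lt_of_le_of_ne hnn (Ne.symm (hne x hx))
      exact hIVT x hx 0 hzero this hneg
    · left; intro x hx
      by_contra hnn
      push_neg at hnn
      have : h.eval x < 0 := lt_of_le_of_ne hnn (hne x hx)
      exact hIVT 0 hzero x hx hpos this
  -- pick a point avoiding T
  obtain ⟨c₀, hc₀, hc₀T⟩ := (Set.Ioo_infinite (by norm_num : (-1:ℝ) < 1)).exists_notMem_finset T
  have heven : ∀ r : ℝ, Even (M.count r + if Odd (M.count r) then 1 else 0) := by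
    intro r
    rcases Nat.even_or_odd (M.count r) with he | ho
    · rw [if_neg (Nat.not_odd_iff_even.mpr he), add_zero]; exact he
    · rw [if_pos ho]; exact ho.add_one
  have hGpos : 0 < ∏ r ∈ T, (c₀ - r) ^ (M.count r + if Odd (M.count r) then 1 else 0) := by
    apply Finset.prod_pos
    intro r hr
    exact (heven r).pow_pos (sub_ne_zero.mpr (fun hc => hc₀T (hc ▸ hr)))
  -- F.card must be at least n
  have hcardge : n ≤ F.card := by
    by_contra hlt
    push_neg at hlt
    have horthq : (∫ x in (-1:ℝ)..1, p.eval x * q.eval x) = 0 :=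
      orth_poly horth (by rw [hqdeg]; exact hlt)
    rcases hsign with hs | hs
    · have : (0:ℝ) < ∫ x in (-1:ℝ)..1, p.eval x * q.eval x := by
        apply integral_pos_of_nonneg_of_pos (f := fun x => p.eval x * q.eval x) (p.continuous.mul q.continuous) ?_ hc₀
        · rw [heval c₀]
          exact mul_pos (hs c₀ hc₀) hGpos
        · intro x hx
          rw [heval x]
          exact mul_nonneg (le_of_lt (hs x hx)) (hGnonneg x)
      rw [horthq] at this
      exact lt_irrefl 0 this
    · have : (0:ℝ) < ∫ x in (-1:ℝ)..1, -(p.eval x * q.eval x) := by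
        apply integral_pos_of_nonneg_of_pos (f := fun x => -(p.eval x * q.eval x)) (p.continuous.mul q.continuous).neg ?_ hc₀
        · rw [heval c₀]
          have := mul_pos_of_neg_of_neg (hs c₀ hc₀) (neg_neg_iff_pos.mpr hGpos)
          simp only [neg_pos] at *
          nlinarith [hGpos, hs c₀ hc₀]
        · intro x hx
          rw [heval x]
          simp only [neg_nonneg]
          exact mul_nonpos_of_nonpos_of_nonneg (le_of_lt (hs x hx)) (hGnonneg x)
      rw [intervalIntegral.integral_neg, horthq, neg_zero] at this
      exact lt_irrefl 0 this
  have hFT : F ⊆ T := Finset.filter_subset _ _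
  have hchain : F.card ≤ n :=
    le_trans (Finset.card_le_card hFT) (le_trans (Multiset.toFinset_card_le M) hMcard)
  refine ⟨F, le_antisymm hchain hcardge, ?_⟩
  intro r hr
  have hrM : r ∈ M := Multiset.mem_toFinset.mp (hFT hr)
  refine ⟨hM r hrM, ?_⟩
  have : p.eval r = (M.map fun s => (r - s)).prod * h.eval r := by
    rw [heq, eval_mul, eval_multiset_prod, Multiset.map_map]
    congr 2
    apply Multiset.map_congr rfl
    intro s _
    simp
  rw [this, Multiset.prod_eq_zero, zero_mul]
  exact Multiset.mem_map.mpr ⟨r, hrM, by rw [sub_self]⟩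



lemma deriv_roots {p : ℝ[X]} {n : ℕ} (hn : 1 ≤ n) (hm : p.Monic) (hd : p.natDegree = n)
    (F : Finset ℝ) (hFc : F.card = n) (hFr : ∀ r ∈ F, r ∈ Set.Ioo (-1:ℝ) 1 ∧ p.eval r = 0) :
    ∃ M : Multiset ℝ, Multiset.card M = n - 1 ∧ (∀ s ∈ M, s ∈ Set.Ioo (-1:ℝ) 1) ∧
      derivative p = C (n:ℝ) * (M.map fun s => X - C s).prod := by
  classical
  set e := F.orderIsoOfFin hFc with he
  set r : ℕ → ℝ := fun i => if h : i < n then ((e ⟨i, h⟩ : F) : ℝ) else 0 with hr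
  have hrmono : ∀ i j : ℕ, i < j → j < n → r i < r j := by
    intro i j hij hj
    have hi : i < n := lt_trans hij hj
    rw [hr]
    simp only [dif_pos hi, dif_pos hj]
    have : (⟨i, hi⟩ : Fin n) < ⟨j, hj⟩ := by exact Fin.mk_lt_mk.mpr hij
    exact_mod_cast (e.lt_iff_lt.mpr this)
  have hrmem : ∀ i : ℕ, i < n → r i ∈ Set.Ioo (-1:ℝ) 1 ∧ p.eval (r i) = 0 := by
    intro i hi
    have : r i ∈ F := by
      rw [hr]; simp only [dif_pos hi]; exact (e ⟨i, hi⟩).2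
    exact hFr _ this
  -- Rolle between consecutive roots
  have key : ∀ i : ℕ, ∃ c : ℝ, i < n - 1 →
      c ∈ Set.Ioo (r i) (r (i+1)) ∧ (derivative p).eval c = 0 := by
    intro i
    by_cases hi : i < n - 1
    · have hi1 : i < n := by omega
      have hi2 : i + 1 < n := by omega
      have hab : r i < r (i+1) := hrmono i (i+1) (by omega) hi2
      have hfI : p.eval (r i) = p.eval (r (i+1)) := by
        rw [(hrmem i hi1).2, (hrmem (i+1) hi2).2]
      obtain ⟨c, hc, hc0⟩ := exists_deriv_eq_zero hab p.continuous.continuousOn hfI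
      refine ⟨c, fun _ => ⟨hc, ?_⟩⟩
      rw [← hc0]
      exact (Polynomial.deriv (p := p)).symm
    · exact ⟨0, fun h => absurd h hi⟩
  choose s hs using key
  have hsmem : ∀ i : ℕ, i < n - 1 → s i ∈ Set.Ioo (-1:ℝ) 1 := by
    intro i hi
    have h1 := (hs i hi).1
    have hi1 : i < n := by omega
    have hi2 : i + 1 < n := by omega
    exact ⟨lt_trans (hrmem i hi1).1.1 h1.1, lt_trans h1.2 (hrmem (i+1) hi2).1.2⟩
  have hsmono : ∀ i j : ℕ, i < j → j < n - 1 → s i < s j := by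
    intro i j hij hj
    have hi : i < n - 1 := by omega
    calc s i < r (i+1) := (hs i hi).1.2
      _ ≤ r j := by
        rcases Nat.eq_or_lt_of_le (Nat.succ_le_of_lt hij) with h | h
        · exact le_of_eq (congrArg r (by omega))
        · exact le_of_lt (hrmono (i+1) j h (by omega))
      _ < s j := (hs j hj).1.1
  -- the image finset
  set G : Finset ℝ := (Finset.range (n-1)).image s with hG
  have hGcard : G.card = n - 1 := by
    rw [hG, Finset.card_image_of_injOn, Finset.card_range]
    intro i hi j hj hij
    by_contra hne
    rcases lt_or_gt_of_ne hne with h | h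
    · exact absurd hij (ne_of_lt (hsmono i j h (Finset.mem_range.mp hj)))
    · exact absurd hij.symm (ne_of_lt (hsmono j i h (Finset.mem_range.mp hi)))
  -- derivative p facts
  set dp := derivative p with hdp
  have hdpcoeff : dp.coeff (n - 1) = n := by
    rw [hdp, coeff_derivative]
    have h1 : n - 1 + 1 = n := Nat.succ_pred_eq_of_pos hn
    rw [h1]
    have := hm.coeff_natDegree
    rw [hd] at this
    rw [this, one_mul, Nat.cast_sub hn]
    push_cast
    ring
  have hdpne : dp ≠ 0 := by
    intro h0
    rw [h0, coeff_zero] at hdpcoeff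
    have : (n:ℝ) ≠ 0 := Nat.cast_ne_zero.mpr (by omega)
    exact this hdpcoeff.symm
  have hdpdeg : dp.natDegree = n - 1 := by
    apply le_antisymm
    · rw [hdp]; exact le_trans (natDegree_derivative_le p) (by omega)
    · exact le_natDegree_of_ne_zero (by rw [hdpcoeff]; exact_mod_cast Nat.cast_ne_zero.mpr (by omega))
  have hlc : dp.leadingCoeff = n := by
    rw [leadingCoeff, hdpdeg, hdpcoeff]
  -- roots of dp
  have hGsub : G ⊆ dp.roots.toFinset := by
    intro x hx
    obtain ⟨i, hi, rfl⟩ := Finset.mem_image.mp hx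
    rw [Multiset.mem_toFinset, mem_roots hdpne]
    exact (hs i (Finset.mem_range.mp hi)).2
  have hrootscard : Multiset.card dp.roots = n - 1 := by
    apply le_antisymm
    · rw [← hdpdeg]; exact card_roots' dp
    · calc n - 1 = G.card := hGcard.symm
        _ ≤ dp.roots.toFinset.card := Finset.card_le_card hGsub
        _ ≤ Multiset.card dp.roots := Multiset.toFinset_card_le _
  have hsplits : Splits dp := splits_iff_card_roots.mpr (by rw [hrootscard, hdpdeg])
  have hfact : dp = C (n:ℝ) * (dp.roots.map fun a => X - C a).prod := by
    rw [← hlc]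
    exact hsplits.eq_prod_roots
  refine ⟨dp.roots, hrootscard, ?_, hfact⟩
  -- all roots in Ioo
  have hGeq : G = dp.roots.toFinset := by
    apply Finset.eq_of_subset_of_card_le hGsub
    rw [hGcard]
    exact le_trans (Multiset.toFinset_card_le _) (le_of_eq hrootscard)
  intro x hx
  have : x ∈ G := by rw [hGeq]; exact Multiset.mem_toFinset.mpr hx
  obtain ⟨i, hi, rfl⟩ := Finset.mem_image.mp this
  exact hsmem i (Finset.mem_range.mp hi)



lemma key_identity {Lp : ℝ[X]} {n : ℕ}
    (hode : derivative ((X ^ 2 - 1) * derivative Lp) = C ((n:ℝ) * ((n:ℝ)+1)) * Lp)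
    {Pn : ℂ[X]} (ζ : ℂ)
    (hPid : ∀ z : ℂ, ((n : ℂ) + 1) * ((Lp.map (algebraMap ℝ ℂ)).eval z) =
      Pn.eval z + (z - ζ) * (Pn.derivative.eval z)) :
    ∀ z : ℂ, (n:ℂ) * (z - ζ) * Pn.eval z
      = (z^2 - 1) * ((derivative (Lp.map (algebraMap ℝ ℂ))).eval z)
        - (ζ^2 - 1) * ((derivative (Lp.map (algebraMap ℝ ℂ))).eval ζ) := by
  set φ := algebraMap ℝ ℂ with hφ
  set pc : ℂ[X] := Lp.map φ with hpc
  have hodeC : derivative ((X ^ 2 - 1) * derivative pc) = C ((n:ℂ) * ((n:ℂ)+1)) * pc := by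
    have h1 := congrArg (Polynomial.map φ) hode
    rw [← derivative_map, Polynomial.map_mul, Polynomial.map_sub, Polynomial.map_pow,
      Polynomial.map_one, map_X, ← derivative_map, Polynomial.map_mul, map_C] at h1
    have h2 : φ ((n:ℝ) * ((n:ℝ)+1)) = (n:ℂ) * ((n:ℂ)+1) := by
      rw [map_mul, map_add, map_one, map_natCast]
    rw [h2] at h1
    exact h1
  have hPpoly : Pn + (X - C ζ) * derivative Pn = C ((n:ℂ)+1) * pc := by
    apply Polynomial.funext
    intro z
    rw [eval_add, eval_mul, eval_sub, eval_X, eval_C, eval_mul, eval_C]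
    rw [← hPid z]
  set W : ℂ[X] := C (n:ℂ) * ((X - C ζ) * Pn) - (X ^ 2 - 1) * derivative pc with hW
  have hdW : derivative W = 0 := by
    rw [hW, derivative_sub, derivative_C_mul, derivative_mul (f := X - C ζ),
      derivative_sub, derivative_X, derivative_C, sub_zero, one_mul, hodeC]
    rw [hPpoly, ← mul_assoc, ← C_mul, sub_self]
  have hWC : W = C (W.coeff 0) := eq_C_of_derivative_eq_zero hdW
  intro z
  have hz : W.eval z = W.eval ζ := by
    rw [hWC, eval_C, eval_C]
  rw [hW] at hz
  simp only [eval_sub, eval_mul, eval_C, eval_pow, eval_X, eval_one] at hz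
  rw [sub_self ζ] at hz
  ring_nf at hz ⊢
  linear_combination hz

lemma abs_eval {Lp : ℝ[X]} {n : ℕ} (M : Multiset ℝ)
    (hfact : derivative Lp = C (n:ℝ) * (M.map fun s => X - C s).prod) (z : ℂ) :
    ‖(derivative (Lp.map (algebraMap ℝ ℂ))).eval z‖
      = n * ((M.map fun s : ℝ => ‖z - (s:ℂ)‖).prod) := by
  have h1 : derivative (Lp.map (algebraMap ℝ ℂ))
      = C (algebraMap ℝ ℂ (n:ℝ)) * (M.map fun s : ℝ => X - C ((s:ℝ):ℂ)).prod := by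
    rw [derivative_map, hfact, Polynomial.map_mul, map_C, Polynomial.map_multiset_prod,
      Multiset.map_map]
    congr 2
    apply Multiset.map_congr rfl
    intro s _
    simp
  rw [h1, eval_mul, eval_C, norm_mul]
  congr 1
  · simp
  · have key : ∀ N : Multiset ℝ, ‖(N.map fun s : ℝ => z - (s:ℂ)).prod‖
        = (N.map fun s : ℝ => ‖z - (s:ℂ)‖).prod := by
      intro N
      induction N using Multiset.induction_on with
      | empty => simp
      | cons a t ih => simp only [Multiset.map_cons, Multiset.prod_cons, norm_mul, ih]
    rw [eval_multiset_prod, Multiset.map_map, ← key M]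
    congr 1
    apply congrArg
    apply Multiset.map_congr rfl
    intro s _
    simp



lemma multiset_prod_le (s : Multiset ℝ) (c : ℝ)
    (h : ∀ x ∈ s, 0 ≤ x ∧ x ≤ c) : s.prod ≤ c ^ Multiset.card s := by
  induction s using Multiset.induction_on with
  | empty => simp
  | cons a t ih =>
    rw [Multiset.prod_cons, Multiset.card_cons, pow_succ, mul_comm (c ^ Multiset.card t) c]
    have ha := h a (Multiset.mem_cons_self a t)
    have ht : ∀ x ∈ t, 0 ≤ x ∧ x ≤ c := fun x hx => h x (Multiset.mem_cons_of_mem hx)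
    have htn : 0 ≤ t.prod := Multiset.prod_nonneg (fun x hx => (ht x hx).1)
    exact mul_le_mul ha.2 (ih ht) htn (le_trans ha.1 ha.2)

lemma le_multiset_prod (s : Multiset ℝ) (c : ℝ) (hc : 0 ≤ c)
    (h : ∀ x ∈ s, c ≤ x) : c ^ Multiset.card s ≤ s.prod := by
  induction s using Multiset.induction_on with
  | empty => simp
  | cons a t ih =>
    rw [Multiset.prod_cons, Multiset.card_cons, pow_succ, mul_comm (c ^ Multiset.card t) c]
    have ha := h a (Multiset.mem_cons_self a t)
    have ht : ∀ x ∈ t, c ≤ x := fun x hx => h x (Multiset.mem_cons_of_mem hx)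
    exact mul_le_mul ha (ih ht) (pow_nonneg hc _) (le_trans hc ha)

theorem main
    (L : ℕ → Polynomial ℝ) (ζ : ℂ) (P : ℕ → Polynomial ℂ)
    (hL : ∀ n : ℕ, (L n).Monic ∧ (L n).natDegree = n ∧
      ∀ k : ℕ, k < n → (∫ x in (-1:ℝ)..1, (L n).eval x * x ^ k) = 0)
    (hP : ∀ n : ℕ, (P n).Monic ∧ (P n).natDegree = n ∧
      ∀ z : ℂ, ((n : ℂ) + 1) * ((L n).map (algebraMap ℝ ℂ)).eval z =
        (P n).eval z + (z - ζ) * ((P n).derivative.eval z))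
    (K : Set ℂ) (hK : IsCompact K)
    (hKsub : K ⊆ {z : ℂ | (⨆ x : Set.Icc (-1:ℝ) 1, ‖ζ - (x : ℝ)‖) + 1 <
        ‖z‖}) :
    TendstoUniformlyOn
      (fun (n : ℕ) (z : ℂ) =>
        (n : ℂ) * (P n).eval z /
          (Polynomial.derivative ((L n).map (algebraMap ℝ ℂ))).eval z)
      (fun z => (z ^ 2 - 1) / (z - ζ)) Filter.atTop K := by
  classical
  rcases Set.eq_empty_or_nonempty K with rfl | hne
  · exact tendstoUniformlyOn_empty
  set Δ : ℝ := ⨆ x : Set.Icc (-1:ℝ) 1, ‖ζ - (x : ℝ)‖ with hΔdef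
  have hbdd : BddAbove (Set.range fun x : Set.Icc (-1:ℝ) 1 => ‖ζ - (x : ℝ)‖) := by
    refine ⟨‖ζ‖ + 1, ?_⟩
    rintro y ⟨x, rfl⟩
    calc ‖ζ - (x:ℝ)‖ ≤ ‖ζ‖ + ‖((x:ℝ):ℂ)‖ := by
          simpa [sub_eq_add_neg] using norm_add_le ζ (-((x:ℝ):ℂ))
      _ ≤ ‖ζ‖ + 1 := by
          rw [Complex.norm_real, Real.norm_eq_abs]
          have := x.2
          have h1 : |(x:ℝ)| ≤ 1 := abs_le.mpr ⟨this.1, this.2⟩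
          linarith
  have hΔle : ∀ x : ℝ, x ∈ Set.Icc (-1:ℝ) 1 → ‖ζ - x‖ ≤ Δ := by
    intro x hx
    exact le_ciSup hbdd (⟨x, hx⟩ : Set.Icc (-1:ℝ) 1)
  have hζΔ : ‖ζ‖ ≤ Δ := by
    have := hΔle 0 (by norm_num)
    simpa using this
  have hΔ0 : 0 ≤ Δ := le_trans (norm_nonneg ζ) hζΔ
  -- minimum modulus on K
  obtain ⟨z₀, hz₀K, hz₀min⟩ := hK.exists_isMinOn hne continuous_norm.continuousOn
  set m : ℝ := ‖z₀‖ with hmdef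
  have hm : Δ + 1 < m := hKsub hz₀K
  have hmz : ∀ z ∈ K, m ≤ ‖z‖ := fun z hz => hz₀min hz
  -- the bound sequence
  set Cst : ℝ := ‖ζ^2 - 1‖ / (m - Δ) with hCst
  set ρ : ℝ := Δ / (m - 1) with hρdef
  have hm1 : Δ < m - 1 := by linarith
  have hρ0 : 0 ≤ ρ := div_nonneg hΔ0 (by linarith)
  have hρ1 : ρ < 1 := (div_lt_one (by linarith)).mpr hm1
  have hb : Tendsto (fun n : ℕ => Cst * ρ^(n-1)) atTop (nhds 0) := by
    have h1 : Tendsto (fun k : ℕ => ρ^k) atTop (nhds 0) :=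
      tendsto_pow_atTop_nhds_zero_of_lt_one hρ0 hρ1
    have h2 := (h1.comp (tendsto_sub_atTop_nat 1)).const_mul Cst
    simpa using h2
  rw [Metric.tendstoUniformlyOn_iff]
  intro ε hε
  have hev : ∀ᶠ n : ℕ in atTop, Cst * ρ^(n-1) < ε := hb.eventually (gt_mem_nhds hε)
  filter_upwards [hev, eventually_ge_atTop 1] with n hnb hn1
  intro z hzK
  -- data for this n
  obtain ⟨hmon, hdeg, horth⟩ := hL n
  have hode := legendre_ODE hn1 hmon hdeg horth
  obtain ⟨F, hFc, hFr⟩ := roots_in_Ioo hmon hdeg horth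
  obtain ⟨M, hMc, hMm, hfact⟩ := deriv_roots hn1 hmon hdeg F hFc hFr
  have hid := key_identity hode ζ (hP n).2.2 z
  set q : ℂ[X] := derivative ((L n).map (algebraMap ℝ ℂ)) with hq
  have habs_z := abs_eval M hfact z
  have habs_ζ := abs_eval M hfact ζ
  have hzabs : Δ + 1 < ‖z‖ := hKsub hzK
  have hmlez : m ≤ ‖z‖ := hmz z hzK
  -- lower bound for |q z|
  have hlowprod : (m - 1) ^ (n-1) ≤ (M.map fun s : ℝ => ‖z - (s:ℂ)‖).prod := by
    have := le_multiset_prod (M.map fun s : ℝ => ‖z - (s:ℂ)‖) (m - 1)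
      (by linarith) ?_
    · rwa [Multiset.card_map, hMc] at this
    · intro x hx
      obtain ⟨s, hsM, rfl⟩ := Multiset.mem_map.mp hx
      have hs1 : |s| ≤ 1 := by
        have := hMm s hsM
        exact abs_le.mpr ⟨le_of_lt this.1, le_of_lt this.2⟩
      have htri : ‖z‖ ≤ ‖z - (s:ℂ)‖ + ‖((s:ℝ):ℂ)‖ := by
        simpa using norm_add_le (z - (s:ℂ)) ((s:ℝ):ℂ)
      rw [Complex.norm_real, Real.norm_eq_abs] at htri
      linarith
  have hlow : (n:ℝ) * (m - 1) ^ (n-1) ≤ ‖q.eval z‖ := by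
    rw [hq, habs_z]
    apply mul_le_mul_of_nonneg_left hlowprod (Nat.cast_nonneg n)
  -- upper bound for |q ζ|
  have hup : ‖q.eval ζ‖ ≤ (n:ℝ) * Δ ^ (n-1) := by
    rw [hq, habs_ζ]
    apply mul_le_mul_of_nonneg_left ?_ (Nat.cast_nonneg n)
    have := multiset_prod_le (M.map fun s : ℝ => ‖ζ - (s:ℂ)‖) Δ ?_
    · rwa [Multiset.card_map, hMc] at this
    · intro x hx
      obtain ⟨s, hsM, rfl⟩ := Multiset.mem_map.mp hx
      refine ⟨norm_nonneg _, ?_⟩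
      apply hΔle
      have := hMm s hsM
      exact ⟨le_of_lt this.1, le_of_lt this.2⟩
  -- positivity
  have hnpos : (0:ℝ) < n := by exact_mod_cast Nat.pos_of_ne_zero (by omega)
  have hqzpos : (0:ℝ) < ‖q.eval z‖ := by
    apply lt_of_lt_of_le _ hlow
    apply mul_pos hnpos
    apply pow_pos
    linarith
  have hqzne : q.eval z ≠ 0 := by
    intro h0
    rw [h0] at hqzpos
    simp at hqzpos
  have hzζabs : m - Δ ≤ ‖z - ζ‖ := by
    have htri : ‖z‖ ≤ ‖z - ζ‖ + ‖ζ‖ := by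
      simpa using norm_add_le (z - ζ) ζ
    linarith
  have hzζpos : (0:ℝ) < ‖z - ζ‖ := by linarith
  have hzζne : z - ζ ≠ 0 := by
    intro h0
    rw [h0] at hzζpos
    simp at hzζpos
  -- the difference formula
  have hnum : (n:ℂ) * (P n).eval z * (z - ζ) - q.eval z * (z^2 - 1)
      = -((ζ^2 - 1) * q.eval ζ) := by
    rw [hq]
    linear_combination hid
  have hdiff : (n:ℂ) * (P n).eval z / q.eval z - (z^2-1)/(z-ζ)
      = (-((ζ^2 - 1) * q.eval ζ)) / (q.eval z * (z - ζ)) := by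
    rw [div_sub_div _ _ hqzne hzζne, hnum]
  -- final bound
  rw [dist_comm, Complex.dist_eq]
  have hgoal1 : (n:ℂ) * (P n).eval z / q.eval z - (z^2-1)/(z-ζ)
      = (n:ℂ) * (P n).eval z / q.eval z - (z^2-1)/(z-ζ) := rfl
  calc ‖(n:ℂ) * (P n).eval z / q.eval z - (z^2-1)/(z-ζ)‖
      = ‖ζ^2 - 1‖ * ‖q.eval ζ‖
        / (‖q.eval z‖ * ‖z - ζ‖) := by
        rw [hdiff, norm_div, norm_neg, norm_mul, norm_mul]
    _ ≤ ‖ζ^2 - 1‖ * ((n:ℝ) * Δ ^ (n-1))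
        / ((n:ℝ) * (m - 1) ^ (n-1) * (m - Δ)) := by
        apply div_le_div₀ (by positivity) ?_ ?_ ?_
        · exact mul_le_mul_of_nonneg_left hup (norm_nonneg _)
        · apply mul_pos (mul_pos hnpos (pow_pos (by linarith) _)) (by linarith)
        · exact mul_le_mul hlow hzζabs (by linarith) (le_of_lt hqzpos)
    _ = Cst * ρ^(n-1) := by
        rw [hCst, hρdef, div_pow]
        have hne1 : ((m:ℝ) - 1) ^ (n-1) ≠ 0 :=
          pow_ne_zero _ (ne_of_gt (by linarith : (0:ℝ) < m - 1))
        have hne2 : (m:ℝ) - Δ ≠ 0 := by intro h; linarith [hm]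
        field_simp
    _ < ε := hnb


end PolarLegAux

end PolarLegAux

/-- `n·P_n(z)/L_n′(z) → (z²-1)/(z-ζ)` uniformly on every compact subset of
`{z : |z| > Δ_ζ + 1}`. -/
theorem polar_legendre_relative_asymptotics_derivative
    (L : ℕ → Polynomial ℝ) (ζ : ℂ) (P : ℕ → Polynomial ℂ)
    (hL : IsMonicLegendre L) (hP : IsPolarLegendre L ζ P)
    (K : Set ℂ) (hK : IsCompact K)
    (hKsub : K ⊆ {z : ℂ | (⨆ x : Set.Icc (-1:ℝ) 1, ‖ζ - (x : ℝ)‖) + 1 <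
        ‖z‖}) :
    TendstoUniformlyOn
      (fun (n : ℕ) (z : ℂ) =>
        (n : ℂ) * (P n).eval z /
          (Polynomial.derivative ((L n).map (algebraMap ℝ ℂ))).eval z)
      (fun z => (z ^ 2 - 1) / (z - ζ)) Filter.atTop K := by
  exact PolarLegAux.main L ζ P (fun n => hL n) (fun n => hP n) K hK hKsub
end
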